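/- arXiv:2402.05638 — 2 statements merged into one kernel-verified Lean document; each statement's English description precedes it below -/
import Mathlib

section
/- A map f ∈ C(I) is chain-recurrent (every point of I is chain-recurrent for f) if and only if f belongs to the closure of CP in (C(I), ρ). -/
open Set Function Metric

/-- The unit interval `[0,1]` with the Euclidean metric. -/
abbrev unitI : Type := Set.Icc (0:ℝ) 1

/-- `CP`: continuous surjective self-maps of `I` with a dense set of periodic points.
The ambient space `C(I,I)` carries the uniform (sup) metric. -/
def CP : Set C(unitI, unitI) :=
  {f | Function.Surjective ⇑f ∧ Dense (Function.periodicPts ⇑f)}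

/-- `x` is chain-recurrent for `f`: for every `ε > 0` there is an `ε`-chain from `x`
to itself, i.e. a finite sequence `x = c 0, c 1, …, c n = x` with `n > 0` and
`|f (c i) − c (i+1)| < ε` for all `0 ≤ i ≤ n − 1`. -/
def ChainRecurrentPt (f : unitI → unitI) (x : unitI) : Prop :=
  ∀ ε : ℝ, 0 < ε → ∃ (n : ℕ) (c : ℕ → unitI), 0 < n ∧ c 0 = x ∧ c n = x ∧
    ∀ i < n, dist (f (c i)) (c (i + 1)) < ε

namespace ChainProofAux

/-- `y` is reachable from `x` by an `s`-chain (with at least one step). -/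
def Reach (f : unitI → unitI) (s : ℝ) (x y : unitI) : Prop :=
  ∃ m : ℕ, 0 < m ∧ ∃ c : ℕ → unitI, c 0 = x ∧ c m = y ∧ ∀ i < m, dist (f (c i)) (c (i+1)) < s

theorem Reach.extend {f : unitI → unitI} {s : ℝ} {x y z : unitI}
    (h : Reach f s x y) (hz : dist (f y) z < s) : Reach f s x z := by
  obtain ⟨m, hm, c, h0, hmy, hc⟩ := h
  refine ⟨m+1, Nat.succ_pos _, fun i => if i = m+1 then z else c i, ?_, ?_, ?_⟩
  · simp only [Nat.succ_ne_zero, Ne.symm (Nat.succ_ne_zero m)]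
    simp [h0]
  · simp
  · intro i hi
    have hi' : i ≠ m + 1 := Nat.ne_of_lt hi
    by_cases hie : i = m
    · subst hie
      have e2 : (if i + 1 = i + 1 then z else c (i + 1)) = z := if_pos rfl
      simp only [if_neg hi', e2, hmy]
      exact hz
    · have h1 : i + 1 ≠ m + 1 := fun h => hie (Nat.succ_injective h)
      simp only [if_neg hi', if_neg h1]
      exact hc i (by omega)

theorem Reach.nudge {f : unitI → unitI} {s : ℝ} {x y : unitI}
    (h : Reach f s x y) : ∃ ρ > 0, ∀ z : unitI, dist z y < ρ → Reach f s x z := by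
  obtain ⟨m, hm, c, h0, hmy, hc⟩ := h
  obtain ⟨k, rfl⟩ := Nat.exists_eq_succ_of_ne_zero (Nat.pos_iff_ne_zero.mp hm)
  have hlast : dist (f (c k)) y < s := by
    have := hc k (Nat.lt_succ_self k); rwa [hmy] at this
  refine ⟨s - dist (f (c k)) y, by linarith, fun z hz => ?_⟩
  refine ⟨k+1, Nat.succ_pos _, fun i => if i = k+1 then z else c i, ?_, by simp, ?_⟩
  · simp only [Nat.succ_ne_zero, Ne.symm (Nat.succ_ne_zero k)]
    simp [h0]
  · intro i hi
    have hi' : i ≠ k + 1 := Nat.ne_of_lt hi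
    by_cases hie : i = k
    · subst hie
      have e2 : (if i + 1 = i + 1 then z else c (i + 1)) = z := if_pos rfl
      simp only [if_neg hi', e2]
      calc dist (f (c i)) z ≤ dist (f (c i)) y + dist z y := dist_triangle_right _ _ _
        _ < s := by linarith
    · have h1 : i + 1 ≠ k + 1 := fun h => hie (Nat.succ_injective h)
      simp only [if_neg hi', if_neg h1]
      exact hc i (by omega)

theorem reach_self {f : unitI → unitI} {x : unitI} (hcr : ChainRecurrentPt f x)
    {s : ℝ} (hs : 0 < s) : Reach f s x x := by
  obtain ⟨m, c, hm, h0, hmx, hc⟩ := hcr s hs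
  exact ⟨m, hm, c, h0, hmx, hc⟩

theorem reach_approach (f : C(unitI, unitI)) (hcr : ∀ x, ChainRecurrentPt ⇑f x)
    {s : ℝ} {x q : unitI} (hs : 0 < s)
    (h : ∀ ρ > 0, ∃ z : unitI, dist z q < ρ ∧ Reach ⇑f s x z) : Reach ⇑f s x q := by
  have hcont : ContinuousAt ⇑f q := f.continuous.continuousAt
  obtain ⟨ρ₀, hρ₀, hf⟩ := Metric.continuousAt_iff.mp hcont (s/2) (by linarith)
  obtain ⟨z, hzq, hz⟩ := h ρ₀ hρ₀
  have hball : ∀ w : unitI, dist (f q) w < s/2 → Reach ⇑f s x w := by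
    intro w hw
    refine hz.extend ?_
    calc dist (f z) w ≤ dist (f z) (f q) + dist (f q) w := dist_triangle _ _ _
      _ < s/2 + s/2 := add_lt_add (hf hzq) hw
      _ = s := by ring
  obtain ⟨m, c, hm, h0, hmq, hc⟩ := hcr q (s/2) (by linarith)
  have key : ∀ i, i ≤ m → 1 ≤ i → Reach ⇑f s x (c i) := by
    intro i
    induction i with
    | zero => intro _ h1; exact absurd h1 (by norm_num)
    | succ j ih =>
      intro hjm _
      by_cases hj : j = 0
      · subst hj
        refine hball (c 1) ?_
        have := hc 0 (by omega)
        rwa [h0] at this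
      · have hrj : Reach ⇑f s x (c j) := ih (by omega) (by omega)
        exact hrj.extend (lt_trans (hc j (by omega)) (by linarith))
  have := key m (le_refl m) hm
  rwa [hmq] at this

theorem reach_all (f : C(unitI, unitI)) (hcr : ∀ x, ChainRecurrentPt ⇑f x)
    {s : ℝ} (hs : 0 < s) (x y : unitI) : Reach ⇑f s x y := by
  have hright : ∀ (t : ℝ) (ht : t ∈ Set.Icc (0:ℝ) 1), x.val ≤ t → Reach ⇑f s x ⟨t, ht⟩ := by
    set S : Set ℝ := {t | ∃ h1 : t ∈ Set.Icc (0:ℝ) 1, x.val ≤ t ∧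
      ∀ u (hu : u ∈ Set.Icc (0:ℝ) 1), x.val ≤ u → u ≤ t → Reach ⇑f s x ⟨u, hu⟩} with hS
    have hxS : x.val ∈ S := by
      refine ⟨x.2, le_refl _, fun u hu h1 h2 => ?_⟩
      have hux : (⟨u, hu⟩ : unitI) = x := Subtype.ext (le_antisymm h2 h1)
      rw [hux]
      exact reach_self (hcr x) hs
    have hbdd : BddAbove S := ⟨1, fun t ht => ht.1.2⟩
    have hne : S.Nonempty := ⟨x.val, hxS⟩
    set q := sSup S with hq
    have hq1 : q ≤ 1 := csSup_le hne (fun t ht => ht.1.2)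
    have hqx : x.val ≤ q := le_csSup hbdd hxS
    have hq0 : (0:ℝ) ≤ q := le_trans x.2.1 hqx
    have hqI : q ∈ Set.Icc (0:ℝ) 1 := ⟨hq0, hq1⟩
    have hqR : Reach ⇑f s x ⟨q, hqI⟩ := by
      refine reach_approach f hcr hs (fun ρ hρ => ?_)
      obtain ⟨t, htS, htq⟩ := exists_lt_of_lt_csSup hne (show q - ρ/2 < q by linarith)
      have htle : t ≤ q := le_csSup hbdd htS
      refine ⟨⟨t, htS.1⟩, ?_, htS.2.2 t htS.1 htS.2.1 (le_refl t)⟩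
      rw [Subtype.dist_eq, Real.dist_eq]
      rw [abs_of_nonpos (by linarith)]
      linarith
    have hqS : q ∈ S := by
      refine ⟨hqI, hqx, fun u hu h1 h2 => ?_⟩
      rcases eq_or_lt_of_le h2 with he | hlt
      · have : (⟨u, hu⟩ : unitI) = ⟨q, hqI⟩ := Subtype.ext he
        rw [this]; exact hqR
      · obtain ⟨t, htS, hut⟩ := exists_lt_of_lt_csSup hne hlt
        exact htS.2.2 u hu h1 (le_of_lt hut)
    have hqtop : q = 1 := by
      by_contra hne1
      have hqlt : q < 1 := lt_of_le_of_ne hq1 hne1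
      obtain ⟨ρ, hρ, hnud⟩ := hqR.nudge
      set t' := min 1 (q + ρ/2) with ht'
      have htq' : q < t' := lt_min hqlt (by linarith)
      have ht'I : t' ∈ Set.Icc (0:ℝ) 1 := ⟨le_trans hq0 (le_of_lt htq'), min_le_left _ _⟩
      have ht'S : t' ∈ S := by
        refine ⟨ht'I, le_trans hqx (le_of_lt htq'), fun u hu h1 h2 => ?_⟩
        rcases le_or_gt u q with hle | hgt
        · exact hqS.2.2 u hu h1 hle
        · refine hnud ⟨u, hu⟩ ?_
          rw [Subtype.dist_eq, Real.dist_eq, abs_of_nonneg (by linarith)]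
          have : t' ≤ q + ρ/2 := min_le_right _ _
          linarith
      have := le_csSup hbdd ht'S
      linarith
    intro t ht hxt
    exact hqS.2.2 t ht hxt (le_trans ht.2 (le_of_eq hqtop.symm))
  have hleft : ∀ (t : ℝ) (ht : t ∈ Set.Icc (0:ℝ) 1), t ≤ x.val → Reach ⇑f s x ⟨t, ht⟩ := by
    set S : Set ℝ := {t | ∃ h1 : t ∈ Set.Icc (0:ℝ) 1, t ≤ x.val ∧
      ∀ u (hu : u ∈ Set.Icc (0:ℝ) 1), t ≤ u → u ≤ x.val → Reach ⇑f s x ⟨u, hu⟩} with hS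
    have hxS : x.val ∈ S := by
      refine ⟨x.2, le_refl _, fun u hu h1 h2 => ?_⟩
      have hux : (⟨u, hu⟩ : unitI) = x := Subtype.ext (le_antisymm h2 h1)
      rw [hux]
      exact reach_self (hcr x) hs
    have hbdd : BddBelow S := ⟨0, fun t ht => ht.1.1⟩
    have hne : S.Nonempty := ⟨x.val, hxS⟩
    set q := sInf S with hq
    have hq0 : 0 ≤ q := le_csInf hne (fun t ht => ht.1.1)
    have hqx : q ≤ x.val := csInf_le hbdd hxS
    have hq1 : q ≤ 1 := le_trans hqx x.2.2
    have hqI : q ∈ Set.Icc (0:ℝ) 1 := ⟨hq0, hq1⟩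
    have hqR : Reach ⇑f s x ⟨q, hqI⟩ := by
      refine reach_approach f hcr hs (fun ρ hρ => ?_)
      obtain ⟨t, htS, htq⟩ := exists_lt_of_csInf_lt hne (show q < q + ρ/2 by linarith)
      have htle : q ≤ t := csInf_le hbdd htS
      refine ⟨⟨t, htS.1⟩, ?_, htS.2.2 t htS.1 (le_refl t) htS.2.1⟩
      rw [Subtype.dist_eq, Real.dist_eq]
      rw [abs_of_nonneg (by linarith)]
      linarith
    have hqS : q ∈ S := by
      refine ⟨hqI, hqx, fun u hu h1 h2 => ?_⟩
      rcases eq_or_lt_of_le h1 with he | hlt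
      · have : (⟨u, hu⟩ : unitI) = ⟨q, hqI⟩ := Subtype.ext he.symm
        rw [this]; exact hqR
      · obtain ⟨t, htS, hut⟩ := exists_lt_of_csInf_lt hne hlt
        exact htS.2.2 u hu (le_of_lt hut) h2
    have hqbot : q = 0 := by
      by_contra hne0
      have hqgt : 0 < q := lt_of_le_of_ne hq0 (Ne.symm hne0)
      obtain ⟨ρ, hρ, hnud⟩ := hqR.nudge
      set t' := max 0 (q - ρ/2) with ht'
      have htq' : t' < q := max_lt hqgt (by linarith)
      have ht'I : t' ∈ Set.Icc (0:ℝ) 1 := ⟨le_max_left _ _, le_trans (le_of_lt htq') hq1⟩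
      have ht'S : t' ∈ S := by
        refine ⟨ht'I, le_trans (le_of_lt htq') hqx, fun u hu h1 h2 => ?_⟩
        rcases le_or_gt q u with hle | hgt
        · exact hqS.2.2 u hu hle h2
        · refine hnud ⟨u, hu⟩ ?_
          rw [Subtype.dist_eq, Real.dist_eq, abs_of_nonpos (by linarith)]
          have : q - ρ/2 ≤ t' := le_max_right _ _
          linarith
      have := csInf_le hbdd ht'S
      linarith
    intro t ht hxt
    exact hqS.2.2 t ht (le_trans (le_of_eq hqbot) ht.1) hxt
  rcases le_total x.val y.val with h | h
  · have := hright y.val y.2 h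
    rwa [Subtype.coe_eta] at this
  · have := hleft y.val y.2 h
    rwa [Subtype.coe_eta] at this

theorem closure_to_cr (f : C(unitI, unitI)) (hcl : f ∈ closure CP) :
    ∀ x : unitI, ChainRecurrentPt ⇑f x := by
  intro x ε hε
  obtain ⟨g, hgCP, hfg⟩ := Metric.mem_closure_iff.mp hcl (ε/4) (by linarith)
  obtain ⟨hgs, hgd⟩ := hgCP
  have hdle : ∀ z : unitI, dist (f z) (g z) < ε/4 :=
    fun z => lt_of_le_of_lt (ContinuousMap.dist_apply_le_dist z) hfg
  obtain ⟨ρ, hρ, hgcont⟩ := Metric.continuousAt_iff.mp (g.continuous.continuousAt (x := x))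
    (ε/4) (by linarith)
  obtain ⟨p, hpmem⟩ := Metric.dense_iff.mp hgd x (min ρ (ε/4)) (by positivity)
  obtain ⟨hpball, hp⟩ := hpmem
  obtain ⟨k, hk, hpk⟩ := Function.mem_periodicPts.mp hp
  have hpx : dist p x < min ρ (ε/4) := Metric.mem_ball.mp hpball
  have hpx4 : dist p x < ε/4 := lt_of_lt_of_le hpx (min_le_right _ _)
  have hgpgx : dist (g p) (g x) < ε/4 := hgcont (lt_of_lt_of_le hpx (min_le_left _ _))
  refine ⟨k, fun i => if i = 0 ∨ k ≤ i then x else g^[i] p, hk, by simp, by simp, ?_⟩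
  intro i hi
  by_cases hi0 : i = 0
  · subst hi0
    simp only [if_pos (Or.inl rfl)]
    by_cases hk1 : k = 1
    · have h1 : (1 = 0 ∨ k ≤ 1) := Or.inr (by omega)
      simp only [if_pos h1]
      have hgp : g p = p := by
        have := hpk; rw [hk1] at this
        simpa using this.eq
      calc dist (f x) x ≤ dist (f x) (g x) + dist (g x) x := dist_triangle _ _ _
        _ ≤ dist (f x) (g x) + (dist (g x) (g p) + dist (g p) x) :=
            add_le_add le_rfl (dist_triangle _ _ _)
        _ = dist (f x) (g x) + (dist (g x) (g p) + dist p x) := by rw [hgp]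
        _ < ε/4 + (ε/4 + ε/4) := by
            refine add_lt_add (hdle x) (add_lt_add ?_ hpx4)
            rw [dist_comm]; exact hgpgx
        _ < ε := by linarith
    · have h1 : ¬(1 = 0 ∨ k ≤ 1) := by omega
      simp only [if_neg h1, Function.iterate_one]
      calc dist (f x) (g p) ≤ dist (f x) (g x) + dist (g x) (g p) := dist_triangle _ _ _
        _ < ε/4 + ε/4 := add_lt_add (hdle x) (by rw [dist_comm]; exact hgpgx)
        _ < ε := by linarith
  · have hii : ¬(i = 0 ∨ k ≤ i) := by omega
    simp only [if_neg hii]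
    by_cases hik : i + 1 = k
    · have h1 : (i + 1 = 0 ∨ k ≤ i + 1) := Or.inr (by omega)
      simp only [if_pos h1]
      have hgit : g (g^[i] p) = p := by
        have h := hpk.eq
        rw [← hik] at h
        rw [← Function.iterate_succ_apply' g i p]
        exact h
      calc dist (f (g^[i] p)) x ≤ dist (f (g^[i] p)) (g (g^[i] p)) + dist (g (g^[i] p)) x :=
            dist_triangle _ _ _
        _ = dist (f (g^[i] p)) (g (g^[i] p)) + dist p x := by rw [hgit]
        _ < ε/4 + ε/4 := add_lt_add (hdle _) hpx4
        _ < ε := by linarith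
    · have h1 : ¬(i + 1 = 0 ∨ k ≤ i + 1) := by omega
      simp only [if_neg h1]
      rw [Function.iterate_succ_apply' g i p]
      exact lt_trans (hdle (g^[i] p)) (by linarith)

/-! ### The piecewise linear Markov approximation -/

/-- Extension of `f` to `ℝ`. -/
noncomputable def Fr (f : C(unitI, unitI)) : ℝ → ℝ := fun t => (f (Set.projIcc 0 1 zero_le_one t)).val

theorem Fr_mem (f : C(unitI, unitI)) (t : ℝ) : Fr f t ∈ Set.Icc (0:ℝ) 1 := (f _).2

theorem Fr_val (f : C(unitI, unitI)) (x : unitI) : Fr f x.val = (f x).val := by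
  unfold Fr
  rw [Set.projIcc_val]

/-- clamp to `[0,1]`. -/
noncomputable def cl (t : ℝ) : ℝ := max 0 (min 1 t)

theorem cl_mem (t : ℝ) : cl t ∈ Set.Icc (0:ℝ) 1 := by
  constructor
  · exact le_max_left _ _
  · unfold cl
    rcases le_total (0:ℝ) (min 1 t) with h | h
    · rw [max_eq_right h]; exact min_le_left _ _
    · rw [max_eq_left h]; norm_num

theorem cl_eq_one {t : ℝ} (h : 1 ≤ t) : cl t = 1 := by
  unfold cl
  rw [min_eq_left h, max_eq_right (by norm_num : (0:ℝ) ≤ 1)]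

theorem cl_eq_zero {t : ℝ} (h : t ≤ 0) : cl t = 0 := by
  unfold cl
  rw [min_eq_right (by linarith), max_eq_left h]

theorem cl_of_mem {t : ℝ} (h : t ∈ Set.Icc (0:ℝ) 1) : cl t = t := by
  unfold cl
  rw [min_eq_right h.2, max_eq_right h.1]

theorem cl_dist {a b : ℝ} (hb : b ∈ Set.Icc (0:ℝ) 1) : |cl a - b| ≤ |a - b| := by
  unfold cl
  rcases le_total 1 a with h | h
  · rw [min_eq_left h, max_eq_right (by norm_num : (0:ℝ) ≤ 1)]
    rw [abs_of_nonneg (by linarith [hb.2]), abs_of_nonneg (by linarith [hb.2])]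
    linarith [hb.2]
  · rw [min_eq_right h]
    rcases le_total a 0 with h0 | h0
    · rw [max_eq_left h0, abs_of_nonpos (by linarith [hb.1]), abs_of_nonpos (by linarith [hb.1])]
      linarith [hb.1]
    · rw [max_eq_right h0]

/-- alternating sign displacement -/
noncomputable def sg (ε : ℝ) (i : ℕ) : ℝ := if Even i then -(ε/2) else ε/2

/-- the grid values of the approximation -/
noncomputable def bb (f : C(unitI, unitI)) (ε : ℝ) (n : ℕ) (i : ℕ) : ℝ :=
  ((round ((n:ℝ) * cl (Fr f (i/n) + sg ε i)) : ℤ) : ℝ) / n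

/-- the piecewise linear map, as a map `ℝ → ℝ`. -/
noncomputable def GG (f : C(unitI, unitI)) (ε : ℝ) (n : ℕ) : ℝ → ℝ := fun t =>
  bb f ε n 0 + ∑ k ∈ Finset.range n,
    (bb f ε n (k+1) - bb f ε n k) * ((n:ℝ) * min (max (t - k/n) 0) (1/n))

theorem GG_cont (f : C(unitI, unitI)) (ε : ℝ) (n : ℕ) : Continuous (GG f ε n) := by
  unfold GG
  refine continuous_const.add (continuous_finset_sum _ (fun k _ => continuous_const.mul
    (continuous_const.mul (Continuous.min (Continuous.max ?_ continuous_const)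
      continuous_const))))
  exact continuous_id.sub continuous_const

theorem bb_grid (f : C(unitI, unitI)) (ε : ℝ) {n : ℕ} (hn : 0 < n) (i : ℕ) :
    ∃ m : ℕ, m ≤ n ∧ bb f ε n i = m/n := by
  have hnR : (0:ℝ) < n := Nat.cast_pos.mpr hn
  set c := cl (Fr f (i/n) + sg ε i) with hc
  have hc01 : c ∈ Set.Icc (0:ℝ) 1 := cl_mem _
  set z := (n:ℝ) * c with hz
  have hz0 : 0 ≤ z := mul_nonneg (le_of_lt hnR) hc01.1
  have hz1 : z ≤ n := by
    calc z ≤ (n:ℝ) * 1 := by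
          exact mul_le_mul_of_nonneg_left hc01.2 (le_of_lt hnR)
      _ = n := mul_one _
  have habs : |z - (round z : ℤ)| ≤ 1/2 := abs_sub_round z
  have hr0 : (0:ℤ) ≤ round z := by
    by_contra h
    push_neg at h
    have : (round z : ℝ) ≤ -1 := by exact_mod_cast Int.le_of_lt_add_one (by simpa using h)
    have := abs_le.mp habs
    linarith [this.2]
  have hrn : round z ≤ (n:ℤ) := by
    by_contra h
    push_neg at h
    have h2 : ((n:ℝ)) + 1 ≤ (round z : ℝ) := by exact_mod_cast Int.add_one_le_of_lt h
    have h3 := abs_le.mp habs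
    linarith [h3.1]
  refine ⟨(round z).toNat, ?_, ?_⟩
  · omega
  · unfold bb
    rw [← hc, ← hz]
    congr 1
    exact_mod_cast (Int.toNat_of_nonneg hr0).symm

theorem bb_mem (f : C(unitI, unitI)) (ε : ℝ) {n : ℕ} (hn : 0 < n) (i : ℕ) :
    bb f ε n i ∈ Set.Icc (0:ℝ) 1 := by
  obtain ⟨m, hm, he⟩ := bb_grid f ε hn i
  have hnR : (0:ℝ) < n := Nat.cast_pos.mpr hn
  rw [he]
  constructor
  · positivity
  · rw [div_le_one hnR]
    exact_mod_cast hm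

theorem bb_approx (f : C(unitI, unitI)) (ε : ℝ) {n : ℕ} (hn : 0 < n) (i : ℕ) :
    |bb f ε n i - cl (Fr f (i/n) + sg ε i)| ≤ 1/(2*n) := by
  have hnR : (0:ℝ) < n := Nat.cast_pos.mpr hn
  set c := cl (Fr f (i/n) + sg ε i) with hc
  have habs : |(n:ℝ) * c - (round ((n:ℝ)*c) : ℤ)| ≤ 1/2 := abs_sub_round _
  unfold bb
  rw [← hc]
  rw [show ((round ((n:ℝ)*c) : ℤ) : ℝ)/n - c = -(((n:ℝ)*c - (round ((n:ℝ)*c) : ℤ))/n) by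
    field_simp; ring]
  rw [abs_neg, abs_div, abs_of_pos hnR]
  rw [div_le_div_iff₀ hnR (by positivity)]
  calc |(n:ℝ)*c - (round ((n:ℝ)*c) : ℤ)| * (2*n) ≤ (1/2) * (2*n) := by
        apply mul_le_mul_of_nonneg_right habs; positivity
    _ = 1 * n := by ring
theorem bb_eq_one (f : C(unitI, unitI)) (ε : ℝ) {n : ℕ} (hn : 0 < n) {i : ℕ}
    (h : 1 ≤ Fr f (i/n) + sg ε i) : bb f ε n i = 1 := by
  have hnR : (0:ℝ) < n := Nat.cast_pos.mpr hn
  unfold bb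
  rw [cl_eq_one h, mul_one]
  rw [round_natCast]
  push_cast
  field_simp

theorem bb_eq_zero (f : C(unitI, unitI)) (ε : ℝ) {n : ℕ} (hn : 0 < n) {i : ℕ}
    (h : Fr f (i/n) + sg ε i ≤ 0) : bb f ε n i = 0 := by
  unfold bb
  rw [cl_eq_zero h, mul_zero]
  norm_num

theorem GG_piece (f : C(unitI, unitI)) (ε : ℝ) {n : ℕ} (hn : 0 < n) {j : ℕ} (hj : j < n)
    {t : ℝ} (h1 : (j:ℝ)/n ≤ t) (h2 : t ≤ ((j:ℝ)+1)/n) :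
    GG f ε n t = bb f ε n j + (bb f ε n (j+1) - bb f ε n j) * ((n:ℝ) * (t - j/n)) := by
  have hnR : (0:ℝ) < n := Nat.cast_pos.mpr hn
  unfold GG
  have hsplit : Finset.range n = Finset.range (j+1) ∪ Finset.Ico (j+1) n := by
    rw [Finset.range_eq_Ico, Finset.range_eq_Ico]
    rw [Finset.Ico_union_Ico_eq_Ico (by omega) (by omega)]
  rw [hsplit, Finset.sum_union (by
    rw [Finset.range_eq_Ico]
    exact Finset.Ico_disjoint_Ico_consecutive 0 (j+1) n)]
  have hIco : ∑ k ∈ Finset.Ico (j+1) n,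
      (bb f ε n (k+1) - bb f ε n k) * ((n:ℝ) * min (max (t - k/n) 0) (1/n)) = 0 := by
    refine Finset.sum_eq_zero (fun k hk => ?_)
    have hk' := Finset.mem_Ico.mp hk
    have hkj : (j:ℝ) + 1 ≤ (k:ℝ) := by exact_mod_cast hk'.1
    have htk : t - (k:ℝ)/n ≤ 0 := by
      have : ((j:ℝ)+1)/n ≤ (k:ℝ)/n := (div_le_div_iff_of_pos_right hnR).mpr hkj
      linarith
    rw [max_eq_right htk, min_eq_left (by positivity)]
    ring
  rw [hIco, add_zero, Finset.sum_range_succ]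
  have hterm : min (max (t - (j:ℝ)/n) 0) (1/n) = t - (j:ℝ)/n := by
    rw [max_eq_left (by linarith)]
    apply min_eq_left
    have : ((j:ℝ)+1)/n = (j:ℝ)/n + 1/n := by ring
    linarith [h2, this]
  rw [hterm]
  have hsum : ∑ k ∈ Finset.range j,
      (bb f ε n (k+1) - bb f ε n k) * ((n:ℝ) * min (max (t - k/n) 0) (1/n))
      = bb f ε n j - bb f ε n 0 := by
    rw [show bb f ε n j - bb f ε n 0 = ∑ k ∈ Finset.range j, (bb f ε n (k+1) - bb f ε n k) from
      (Finset.sum_range_sub (fun k => bb f ε n k) j).symm]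
    refine Finset.sum_congr rfl (fun k hk => ?_)
    have hkj : k < j := Finset.mem_range.mp hk
    have hkj' : (k:ℝ) + 1 ≤ (j:ℝ) := by exact_mod_cast hkj
    have hmin : min (max (t - (k:ℝ)/n) 0) (1/n) = 1/n := by
      have h1n : (1:ℝ)/n ≤ t - (k:ℝ)/n := by
        have : ((k:ℝ)+1)/n ≤ (j:ℝ)/n := (div_le_div_iff_of_pos_right hnR).mpr hkj'
        have he : ((k:ℝ)+1)/n = (k:ℝ)/n + 1/n := by ring
        linarith
      have h0n : (0:ℝ) < 1/n := by positivity
      rw [max_eq_left (by linarith)]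
      exact min_eq_right h1n
    rw [hmin]
    rw [mul_one_div_cancel (ne_of_gt hnR), mul_one]
  rw [hsum]
  ring

theorem GG_grid (f : C(unitI, unitI)) (ε : ℝ) {n : ℕ} (hn : 0 < n) {j : ℕ} (hj : j ≤ n) :
    GG f ε n ((j:ℝ)/n) = bb f ε n j := by
  have hnR : (0:ℝ) < n := Nat.cast_pos.mpr hn
  by_cases h : j < n
  · rw [GG_piece f ε hn h (le_refl _) ((div_le_div_iff_of_pos_right hnR).mpr (by linarith))]
    simp
  · have hjn : j = n := by omega
    subst hjn
    have h1j : (1:ℕ) ≤ j := hn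
    have hcast : ((j - 1 : ℕ) : ℝ) = (j:ℝ) - 1 := by
      push_cast [h1j]; ring
    have hb1 : ((j:ℝ) - 1)/j ≤ (j:ℝ)/j := (div_le_div_iff_of_pos_right hnR).mpr (by linarith)
    have hb2 : (j:ℝ)/j ≤ (((j:ℝ) - 1) + 1)/j := (div_le_div_iff_of_pos_right hnR).mpr (by linarith)
    rw [GG_piece f ε hn (show j - 1 < j by omega) (by rw [hcast]; exact hb1)
      (by rw [hcast]; exact hb2)]
    have hstep : (j:ℝ)/j - ((j-1:ℕ):ℝ)/j = 1/j := by
      rw [hcast]; ring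
    rw [hstep, mul_one_div_cancel (ne_of_gt hnR), mul_one]
    have hsucc : j - 1 + 1 = j := by omega
    rw [hsucc]
    ring

theorem grid_mem {n : ℕ} (hn : 0 < n) {i : ℕ} (hi : i ≤ n) : (i:ℝ)/n ∈ Set.Icc (0:ℝ) 1 := by
  have hnR : (0:ℝ) < n := Nat.cast_pos.mpr hn
  constructor
  · positivity
  · rw [div_le_one hnR]; exact_mod_cast hi

theorem Fr_mod {f : C(unitI, unitI)} {ε : ℝ} {n : ℕ}
    (Hmod : ∀ x y : unitI, dist x y ≤ 1/(n:ℝ) → dist (f x) (f y) ≤ ε/8)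
    {s t : ℝ} (hs : s ∈ Set.Icc (0:ℝ) 1) (ht : t ∈ Set.Icc (0:ℝ) 1)
    (hst : |s - t| ≤ 1/(n:ℝ)) : |Fr f s - Fr f t| ≤ ε/8 := by
  have hx : Set.projIcc (0:ℝ) 1 zero_le_one s = ⟨s, hs⟩ := Set.projIcc_of_mem _ hs
  have hy : Set.projIcc (0:ℝ) 1 zero_le_one t = ⟨t, ht⟩ := Set.projIcc_of_mem _ ht
  have h := Hmod ⟨s, hs⟩ ⟨t, ht⟩ (by rw [Subtype.dist_eq, Real.dist_eq]; exact hst)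
  rw [Subtype.dist_eq, Real.dist_eq] at h
  unfold Fr
  rw [hx, hy]
  exact h

theorem mem_uIcc_affine {u v θ : ℝ} (h0 : 0 ≤ θ) (h1 : θ ≤ 1) :
    u + (v - u) * θ ∈ Set.uIcc u v := by
  rcases le_total u v with h | h
  · rw [Set.uIcc_of_le h]
    constructor <;> nlinarith
  · rw [Set.uIcc_of_ge h]
    constructor <;> nlinarith

theorem GG_mem_uIcc (f : C(unitI, unitI)) (ε : ℝ) {n : ℕ} (hn : 0 < n) {j : ℕ} (hj : j < n)
    {t : ℝ} (h1 : (j:ℝ)/n ≤ t) (h2 : t ≤ ((j:ℝ)+1)/n) :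
    GG f ε n t ∈ Set.uIcc (bb f ε n j) (bb f ε n (j+1)) := by
  have hnR : (0:ℝ) < n := Nat.cast_pos.mpr hn
  rw [GG_piece f ε hn hj h1 h2]
  apply mem_uIcc_affine
  · apply mul_nonneg (le_of_lt hnR); linarith
  · have : t - (j:ℝ)/n ≤ 1/n := by
      have he : ((j:ℝ)+1)/n = (j:ℝ)/n + 1/n := by ring
      linarith
    calc (n:ℝ) * (t - (j:ℝ)/n) ≤ (n:ℝ) * (1/n) := by
          exact mul_le_mul_of_nonneg_left this (le_of_lt hnR)
      _ = 1 := mul_one_div_cancel (ne_of_gt hnR)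

theorem GG_sub (f : C(unitI, unitI)) (ε : ℝ) {n : ℕ} (hn : 0 < n) {j : ℕ} (hj : j < n)
    {t₁ t₂ : ℝ} (h11 : (j:ℝ)/n ≤ t₁) (h12 : t₁ ≤ ((j:ℝ)+1)/n)
    (h21 : (j:ℝ)/n ≤ t₂) (h22 : t₂ ≤ ((j:ℝ)+1)/n) :
    GG f ε n t₂ - GG f ε n t₁ = (bb f ε n (j+1) - bb f ε n j) * ((n:ℝ) * (t₂ - t₁)) := by
  rw [GG_piece f ε hn hj h21 h22, GG_piece f ε hn hj h11 h12]
  ring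

theorem piece_of_mem {n : ℕ} (hn : 0 < n) {t : ℝ} (ht : t ∈ Set.Icc (0:ℝ) 1) :
    ∃ j : ℕ, j < n ∧ (j:ℝ)/n ≤ t ∧ t ≤ ((j:ℝ)+1)/n := by
  have hnR : (0:ℝ) < n := Nat.cast_pos.mpr hn
  have h0 : 0 ≤ (n:ℝ)*t := mul_nonneg (le_of_lt hnR) ht.1
  by_cases hfl : ⌊(n:ℝ)*t⌋₊ ≤ n - 1
  · refine ⟨⌊(n:ℝ)*t⌋₊, by omega, ?_, ?_⟩
    · rw [div_le_iff₀ hnR]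
      calc ((⌊(n:ℝ)*t⌋₊ : ℝ)) ≤ (n:ℝ)*t := Nat.floor_le h0
        _ = t * n := mul_comm _ _
    · rw [le_div_iff₀ hnR]
      have := Nat.lt_floor_add_one ((n:ℝ)*t)
      calc t * n = (n:ℝ)*t := mul_comm _ _
        _ ≤ (⌊(n:ℝ)*t⌋₊ : ℝ) + 1 := le_of_lt this
  · have hge : (n:ℕ) ≤ ⌊(n:ℝ)*t⌋₊ := by omega
    have hnt : (n:ℝ) ≤ (n:ℝ)*t := by
      calc (n:ℝ) = ((n:ℕ):ℝ) := rfl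
        _ ≤ (⌊(n:ℝ)*t⌋₊ : ℝ) := by exact_mod_cast hge
        _ ≤ (n:ℝ)*t := Nat.floor_le h0
    have ht1 : t = 1 := by
      have : (n:ℝ)*t ≤ (n:ℝ)*1 := by
        rw [mul_one]
        calc (n:ℝ)*t ≤ (n:ℝ)*1 := mul_le_mul_of_nonneg_left ht.2 (le_of_lt hnR)
          _ = n := mul_one _
      nlinarith [ht.2, ht.1]
    subst ht1
    refine ⟨n-1, by omega, ?_, ?_⟩
    · have hcast : ((n - 1 : ℕ) : ℝ) = (n:ℝ) - 1 := by
        have h1j : (1:ℕ) ≤ n := hn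
        push_cast [h1j]; ring
      rw [hcast, div_le_one hnR]
      linarith
    · have hcast : ((n - 1 : ℕ) : ℝ) = (n:ℝ) - 1 := by
        have h1j : (1:ℕ) ≤ n := hn
        push_cast [h1j]; ring
      rw [hcast]
      rw [show ((n:ℝ) - 1 + 1)/n = (n:ℝ)/n from by ring]
      rw [div_self (ne_of_gt hnR)]

theorem GG_maps_into (f : C(unitI, unitI)) (ε : ℝ) {n : ℕ} (hn : 0 < n) {t : ℝ}
    (ht : t ∈ Set.Icc (0:ℝ) 1) : GG f ε n t ∈ Set.Icc (0:ℝ) 1 := by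
  obtain ⟨j, hj, h1, h2⟩ := piece_of_mem hn ht
  have hmem := GG_mem_uIcc f ε hn hj h1 h2
  have hbj := bb_mem f ε hn j
  have hbj1 := bb_mem f ε hn (j+1)
  rcases le_total (bb f ε n j) (bb f ε n (j+1)) with h | h
  · rw [Set.uIcc_of_le h] at hmem
    exact ⟨le_trans hbj.1 hmem.1, le_trans hmem.2 hbj1.2⟩
  · rw [Set.uIcc_of_ge h] at hmem
    exact ⟨le_trans hbj1.1 hmem.1, le_trans hmem.2 hbj.2⟩

theorem uIcc_subset_image (f : C(unitI, unitI)) (ε : ℝ) {n : ℕ} (hn : 0 < n) {j : ℕ}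
    (hj : j < n) :
    Set.uIcc (bb f ε n j) (bb f ε n (j+1)) ⊆
      GG f ε n '' Set.Icc ((j:ℝ)/n) (((j:ℝ)+1)/n) := by
  have hnR : (0:ℝ) < n := Nat.cast_pos.mpr hn
  have hle : (j:ℝ)/n ≤ ((j:ℝ)+1)/n := (div_le_div_iff_of_pos_right hnR).mpr (by linarith)
  have hIVT := intermediate_value_uIcc (a := (j:ℝ)/n) (b := ((j:ℝ)+1)/n)
    (f := GG f ε n) ((GG_cont f ε n).continuousOn)
  rw [Set.uIcc_of_le hle] at hIVT
  have e1 : GG f ε n ((j:ℝ)/n) = bb f ε n j := GG_grid f ε hn (by omega)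
  have ecast : ((j:ℝ)+1)/n = (((j+1:ℕ)):ℝ)/n := by push_cast; ring
  have e2 : GG f ε n (((j:ℝ)+1)/n) = bb f ε n (j+1) := by
    rw [ecast]; exact GG_grid f ε hn (by omega)
  rw [e1, e2] at hIVT
  exact hIVT

/-- the key expansion bound for `bb`. -/
theorem core_clamp {ε : ℝ} (hε : 0 < ε) (hε1 : ε ≤ 1) {n : ℕ} (hn : 0 < n)
    (Hδ : 1/(n:ℝ) ≤ ε/16) {u v : ℝ} (hu : u ∈ Set.Icc (0:ℝ) 1) (hv : v ∈ Set.Icc (0:ℝ) 1)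
    (huv : |u - v| ≤ ε/8) : 3/(n:ℝ) ≤ cl (v + ε/2) - cl (u - ε/2) := by
  have hnR : (0:ℝ) < n := Nat.cast_pos.mpr hn
  have h3 : 3/(n:ℝ) ≤ 3*ε/16 := by
    have : 3/(n:ℝ) = 3*(1/n) := by ring
    rw [this]; linarith
  have habs := abs_le.mp huv
  have hclv : cl (v + ε/2) = min 1 (v + ε/2) := by
    unfold cl
    rw [max_eq_right (le_min (by norm_num) (by linarith [hv.1]))]
  have hclu : cl (u - ε/2) = max 0 (u - ε/2) := by
    unfold cl
    rw [min_eq_right (by linarith [hu.2])]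
  rcases le_total (v + ε/2) 1 with h | h
  · rw [hclv, min_eq_right h]
    rcases le_total (u - ε/2) 0 with h0 | h0
    · rw [hclu, max_eq_left h0]
      linarith [hu.1]
    · rw [hclu, max_eq_right h0]
      linarith
  · rw [hclv, min_eq_left h]
    rcases le_total (u - ε/2) 0 with h0 | h0
    · rw [hclu, max_eq_left h0]
      linarith
    · rw [hclu, max_eq_right h0]
      linarith [hu.2]

theorem bb_expand (f : C(unitI, unitI)) {ε : ℝ} (hε : 0 < ε) (hε1 : ε ≤ 1) {n : ℕ}
    (hn : 0 < n) (Hδ : 1/(n:ℝ) ≤ ε/16)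
    (Hmod : ∀ x y : unitI, dist x y ≤ 1/(n:ℝ) → dist (f x) (f y) ≤ ε/8)
    {i : ℕ} (hi : i < n) : 2/(n:ℝ) ≤ |bb f ε n (i+1) - bb f ε n i| := by
  have hnR : (0:ℝ) < n := Nat.cast_pos.mpr hn
  have h1n' : (0:ℝ) < 1/n := by positivity
  have key : ∀ p q : ℕ, p ≤ n → q ≤ n → ¬Even p → Even q → |(p:ℝ)/n - (q:ℝ)/n| ≤ 1/n →
      2/(n:ℝ) ≤ bb f ε n p - bb f ε n q := by
    intro p q hp hq hpodd hqeven hpq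
    have hfp : |Fr f ((p:ℝ)/n) - Fr f ((q:ℝ)/n)| ≤ ε/8 :=
      Fr_mod Hmod (grid_mem hn hp) (grid_mem hn hq) hpq
    have hsgp : sg ε p = ε/2 := if_neg hpodd
    have hsgq : sg ε q = -(ε/2) := if_pos hqeven
    have hcore := core_clamp hε hε1 hn Hδ (Fr_mem f ((q:ℝ)/n)) (Fr_mem f ((p:ℝ)/n))
      (by rw [abs_sub_comm]; exact hfp)
    have hap := bb_approx f ε hn p
    have haq := bb_approx f ε hn q
    rw [hsgp] at hap
    rw [hsgq] at haq
    have hap' := abs_le.mp hap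
    have haq' := abs_le.mp haq
    have e1 : Fr f ((q:ℝ)/n) + -(ε/2) = Fr f ((q:ℝ)/n) - ε/2 := by ring
    rw [e1] at haq'
    have h12 : 1/(2*(n:ℝ)) = (1/n)/2 := by ring
    have h1n : 0 < 1/(n:ℝ) := by positivity
    have h2n : 2/(n:ℝ) = 3/n - 2*(1/(2*n)) := by ring
    rw [h2n]
    have := hcore
    linarith [hap'.1, haq'.2]
  rcases Nat.even_or_odd i with he | ho
  · have h := key (i+1) i (by omega) (by omega) (by simp [Nat.even_add_one, he]) he
      (by
        rw [show ((i+1:ℕ):ℝ)/n - (i:ℝ)/n = 1/n from by push_cast; ring]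
        rw [abs_of_pos h1n']
        )
    calc 2/(n:ℝ) ≤ bb f ε n (i+1) - bb f ε n i := h
      _ ≤ |bb f ε n (i+1) - bb f ε n i| := le_abs_self _
  · have h := key i (i+1) (by omega) (by omega) (by simp [Nat.not_even_iff_odd.mpr ho])
      (by simp [Nat.even_add_one, Nat.not_even_iff_odd.mpr ho])
      (by
        rw [show (i:ℝ)/n - ((i+1:ℕ):ℝ)/n = -(1/n) from by push_cast; ring]
        rw [abs_neg, abs_of_pos h1n']
        )
    calc 2/(n:ℝ) ≤ bb f ε n i - bb f ε n (i+1) := h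
      _ ≤ |bb f ε n (i+1) - bb f ε n i| := by
          rw [abs_sub_comm]; exact le_abs_self _

theorem bb_cover (f : C(unitI, unitI)) {ε : ℝ} (hε : 0 < ε) {n : ℕ}
    (hn : 0 < n) (Hδ : 1/(n:ℝ) ≤ ε/16)
    (Hmod : ∀ x y : unitI, dist x y ≤ 1/(n:ℝ) → dist (f x) (f y) ≤ ε/8)
    {j : ℕ} (hj : j < n) {z : ℝ} (hz : z ∈ Set.Icc (0:ℝ) 1)
    (hzf : |z - Fr f ((j:ℝ)/n)| ≤ ε/4) :
    z ∈ Set.uIcc (bb f ε n j) (bb f ε n (j+1)) := by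
  have hnR : (0:ℝ) < n := Nat.cast_pos.mpr hn
  have h1n : (0:ℝ) < 1/n := by positivity
  set w := Fr f ((j:ℝ)/n) with hw
  have habs := abs_le.mp hzf
  -- upper bound at the odd index, lower bound at the even index
  have hup : ∀ p : ℕ, p ≤ n → ¬Even p → |(p:ℝ)/n - (j:ℝ)/n| ≤ 1/n → z ≤ bb f ε n p := by
    intro p hp hpodd hpj
    have hfp : |Fr f ((p:ℝ)/n) - w| ≤ ε/8 :=
      Fr_mod Hmod (grid_mem hn hp) (grid_mem hn (le_of_lt hj)) hpj
    have hfpabs := abs_le.mp hfp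
    have hsgp : sg ε p = ε/2 := if_neg hpodd
    rcases le_total 1 (Fr f ((p:ℝ)/n) + ε/2) with h | h
    · have : bb f ε n p = 1 := bb_eq_one f ε hn (by rw [hsgp]; exact h)
      rw [this]; exact hz.2
    · have hclp : cl (Fr f ((p:ℝ)/n) + sg ε p) = Fr f ((p:ℝ)/n) + ε/2 := by
        rw [hsgp]
        exact cl_of_mem ⟨by linarith [(Fr_mem f ((p:ℝ)/n)).1], h⟩
      have hap := abs_le.mp (by rw [hclp] at *; exact bb_approx f ε hn p)
      rw [hclp] at hap
      have h12 : 1/(2*(n:ℝ)) ≤ ε/32 := by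
        rw [show 1/(2*(n:ℝ)) = (1/n)/2 from by ring]; linarith
      linarith [habs.2, hfpabs.1, hap.1]
  have hdown : ∀ q : ℕ, q ≤ n → Even q → |(q:ℝ)/n - (j:ℝ)/n| ≤ 1/n → bb f ε n q ≤ z := by
    intro q hq hqeven hqj
    have hfq : |Fr f ((q:ℝ)/n) - w| ≤ ε/8 :=
      Fr_mod Hmod (grid_mem hn hq) (grid_mem hn (le_of_lt hj)) hqj
    have hfqabs := abs_le.mp hfq
    have hsgq : sg ε q = -(ε/2) := if_pos hqeven
    rcases le_total (Fr f ((q:ℝ)/n) - ε/2) 0 with h | h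
    · have : bb f ε n q = 0 := bb_eq_zero f ε hn (by rw [hsgq]; linarith)
      rw [this]; exact hz.1
    · have hclq : cl (Fr f ((q:ℝ)/n) + sg ε q) = Fr f ((q:ℝ)/n) - ε/2 := by
        rw [hsgq, show Fr f ((q:ℝ)/n) + -(ε/2) = Fr f ((q:ℝ)/n) - ε/2 from by ring]
        exact cl_of_mem ⟨h, by linarith [(Fr_mem f ((q:ℝ)/n)).2]⟩
      have haq := abs_le.mp (bb_approx f ε hn q)
      rw [hclq] at haq
      have h12 : 1/(2*(n:ℝ)) ≤ ε/32 := by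
        rw [show 1/(2*(n:ℝ)) = (1/n)/2 from by ring]; linarith
      linarith [habs.1, hfqabs.2, haq.2]
  have hjj : |(j:ℝ)/n - (j:ℝ)/n| ≤ 1/n := by rw [sub_self, abs_zero]; positivity
  have hj1j : |((j+1:ℕ):ℝ)/n - (j:ℝ)/n| ≤ 1/n := by
    rw [show ((j+1:ℕ):ℝ)/n - (j:ℝ)/n = 1/n from by push_cast; ring]
    rw [abs_of_pos h1n]
  rcases Nat.even_or_odd j with he | ho
  · have hlow := hdown j (le_of_lt hj) he hjj
    have hhigh := hup (j+1) (by omega) (by simp [Nat.even_add_one, he]) hj1j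
    rw [Set.mem_uIcc]
    exact Or.inl ⟨hlow, hhigh⟩
  · have hhigh := hup j (le_of_lt hj) (by simp [Nat.not_even_iff_odd.mpr ho]) hjj
    have hlow := hdown (j+1) (by omega) (by simp [Nat.even_add_one, Nat.not_even_iff_odd.mpr ho])
      hj1j
    rw [Set.mem_uIcc]
    exact Or.inr ⟨hlow, hhigh⟩

theorem abs_sub_le_of_mem_uIcc {z u v w : ℝ} (h : z ∈ Set.uIcc u v) :
    |z - w| ≤ max |u - w| |v - w| := by
  rcases le_total u v with huv | huv
  · rw [Set.uIcc_of_le huv] at h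
    rcases le_total z w with hzw | hzw
    · rw [abs_of_nonpos (by linarith)]
      calc -(z - w) = w - z := by ring
        _ ≤ w - u := by linarith [h.1]
        _ ≤ |u - w| := by rw [abs_sub_comm]; exact le_abs_self _
        _ ≤ max |u - w| |v - w| := le_max_left _ _
    · rw [abs_of_nonneg (by linarith)]
      calc z - w ≤ v - w := by linarith [h.2]
        _ ≤ |v - w| := le_abs_self _
        _ ≤ max |u - w| |v - w| := le_max_right _ _
  · rw [Set.uIcc_of_ge huv] at h
    rcases le_total z w with hzw | hzw
    · rw [abs_of_nonpos (by linarith)]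
      calc -(z - w) = w - z := by ring
        _ ≤ w - v := by linarith [h.1]
        _ ≤ |v - w| := by rw [abs_sub_comm]; exact le_abs_self _
        _ ≤ max |u - w| |v - w| := le_max_right _ _
    · rw [abs_of_nonneg (by linarith)]
      calc z - w ≤ u - w := by linarith [h.2]
        _ ≤ |u - w| := le_abs_self _
        _ ≤ max |u - w| |v - w| := le_max_left _ _

theorem GG_close (f : C(unitI, unitI)) {ε : ℝ} (hε : 0 < ε) {n : ℕ}
    (hn : 0 < n) (Hδ : 1/(n:ℝ) ≤ ε/16)
    (Hmod : ∀ x y : unitI, dist x y ≤ 1/(n:ℝ) → dist (f x) (f y) ≤ ε/8)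
    {t : ℝ} (ht : t ∈ Set.Icc (0:ℝ) 1) : |GG f ε n t - Fr f t| ≤ 3*ε/4 := by
  have hnR : (0:ℝ) < n := Nat.cast_pos.mpr hn
  have h1n : (0:ℝ) < 1/n := by positivity
  obtain ⟨j, hj, h1, h2⟩ := piece_of_mem hn ht
  have hmem := GG_mem_uIcc f ε hn hj h1 h2
  have hstep : ((j:ℝ)+1)/n = (j:ℝ)/n + 1/n := by ring
  have hbnd : ∀ i : ℕ, i ≤ n → |(i:ℝ)/n - t| ≤ 1/n → |bb f ε n i - Fr f t| ≤ 3*ε/4 := by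
    intro i hi hit
    have happ := bb_approx f ε hn i
    have hcld : |cl (Fr f ((i:ℝ)/n) + sg ε i) - Fr f t| ≤ |Fr f ((i:ℝ)/n) + sg ε i - Fr f t| :=
      cl_dist (Fr_mem f t)
    have hfr : |Fr f ((i:ℝ)/n) - Fr f t| ≤ ε/8 :=
      Fr_mod Hmod (grid_mem hn hi) ht hit
    have hsg : |sg ε i| ≤ ε/2 := by
      unfold sg
      split
      · rw [abs_neg, abs_of_pos (by linarith)]
      · rw [abs_of_pos (by linarith)]
    have h12n : 1/(2*(n:ℝ)) ≤ ε/32 := by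
      rw [show 1/(2*(n:ℝ)) = (1/n)/2 from by ring]
      linarith
    calc |bb f ε n i - Fr f t|
        ≤ |bb f ε n i - cl (Fr f ((i:ℝ)/n) + sg ε i)|
          + |cl (Fr f ((i:ℝ)/n) + sg ε i) - Fr f t| := abs_sub_le _ _ _
      _ ≤ 1/(2*n) + |Fr f ((i:ℝ)/n) + sg ε i - Fr f t| := add_le_add happ hcld
      _ ≤ 1/(2*n) + (|Fr f ((i:ℝ)/n) - Fr f t| + |sg ε i|) := by
          refine add_le_add le_rfl ?_
          calc |Fr f ((i:ℝ)/n) + sg ε i - Fr f t|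
              = |(Fr f ((i:ℝ)/n) - Fr f t) + sg ε i| := by ring_nf
            _ ≤ |Fr f ((i:ℝ)/n) - Fr f t| + |sg ε i| := abs_add_le _ _
      _ ≤ ε/32 + (ε/8 + ε/2) := by linarith
      _ ≤ 3*ε/4 := by linarith
  have hb1 := hbnd j (le_of_lt hj) (by
    rw [abs_of_nonpos (by linarith)]
    linarith)
  have hb2 := hbnd (j+1) (by omega) (by
    rw [show ((j+1:ℕ):ℝ)/n - t = ((j:ℝ)+1)/n - t from by push_cast; ring]
    rw [abs_of_nonneg (by linarith)]
    linarith)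
  calc |GG f ε n t - Fr f t| ≤ max |bb f ε n j - Fr f t| |bb f ε n (j+1) - Fr f t| :=
        abs_sub_le_of_mem_uIcc hmem
    _ ≤ 3*ε/4 := max_le hb1 hb2

theorem piece_sub_unit {n : ℕ} (hn : 0 < n) {j : ℕ} (hj : j < n) :
    Set.Icc ((j:ℝ)/n) (((j:ℝ)+1)/n) ⊆ Set.Icc (0:ℝ) 1 := by
  intro z hz
  have h1 := (grid_mem hn (le_of_lt hj)).1
  have h2 : ((j:ℝ)+1)/n ≤ 1 := by
    have := (grid_mem hn (show j+1 ≤ n by omega)).2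
    rwa [show ((j+1:ℕ):ℝ) = (j:ℝ)+1 from by push_cast; ring] at this
  exact ⟨le_trans h1 hz.1, le_trans hz.2 h2⟩

theorem piece_diam {n : ℕ} (hn : 0 < n) {j : ℕ} {a b : ℝ}
    (ha : a ∈ Set.Icc ((j:ℝ)/n) (((j:ℝ)+1)/n)) (hb : b ∈ Set.Icc ((j:ℝ)/n) (((j:ℝ)+1)/n)) :
    |a - b| ≤ 1/n := by
  have he : ((j:ℝ)+1)/n = (j:ℝ)/n + 1/n := by ring
  have ha2 : a ≤ (j:ℝ)/n + 1/n := by rw [← he]; exact ha.2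
  have hb2 : b ≤ (j:ℝ)/n + 1/n := by rw [← he]; exact hb.2
  rw [abs_le]
  exact ⟨by linarith [ha.1, hb2], by linarith [hb.1, ha2]⟩

theorem hull_sub_image (f : C(unitI, unitI)) (ε : ℝ) (n : ℕ) {c d : ℝ} (hcd : c ≤ d) :
    Set.Icc (min (GG f ε n c) (GG f ε n d)) (max (GG f ε n c) (GG f ε n d)) ⊆
      GG f ε n '' Set.Icc c d := by
  have hIVT := intermediate_value_uIcc (a := c) (b := d) (f := GG f ε n)
    ((GG_cont f ε n).continuousOn)
  rw [Set.uIcc_of_le hcd] at hIVT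
  intro z hz
  apply hIVT
  rw [Set.mem_uIcc]
  rcases le_total (GG f ε n c) (GG f ε n d) with h | h
  · rw [min_eq_left h, max_eq_right h] at hz
    exact Or.inl hz
  · rw [min_eq_right h, max_eq_left h] at hz
    exact Or.inr hz

theorem gridpiece {n : ℕ} (hn : 0 < n) {u v : ℝ} (hu0 : 0 ≤ u) (hv1 : v ≤ 1)
    (hlen : 1/(n:ℝ) ≤ v - u)
    (hgrid : (∃ m : ℕ, m ≤ n ∧ u = (m:ℝ)/n) ∨ (∃ m : ℕ, m ≤ n ∧ v = (m:ℝ)/n)) :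
    ∃ l : ℕ, l < n ∧ Set.Icc ((l:ℝ)/n) (((l:ℝ)+1)/n) ⊆ Set.Icc u v := by
  have hnR : (0:ℝ) < n := Nat.cast_pos.mpr hn
  rcases hgrid with ⟨m, hm, he⟩ | ⟨m, hm, he⟩
  · have hmn : m < n := by
      rcases Nat.lt_or_ge m n with h | h
      · exact h
      · exfalso
        have hmn' : (m:ℝ) = (n:ℝ) := by exact_mod_cast (by omega : m = n)
        rw [hmn', div_self (ne_of_gt hnR)] at he
        have h1 : (0:ℝ) < 1/n := by positivity
        linarith [hlen, hv1, he]
    refine ⟨m, hmn, fun z hz => ?_⟩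
    constructor
    · rw [he]; exact hz.1
    · calc z ≤ ((m:ℝ)+1)/n := hz.2
        _ = u + 1/n := by rw [he]; ring
        _ ≤ v := by linarith
  · have hm1 : 1 ≤ m := by
      rcases Nat.lt_or_ge m 1 with h | h
      · exfalso
        have hm0 : (m:ℝ) = 0 := by exact_mod_cast (by omega : m = 0)
        rw [hm0, zero_div] at he
        have h1 : (0:ℝ) < 1/n := by positivity
        linarith [hlen, hu0, he]
      · exact h
    have hcast : ((m - 1 : ℕ) : ℝ) = (m:ℝ) - 1 := by push_cast [hm1]; ring
    refine ⟨m - 1, by omega, fun z hz => ?_⟩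
    constructor
    · calc u ≤ v - 1/n := by linarith
        _ = ((m:ℝ) - 1)/n := by rw [he]; ring
        _ = ((m-1:ℕ):ℝ)/n := by rw [hcast]
        _ ≤ z := hz.1
    · calc z ≤ (((m-1:ℕ):ℝ)+1)/n := hz.2
        _ = (m:ℝ)/n := by rw [hcast]; ring
        _ = v := he.symm

theorem bb_attains_one (f : C(unitI, unitI)) (hsur : Function.Surjective ⇑f) {ε : ℝ}
    (hε : 0 < ε) {n : ℕ} (hn : 0 < n)
    (Hmod : ∀ x y : unitI, dist x y ≤ 1/(n:ℝ) → dist (f x) (f y) ≤ ε/8) :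
    ∃ i : ℕ, i ≤ n ∧ bb f ε n i = 1 := by
  obtain ⟨u, hu⟩ := hsur ⟨1, by norm_num⟩
  have hFu : Fr f u.val = 1 := by rw [Fr_val, hu]
  obtain ⟨j, hj, h1, h2⟩ := piece_of_mem hn u.2
  have hd1 : |(j:ℝ)/n - u.val| ≤ 1/n := by
    rw [abs_of_nonpos (by linarith)]
    have he : ((j:ℝ)+1)/n = (j:ℝ)/n + 1/n := by ring
    linarith
  have hd2 : |((j+1:ℕ):ℝ)/n - u.val| ≤ 1/n := by
    rw [show ((j+1:ℕ):ℝ)/n = ((j:ℝ)+1)/n from by push_cast; ring]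
    rw [abs_of_nonneg (by linarith)]
    have he : ((j:ℝ)+1)/n = (j:ℝ)/n + 1/n := by ring
    linarith
  have key : ∀ i : ℕ, i ≤ n → ¬Even i → |(i:ℝ)/n - u.val| ≤ 1/n → bb f ε n i = 1 := by
    intro i hi hodd hclose
    have hfr : |Fr f ((i:ℝ)/n) - Fr f u.val| ≤ ε/8 := Fr_mod Hmod (grid_mem hn hi) u.2 hclose
    have := (abs_le.mp hfr).1
    rw [hFu] at this
    apply bb_eq_one f ε hn
    have hsg : sg ε i = ε/2 := if_neg hodd
    rw [hsg]
    linarith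
  rcases Nat.even_or_odd j with he | ho
  · exact ⟨j+1, by omega, key (j+1) (by omega) (by simp [Nat.even_add_one, he]) hd2⟩
  · exact ⟨j, le_of_lt hj, key j (le_of_lt hj) (by simp [Nat.not_even_iff_odd.mpr ho]) hd1⟩

theorem bb_attains_zero (f : C(unitI, unitI)) (hsur : Function.Surjective ⇑f) {ε : ℝ}
    (hε : 0 < ε) {n : ℕ} (hn : 0 < n)
    (Hmod : ∀ x y : unitI, dist x y ≤ 1/(n:ℝ) → dist (f x) (f y) ≤ ε/8) :
    ∃ i : ℕ, i ≤ n ∧ bb f ε n i = 0 := by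
  obtain ⟨u, hu⟩ := hsur ⟨0, by norm_num⟩
  have hFu : Fr f u.val = 0 := by rw [Fr_val, hu]
  obtain ⟨j, hj, h1, h2⟩ := piece_of_mem hn u.2
  have hd1 : |(j:ℝ)/n - u.val| ≤ 1/n := by
    rw [abs_of_nonpos (by linarith)]
    have he : ((j:ℝ)+1)/n = (j:ℝ)/n + 1/n := by ring
    linarith
  have hd2 : |((j+1:ℕ):ℝ)/n - u.val| ≤ 1/n := by
    rw [show ((j+1:ℕ):ℝ)/n = ((j:ℝ)+1)/n from by push_cast; ring]
    rw [abs_of_nonneg (by linarith)]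
    have he : ((j:ℝ)+1)/n = (j:ℝ)/n + 1/n := by ring
    linarith
  have key : ∀ i : ℕ, i ≤ n → Even i → |(i:ℝ)/n - u.val| ≤ 1/n → bb f ε n i = 0 := by
    intro i hi heven hclose
    have hfr : |Fr f ((i:ℝ)/n) - Fr f u.val| ≤ ε/8 := Fr_mod Hmod (grid_mem hn hi) u.2 hclose
    have := (abs_le.mp hfr).2
    rw [hFu] at this
    apply bb_eq_zero f ε hn
    have hsg : sg ε i = -(ε/2) := if_pos heven
    rw [hsg]
    linarith
  rcases Nat.even_or_odd j with he | ho
  · exact ⟨j, le_of_lt hj, key j (le_of_lt hj) he hd1⟩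
  · exact ⟨j+1, by omega, key (j+1) (by omega) (by simp [Nat.even_add_one, Nat.not_even_iff_odd.mpr ho]) hd2⟩

theorem phase2 (f : C(unitI, unitI)) {ε : ℝ} (hε : 0 < ε) (hε1 : ε ≤ 1) {n : ℕ} (hn : 0 < n)
    (Hδ : 1/(n:ℝ) ≤ ε/16)
    (Hmod : ∀ x y : unitI, dist x y ≤ 1/(n:ℝ) → dist (f x) (f y) ≤ ε/8) :
    ∀ k : ℕ, ∀ c d : ℝ, ∀ j : ℕ, j < n →
    Set.Icc c d ⊆ Set.Icc ((j:ℝ)/n) (((j:ℝ)+1)/n) →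
    ((∃ l : ℕ, l ≤ n ∧ c = (l:ℝ)/n) ∨ (∃ l : ℕ, l ≤ n ∧ d = (l:ℝ)/n)) →
    1/((n:ℝ) * 2^k) ≤ d - c →
    ∃ N : ℕ, ∃ l : ℕ, l < n ∧
      Set.Icc ((l:ℝ)/n) (((l:ℝ)+1)/n) ⊆ (GG f ε n)^[N] '' Set.Icc c d := by
  have hnR : (0:ℝ) < n := Nat.cast_pos.mpr hn
  intro k
  induction k with
  | zero =>
    intro c d j hj hsub hgrid hlen
    rw [pow_zero, mul_one] at hlen
    have hcd : c ≤ d := by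
      have h1n : (0:ℝ) < 1/n := by positivity
      linarith
    have hc := hsub ⟨le_refl c, hcd⟩
    have hd := hsub ⟨hcd, le_refl d⟩
    have hwidth : ((j:ℝ)+1)/n = (j:ℝ)/n + 1/n := by ring
    have hceq : c = (j:ℝ)/n := by
      have := hd.2; rw [hwidth] at this; linarith [hc.1]
    have hdeq : d = ((j:ℝ)+1)/n := by
      have := hd.2; rw [hwidth] at this ⊢; linarith [hc.1]
    refine ⟨0, j, hj, ?_⟩
    rw [Function.iterate_zero, Set.image_id, hceq, hdeq]
  | succ k ih =>
    intro c d j hj hsub hgrid hlen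
    have h2k : (0:ℝ) < (n:ℝ) * 2^(k+1) := by positivity
    have hlenpos : 0 < d - c := lt_of_lt_of_le (by positivity) hlen
    have hcd : c ≤ d := by linarith
    have hc := hsub ⟨le_refl c, hcd⟩
    have hd := hsub ⟨hcd, le_refl d⟩
    have hc01 : c ∈ Set.Icc (0:ℝ) 1 := piece_sub_unit hn hj hc
    have hd01 : d ∈ Set.Icc (0:ℝ) 1 := piece_sub_unit hn hj hd
    set u := min (GG f ε n c) (GG f ε n d) with hu
    set v := max (GG f ε n c) (GG f ε n d) with hv
    have hu01 : u ∈ Set.Icc (0:ℝ) 1 := by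
      rcases le_total (GG f ε n c) (GG f ε n d) with h | h
      · rw [hu, min_eq_left h]; exact GG_maps_into f ε hn hc01
      · rw [hu, min_eq_right h]; exact GG_maps_into f ε hn hd01
    have hv01 : v ∈ Set.Icc (0:ℝ) 1 := by
      rcases le_total (GG f ε n c) (GG f ε n d) with h | h
      · rw [hv, max_eq_right h]; exact GG_maps_into f ε hn hd01
      · rw [hv, max_eq_left h]; exact GG_maps_into f ε hn hc01
    have hvu : v - u = |GG f ε n d - GG f ε n c| := by
      rw [hu, hv]
      rcases le_total (GG f ε n c) (GG f ε n d) with h | h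
      · rw [min_eq_left h, max_eq_right h, abs_of_nonneg (by linarith)]
      · rw [min_eq_right h, max_eq_left h, abs_of_nonpos (by linarith)]
        ring
    have hdiff : GG f ε n d - GG f ε n c = (bb f ε n (j+1) - bb f ε n j) * ((n:ℝ)*(d - c)) :=
      GG_sub f ε hn hj hc.1 hc.2 hd.1 hd.2
    have hexpand : 1/((n:ℝ) * 2^k) ≤ v - u := by
      rw [hvu, hdiff, abs_mul]
      have h1 : |(n:ℝ)*(d-c)| = (n:ℝ)*(d-c) := abs_of_nonneg (by positivity)
      rw [h1]
      have h2 := bb_expand f hε hε1 hn Hδ Hmod hj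
      calc 1/((n:ℝ) * 2^k) = (2/n) * ((n:ℝ) * (1/((n:ℝ)*2^(k+1)))) := by
            field_simp
            ring
        _ ≤ (2/n) * ((n:ℝ)*(d-c)) := by
            apply mul_le_mul_of_nonneg_left ?_ (by positivity)
            exact mul_le_mul_of_nonneg_left hlen (le_of_lt hnR)
        _ ≤ |bb f ε n (j+1) - bb f ε n j| * ((n:ℝ)*(d-c)) := by
            apply mul_le_mul_of_nonneg_right h2 (by positivity)
    have huv : u < v := by
      have h1 : (0:ℝ) < 1/((n:ℝ)*2^k) := by positivity
      linarith
    have himg_grid : (∃ m : ℕ, m ≤ n ∧ u = (m:ℝ)/n) ∨ (∃ m : ℕ, m ≤ n ∧ v = (m:ℝ)/n) := by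
      rcases hgrid with ⟨l, hl, he⟩ | ⟨l, hl, he⟩
      · have hval : GG f ε n c = bb f ε n l := by rw [he]; exact GG_grid f ε hn hl
        obtain ⟨m, hm, hbm⟩ := bb_grid f ε hn l
        rcases le_total (GG f ε n c) (GG f ε n d) with h | h
        · exact Or.inl ⟨m, hm, by rw [hu, min_eq_left h, hval, hbm]⟩
        · exact Or.inr ⟨m, hm, by rw [hv, max_eq_left h, hval, hbm]⟩
      · have hval : GG f ε n d = bb f ε n l := by rw [he]; exact GG_grid f ε hn hl
        obtain ⟨m, hm, hbm⟩ := bb_grid f ε hn l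
        rcases le_total (GG f ε n c) (GG f ε n d) with h | h
        · exact Or.inr ⟨m, hm, by rw [hv, max_eq_right h, hval, hbm]⟩
        · exact Or.inl ⟨m, hm, by rw [hu, min_eq_right h, hval, hbm]⟩
    have hIccuv : Set.Icc u v ⊆ GG f ε n '' Set.Icc c d := hull_sub_image f ε n hcd
    rcases le_total (1/(n:ℝ)) (v - u) with hbig | hsmall
    · obtain ⟨l, hl, hsubl⟩ := gridpiece hn hu01.1 hv01.2 hbig himg_grid
      refine ⟨1, l, hl, ?_⟩
      rw [Function.iterate_one]
      exact subset_trans hsubl (subset_trans (by exact fun z hz => hz) hIccuv)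
    · -- small: Icc u v sits inside one piece, recurse
      have hpiece : ∃ j' : ℕ, j' < n ∧ Set.Icc u v ⊆ Set.Icc ((j':ℝ)/n) (((j':ℝ)+1)/n) := by
        rcases himg_grid with ⟨m, hm, he⟩ | ⟨m, hm, he⟩
        · have hmn : m < n := by
            rcases Nat.lt_or_ge m n with h | h
            · exact h
            · exfalso
              have hmn' : (m:ℝ) = (n:ℝ) := by exact_mod_cast (by omega : m = n)
              rw [hmn', div_self (ne_of_gt hnR)] at he
              linarith [hv01.2, huv, he]
          refine ⟨m, hmn, fun z hz => ?_⟩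
          exact ⟨by rw [← he]; exact hz.1, by
            calc z ≤ v := hz.2
              _ ≤ u + 1/n := by linarith
              _ = ((m:ℝ)+1)/n := by rw [he]; ring⟩
        · have hm1 : 1 ≤ m := by
            rcases Nat.lt_or_ge m 1 with h | h
            · exfalso
              have hm0 : (m:ℝ) = 0 := by exact_mod_cast (by omega : m = 0)
              rw [hm0, zero_div] at he
              linarith [hu01.1, huv, he]
            · exact h
          have hcast : ((m - 1 : ℕ) : ℝ) = (m:ℝ) - 1 := by push_cast [hm1]; ring
          refine ⟨m - 1, by omega, fun z hz => ?_⟩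
          refine ⟨?_, ?_⟩
          · calc ((m-1:ℕ):ℝ)/n = v - 1/n := by rw [hcast, he]; ring
              _ ≤ u := by linarith
              _ ≤ z := hz.1
          · calc z ≤ v := hz.2
              _ = (((m-1:ℕ):ℝ)+1)/n := by rw [hcast, he]; ring
      obtain ⟨j', hj', hsubj'⟩ := hpiece
      obtain ⟨N', l, hl, hsubl⟩ := ih u v j' hj' hsubj' himg_grid hexpand
      refine ⟨N' + 1, l, hl, ?_⟩
      have hcomp : (GG f ε n)^[N' + 1] '' Set.Icc c d
          = (GG f ε n)^[N'] '' (GG f ε n '' Set.Icc c d) := by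
        rw [Function.iterate_succ (GG f ε n) N', Set.image_comp]
      rw [hcomp]
      exact subset_trans hsubl (Set.image_mono hIccuv)

theorem phase1_AB (f : C(unitI, unitI)) {ε : ℝ} (hε : 0 < ε) (hε1 : ε ≤ 1) {n : ℕ} (hn : 0 < n)
    (Hδ : 1/(n:ℝ) ≤ ε/16)
    (Hmod : ∀ x y : unitI, dist x y ≤ 1/(n:ℝ) → dist (f x) (f y) ≤ ε/8)
    (k : ℕ) {c d : ℝ} (hc0 : 0 ≤ c) (hd1 : d ≤ 1)
    (hlen2 : 1/((n:ℝ)*2^(k+1)) ≤ d - c)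
    (hB : (⌈(n:ℝ)*c⌉₊:ℝ)/n ≤ d) :
    ∃ N : ℕ, ∃ l : ℕ, l < n ∧
      Set.Icc ((l:ℝ)/n) (((l:ℝ)+1)/n) ⊆ (GG f ε n)^[N] '' Set.Icc c d := by
  have hnR : (0:ℝ) < n := Nat.cast_pos.mpr hn
  have hlenpos : 0 < d - c := lt_of_lt_of_le (by positivity) hlen2
  have hcd : c ≤ d := by linarith
  set m := ⌈(n:ℝ)*c⌉₊ with hm
  have hcp : c ≤ (m:ℝ)/n := by
    rw [le_div_iff₀ hnR]
    calc c * n = (n:ℝ)*c := mul_comm _ _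
      _ ≤ m := Nat.le_ceil _
  have hpc : (m:ℝ)/n < c + 1/n := by
    rw [div_lt_iff₀ hnR]
    have := Nat.ceil_lt_add_one (show (0:ℝ) ≤ (n:ℝ)*c by positivity)
    calc (m:ℝ) < (n:ℝ)*c + 1 := this
      _ = (c + 1/n) * n := by field_simp
  have hmn : m ≤ n := by
    rw [hm]
    apply Nat.ceil_le.mpr
    calc (n:ℝ)*c ≤ (n:ℝ)*1 := mul_le_mul_of_nonneg_left (by linarith) (le_of_lt hnR)
      _ = ((n:ℕ):ℝ) := by rw [mul_one]
  by_cases hA : (m:ℝ)/n + 1/n ≤ d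
  · have hmn' : m < n := by
      have h2 : ((m:ℝ)+1)/n ≤ 1 := by
        rw [show ((m:ℝ)+1)/n = (m:ℝ)/n + 1/n from by ring]
        linarith
      have h3 : (m:ℝ)+1 ≤ n := by rw [div_le_one hnR] at h2; exact h2
      have h4 : (m:ℝ) < (n:ℝ) := by linarith
      exact_mod_cast h4
    refine ⟨0, m, hmn', ?_⟩
    rw [Function.iterate_zero, Set.image_id]
    intro z hz
    refine ⟨le_trans hcp hz.1, le_trans hz.2 ?_⟩
    rw [show ((m:ℝ)+1)/n = (m:ℝ)/n + 1/n from by ring]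
    exact hA
  · push_neg at hA
    rcases le_total ((m:ℝ)/n - c) (d - (m:ℝ)/n) with hside | hside
    · -- right side [m/n, d] is at least half
      have hhalf : 1/((n:ℝ)*2^(k+2)) ≤ d - (m:ℝ)/n := by
        have he : 1/((n:ℝ)*2^(k+2)) = (1/((n:ℝ)*2^(k+1)))/2 := by
          rw [pow_succ]
          field_simp
        rw [he]
        linarith
      have hmn' : m < n := by
        have hmd : (m:ℝ)/n < d := by
          have h1 : (0:ℝ) < 1/((n:ℝ)*2^(k+2)) := by positivity
          linarith
        have h2 : (m:ℝ)/n < 1 := lt_of_lt_of_le hmd hd1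
        rw [div_lt_one hnR] at h2
        exact_mod_cast h2
      obtain ⟨N, l, hl, hsubl⟩ := phase2 f hε hε1 hn Hδ Hmod (k+2) ((m:ℝ)/n) d m hmn'
        (fun z hz => ⟨hz.1, by
          calc z ≤ d := hz.2
            _ ≤ (m:ℝ)/n + 1/n := le_of_lt hA
            _ = ((m:ℝ)+1)/n := by ring⟩)
        (Or.inl ⟨m, hmn, rfl⟩) hhalf
      exact ⟨N, l, hl, fun z hz => Set.image_mono
        (Set.Icc_subset_Icc hcp (le_refl d)) (hsubl hz)⟩
    · -- left side [c, m/n] is at least half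
      have hhalf : 1/((n:ℝ)*2^(k+2)) ≤ (m:ℝ)/n - c := by
        have he : 1/((n:ℝ)*2^(k+2)) = (1/((n:ℝ)*2^(k+1)))/2 := by
          rw [pow_succ]
          field_simp
        rw [he]
        linarith
      have hm1 : 1 ≤ m := by
        rcases Nat.lt_or_ge m 1 with h | h
        · exfalso
          have hm0 : (m:ℝ) = 0 := by exact_mod_cast (by omega : m = 0)
          have h1 : (0:ℝ) < 1/((n:ℝ)*2^(k+2)) := by positivity
          rw [hm0, zero_div] at hhalf
          linarith
        · exact h
      have hcast : ((m - 1 : ℕ) : ℝ) = (m:ℝ) - 1 := by push_cast [hm1]; ring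
      have hm1n : m - 1 < n := by omega
      obtain ⟨N, l, hl, hsubl⟩ := phase2 f hε hε1 hn Hδ Hmod (k+2) c ((m:ℝ)/n) (m-1) hm1n
        (fun z hz => ⟨by
          calc ((m-1:ℕ):ℝ)/n = (m:ℝ)/n - 1/n := by rw [hcast]; ring
            _ ≤ c := by linarith
            _ ≤ z := hz.1, by
          calc z ≤ (m:ℝ)/n := hz.2
            _ = (((m-1:ℕ):ℝ)+1)/n := by rw [hcast]; ring⟩)
        (Or.inr ⟨m, hmn, rfl⟩) hhalf
      exact ⟨N, l, hl, fun z hz => Set.image_mono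
        (Set.Icc_subset_Icc (le_refl c) hB) (hsubl hz)⟩

theorem phase1 (f : C(unitI, unitI)) {ε : ℝ} (hε : 0 < ε) (hε1 : ε ≤ 1) {n : ℕ} (hn : 0 < n)
    (Hδ : 1/(n:ℝ) ≤ ε/16)
    (Hmod : ∀ x y : unitI, dist x y ≤ 1/(n:ℝ) → dist (f x) (f y) ≤ ε/8) :
    ∀ k : ℕ, ∀ c d : ℝ, 0 ≤ c → d ≤ 1 → 1/((n:ℝ) * 2^k) ≤ d - c →
    ∃ N : ℕ, ∃ l : ℕ, l < n ∧
      Set.Icc ((l:ℝ)/n) (((l:ℝ)+1)/n) ⊆ (GG f ε n)^[N] '' Set.Icc c d := by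
  have hnR : (0:ℝ) < n := Nat.cast_pos.mpr hn
  intro k
  induction k with
  | zero =>
    intro c d hc0 hd1 hlen
    rw [pow_zero, mul_one] at hlen
    by_cases hB : (⌈(n:ℝ)*c⌉₊:ℝ)/n ≤ d
    · refine phase1_AB f hε hε1 hn Hδ Hmod 0 hc0 hd1 ?_ hB
      calc 1/((n:ℝ)*2^(0+1)) ≤ 1/((n:ℝ)*1) := by
            apply div_le_div_of_nonneg_left (by norm_num) (by positivity)
            have : (1:ℝ) ≤ 2^(0+1) := by norm_num
            nlinarith
        _ = 1/n := by rw [mul_one]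
        _ ≤ d - c := hlen
    · exfalso
      push_neg at hB
      have hpc : (⌈(n:ℝ)*c⌉₊:ℝ)/n < c + 1/n := by
        rw [div_lt_iff₀ hnR]
        have := Nat.ceil_lt_add_one (show (0:ℝ) ≤ (n:ℝ)*c by positivity)
        calc (⌈(n:ℝ)*c⌉₊:ℝ) < (n:ℝ)*c + 1 := this
          _ = (c + 1/n) * n := by field_simp
      linarith
  | succ k ih =>
    intro c d hc0 hd1 hlen
    have h2k1 : (0:ℝ) < (n:ℝ)*2^(k+1) := by positivity
    have hlenpos : 0 < d - c := lt_of_lt_of_le (by positivity) hlen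
    have hcd : c ≤ d := by linarith
    by_cases hB : (⌈(n:ℝ)*c⌉₊:ℝ)/n ≤ d
    · exact phase1_AB f hε hε1 hn Hδ Hmod k hc0 hd1 hlen hB
    · push_neg at hB
      set m := ⌈(n:ℝ)*c⌉₊ with hm
      have hcp : c ≤ (m:ℝ)/n := by
        rw [le_div_iff₀ hnR]
        calc c * n = (n:ℝ)*c := mul_comm _ _
          _ ≤ m := Nat.le_ceil _
      have hpc : (m:ℝ)/n < c + 1/n := by
        rw [div_lt_iff₀ hnR]
        have := Nat.ceil_lt_add_one (show (0:ℝ) ≤ (n:ℝ)*c by positivity)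
        calc (m:ℝ) < (n:ℝ)*c + 1 := this
          _ = (c + 1/n) * n := by field_simp
      have hmn : m ≤ n := by
        rw [hm]
        apply Nat.ceil_le.mpr
        calc (n:ℝ)*c ≤ (n:ℝ)*1 := mul_le_mul_of_nonneg_left (by linarith) (le_of_lt hnR)
          _ = ((n:ℕ):ℝ) := by rw [mul_one]
      have hm1 : 1 ≤ m := by
        rcases Nat.lt_or_ge m 1 with h | h
        · exfalso
          have hm0 : (m:ℝ) = 0 := by exact_mod_cast (by omega : m = 0)
          rw [hm0, zero_div] at hB
          linarith
        · exact h
      have hcast : ((m - 1 : ℕ) : ℝ) = (m:ℝ) - 1 := by push_cast [hm1]; ring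
      have hm1n : m - 1 < n := by omega
      have hsubpiece : Set.Icc c d ⊆ Set.Icc (((m-1:ℕ):ℝ)/n) ((((m-1:ℕ):ℝ)+1)/n) := by
        intro z hz
        constructor
        · calc ((m-1:ℕ):ℝ)/n = (m:ℝ)/n - 1/n := by rw [hcast]; ring
            _ ≤ c := by linarith
            _ ≤ z := hz.1
        · calc z ≤ d := hz.2
            _ ≤ (m:ℝ)/n := le_of_lt hB
            _ = (((m-1:ℕ):ℝ)+1)/n := by rw [hcast]; ring
      have hc01 : c ∈ Set.Icc (0:ℝ) 1 := ⟨hc0, le_trans hcd hd1⟩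
      have hd01 : d ∈ Set.Icc (0:ℝ) 1 := ⟨le_trans hc0 hcd, hd1⟩
      have hcpiece := hsubpiece ⟨le_refl c, hcd⟩
      have hdpiece := hsubpiece ⟨hcd, le_refl d⟩
      set u := min (GG f ε n c) (GG f ε n d) with hu
      set v := max (GG f ε n c) (GG f ε n d) with hv
      have hu01 : u ∈ Set.Icc (0:ℝ) 1 := by
        rcases le_total (GG f ε n c) (GG f ε n d) with h | h
        · rw [hu, min_eq_left h]; exact GG_maps_into f ε hn hc01
        · rw [hu, min_eq_right h]; exact GG_maps_into f ε hn hd01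
      have hv01 : v ∈ Set.Icc (0:ℝ) 1 := by
        rcases le_total (GG f ε n c) (GG f ε n d) with h | h
        · rw [hv, max_eq_right h]; exact GG_maps_into f ε hn hd01
        · rw [hv, max_eq_left h]; exact GG_maps_into f ε hn hc01
      have hvu : v - u = |GG f ε n d - GG f ε n c| := by
        rw [hu, hv]
        rcases le_total (GG f ε n c) (GG f ε n d) with h | h
        · rw [min_eq_left h, max_eq_right h, abs_of_nonneg (by linarith)]
        · rw [min_eq_right h, max_eq_left h, abs_of_nonpos (by linarith)]
          ring
      have hdiff : GG f ε n d - GG f ε n c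
          = (bb f ε n ((m-1)+1) - bb f ε n (m-1)) * ((n:ℝ)*(d - c)) :=
        GG_sub f ε hn hm1n hcpiece.1 hcpiece.2 hdpiece.1 hdpiece.2
      have hexpand : 1/((n:ℝ) * 2^k) ≤ v - u := by
        rw [hvu, hdiff, abs_mul]
        have h1 : |(n:ℝ)*(d-c)| = (n:ℝ)*(d-c) := abs_of_nonneg (by positivity)
        rw [h1]
        have h2 := bb_expand f hε hε1 hn Hδ Hmod hm1n
        calc 1/((n:ℝ) * 2^k) = (2/n) * ((n:ℝ) * (1/((n:ℝ)*2^(k+1)))) := by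
              field_simp
              ring
          _ ≤ (2/n) * ((n:ℝ)*(d-c)) := by
              apply mul_le_mul_of_nonneg_left ?_ (by positivity)
              exact mul_le_mul_of_nonneg_left hlen (le_of_lt hnR)
          _ ≤ |bb f ε n ((m-1)+1) - bb f ε n (m-1)| * ((n:ℝ)*(d-c)) := by
              apply mul_le_mul_of_nonneg_right h2 (by positivity)
      obtain ⟨N', l, hl, hsubl⟩ := ih u v hu01.1 hv01.2 hexpand
      refine ⟨N' + 1, l, hl, ?_⟩
      have hcomp : (GG f ε n)^[N' + 1] '' Set.Icc c d
          = (GG f ε n)^[N'] '' (GG f ε n '' Set.Icc c d) := by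
        rw [Function.iterate_succ (GG f ε n) N', Set.image_comp]
      rw [hcomp]
      exact subset_trans hsubl (Set.image_mono (hull_sub_image f ε n hcd))

theorem connect (f : C(unitI, unitI)) (hcr : ∀ x, ChainRecurrentPt ⇑f x) {ε : ℝ} (hε : 0 < ε)
    {n : ℕ} (hn : 0 < n) (Hδ : 1/(n:ℝ) ≤ ε/16)
    (Hmod : ∀ x y : unitI, dist x y ≤ 1/(n:ℝ) → dist (f x) (f y) ≤ ε/8)
    {i j : ℕ} (hi : i < n) (hj : j < n) :
    ∃ m : ℕ, 0 < m ∧ Set.Icc ((j:ℝ)/n) (((j:ℝ)+1)/n) ⊆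
      (GG f ε n)^[m] '' Set.Icc ((i:ℝ)/n) (((i:ℝ)+1)/n) := by
  have hnR : (0:ℝ) < n := Nat.cast_pos.mpr hn
  have h1n : (0:ℝ) < 1/n := by positivity
  set x₀ : unitI := ⟨(i:ℝ)/n, grid_mem hn (le_of_lt hi)⟩ with hx₀
  have hymem : (j:ℝ)/n + 1/(2*n) ∈ Set.Icc (0:ℝ) 1 := by
    constructor
    · have := (grid_mem hn (le_of_lt hj)).1
      have h2n : (0:ℝ) < 1/(2*n) := by positivity
      linarith
    · have h2 : ((j:ℝ)+1)/n ≤ 1 := by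
        have := (grid_mem hn (show j+1 ≤ n by omega)).2
        rwa [show ((j+1:ℕ):ℝ) = (j:ℝ)+1 from by push_cast; ring] at this
      have h3 : (j:ℝ)/n + 1/(2*n) ≤ ((j:ℝ)+1)/n := by
        rw [show ((j:ℝ)+1)/n = (j:ℝ)/n + 1/n from by ring]
        have : 1/(2*(n:ℝ)) ≤ 1/n := by
          rw [show 1/(2*(n:ℝ)) = (1/n)/2 from by ring]
          linarith
        linarith
      linarith
  set y₀ : unitI := ⟨(j:ℝ)/n + 1/(2*n), hymem⟩ with hy₀
  obtain ⟨m, hm, c, h0, hmy, hc⟩ := reach_all f hcr h1n x₀ y₀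
  have inv : ∀ t, t ≤ m → ∃ l : ℕ, l < n ∧
      ((c t).val ∈ Set.Icc ((l:ℝ)/n) (((l:ℝ)+1)/n)) ∧
      Set.Icc ((l:ℝ)/n) (((l:ℝ)+1)/n) ⊆ (GG f ε n)^[t] '' Set.Icc ((i:ℝ)/n) (((i:ℝ)+1)/n) := by
    intro t
    induction t with
    | zero =>
      intro _
      refine ⟨i, hi, ?_, ?_⟩
      · rw [h0]
        exact ⟨le_refl _, by
          rw [show ((i:ℝ)+1)/n = (i:ℝ)/n + 1/n from by ring]
          linarith⟩
      · rw [Function.iterate_zero, Set.image_id]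
    | succ t ih =>
      intro ht1
      obtain ⟨l, hl, hmem, hsub⟩ := ih (by omega)
      have hstep := hc t (by omega)
      obtain ⟨l', hl', hmem1, hmem2⟩ := piece_of_mem hn (c (t+1)).2
      have hkey : Set.Icc ((l':ℝ)/n) (((l':ℝ)+1)/n) ⊆
          GG f ε n '' Set.Icc ((l:ℝ)/n) (((l:ℝ)+1)/n) := by
        intro z hz
        apply uIcc_subset_image f ε hn hl
        apply bb_cover f hε hn Hδ Hmod hl (piece_sub_unit hn hl' hz)
        have e1 : |z - (c (t+1)).val| ≤ 1/n := piece_diam hn hz ⟨hmem1, hmem2⟩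
        have e2 : |(c (t+1)).val - (f (c t)).val| < 1/n := by
          rw [abs_sub_comm, ← Real.dist_eq, ← Subtype.dist_eq]
          exact hstep
        have e3 : |(f (c t)).val - Fr f ((l:ℝ)/n)| ≤ ε/8 := by
          rw [← Fr_val f (c t)]
          refine Fr_mod Hmod (c t).2 (grid_mem hn (le_of_lt hl)) ?_
          exact piece_diam hn hmem ⟨le_refl _, by
            rw [show ((l:ℝ)+1)/n = (l:ℝ)/n + 1/n from by ring]
            linarith⟩
        have htri : |z - Fr f ((l:ℝ)/n)| ≤ |z - (c (t+1)).val|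
            + |(c (t+1)).val - (f (c t)).val| + |(f (c t)).val - Fr f ((l:ℝ)/n)| := by
          calc |z - Fr f ((l:ℝ)/n)| ≤ |z - (f (c t)).val| + |(f (c t)).val - Fr f ((l:ℝ)/n)| :=
                abs_sub_le _ _ _
            _ ≤ (|z - (c (t+1)).val| + |(c (t+1)).val - (f (c t)).val|)
                + |(f (c t)).val - Fr f ((l:ℝ)/n)| := by
                  refine add_le_add (abs_sub_le _ _ _) le_rfl
        calc |z - Fr f ((l:ℝ)/n)| ≤ 1/n + 1/n + ε/8 := by linarith
          _ ≤ ε/16 + ε/16 + ε/8 := by linarith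
          _ = ε/4 := by ring
      refine ⟨l', hl', ⟨hmem1, hmem2⟩, ?_⟩
      have hcomp : (GG f ε n)^[t+1] '' Set.Icc ((i:ℝ)/n) (((i:ℝ)+1)/n)
          = GG f ε n '' ((GG f ε n)^[t] '' Set.Icc ((i:ℝ)/n) (((i:ℝ)+1)/n)) := by
        rw [Function.iterate_succ' (GG f ε n) t, Set.image_comp]
      rw [hcomp]
      exact subset_trans hkey (Set.image_mono hsub)
  obtain ⟨l, hl, hmem, hsub⟩ := inv m (le_refl m)
  rw [hmy] at hmem
  have hlj : l = j := by
    have e1 : (l:ℝ)/n ≤ (j:ℝ)/n + 1/(2*n) := hmem.1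
    have e2 : (j:ℝ)/n + 1/(2*n) ≤ ((l:ℝ)+1)/n := hmem.2
    have f1 : (l:ℝ) ≤ (j:ℝ) + 1/2 := by
      rw [show (j:ℝ)/n + 1/(2*n) = ((j:ℝ)+1/2)/n from by ring] at e1
      exact (div_le_div_iff_of_pos_right hnR).mp e1
    have f2 : (j:ℝ) + 1/2 ≤ (l:ℝ) + 1 := by
      rw [show (j:ℝ)/n + 1/(2*n) = ((j:ℝ)+1/2)/n from by ring] at e2
      exact (div_le_div_iff_of_pos_right hnR).mp e2
    have g1 : l ≤ j := by
      by_contra h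
      have : (j:ℝ) + 1 ≤ (l:ℝ) := by exact_mod_cast (by omega : j + 1 ≤ l)
      linarith
    have g2 : j ≤ l := by
      by_contra h
      have : (l:ℝ) + 1 ≤ (j:ℝ) := by exact_mod_cast (by omega : l + 1 ≤ j)
      linarith
    omega
  subst hlj
  exact ⟨m, hm, hsub⟩

theorem cover_fix (f : C(unitI, unitI)) (ε : ℝ) (n : ℕ) {N : ℕ} {u v : ℝ} (huv : u ≤ v)
    (hsub : Set.Icc u v ⊆ (GG f ε n)^[N] '' Set.Icc u v) :
    ∃ z ∈ Set.Icc u v, (GG f ε n)^[N] z = z := by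
  have hcont : Continuous ((GG f ε n)^[N]) := (GG_cont f ε n).iterate N
  obtain ⟨x₁, hx₁, e₁⟩ := hsub ⟨le_refl u, huv⟩
  obtain ⟨x₂, hx₂, e₂⟩ := hsub ⟨huv, le_refl v⟩
  set φ : ℝ → ℝ := fun t => (GG f ε n)^[N] t - t with hφ
  have hφcont : Continuous φ := hcont.sub continuous_id
  have hφ1 : φ x₁ ≤ 0 := by
    simp only [hφ, e₁]
    linarith [hx₁.1]
  have hφ2 : 0 ≤ φ x₂ := by
    simp only [hφ, e₂]
    linarith [hx₂.2]
  have h0mem : (0:ℝ) ∈ Set.uIcc (φ x₁) (φ x₂) := by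
    rw [Set.mem_uIcc]
    exact Or.inl ⟨hφ1, hφ2⟩
  obtain ⟨z, hz, hz0⟩ := intermediate_value_uIcc (hφcont.continuousOn) h0mem
  have hzmem : z ∈ Set.Icc u v := by
    rcases le_total x₁ x₂ with h | h
    · rw [Set.uIcc_of_le h] at hz
      exact ⟨le_trans hx₁.1 hz.1, le_trans hz.2 hx₂.2⟩
    · rw [Set.uIcc_of_ge h] at hz
      exact ⟨le_trans hx₂.1 hz.1, le_trans hz.2 hx₁.2⟩
  refine ⟨z, hzmem, ?_⟩
  have : (GG f ε n)^[N] z - z = 0 := hz0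
  linarith

theorem cr_to_closure (f : C(unitI, unitI)) (hsur : Function.Surjective ⇑f)
    (hcr : ∀ x, ChainRecurrentPt ⇑f x) : f ∈ closure CP := by
  rw [Metric.mem_closure_iff]
  intro ε₀ hε₀
  set ε := min ε₀ 1 with hε_def
  have hε : 0 < ε := lt_min hε₀ one_pos
  have hε1 : ε ≤ 1 := min_le_right _ _
  have hu : UniformContinuous ⇑f := CompactSpace.uniformContinuous_of_continuous f.continuous
  obtain ⟨W, hW, hWmod⟩ := Metric.uniformContinuous_iff.mp hu (ε/8) (by positivity)
  obtain ⟨n, hngt⟩ := exists_nat_gt (max (1/W) (16/ε))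
  have hmaxpos : (0:ℝ) < max (1/W) (16/ε) := lt_max_of_lt_left (by positivity)
  have hnR : (0:ℝ) < n := lt_trans hmaxpos hngt
  have hn : 0 < n := by exact_mod_cast hnR
  have hW' : 1/(n:ℝ) < W := by
    have h1 : 1/W < (n:ℝ) := lt_of_le_of_lt (le_max_left _ _) hngt
    rw [div_lt_iff₀ hnR]
    rw [div_lt_iff₀ hW] at h1
    linarith [h1]
  have Hδ : 1/(n:ℝ) ≤ ε/16 := by
    have h1 : 16/ε < (n:ℝ) := lt_of_le_of_lt (le_max_right _ _) hngt
    rw [div_le_iff₀ hnR]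
    rw [div_lt_iff₀ hε] at h1
    linarith [h1]
  have Hmod : ∀ x y : unitI, dist x y ≤ 1/(n:ℝ) → dist (f x) (f y) ≤ ε/8 :=
    fun x y h => le_of_lt (hWmod (lt_of_le_of_lt h hW'))
  have hmaps : ∀ x : unitI, GG f ε n x.val ∈ Set.Icc (0:ℝ) 1 := fun x => GG_maps_into f ε hn x.2
  set g : C(unitI, unitI) := ⟨fun x => ⟨GG f ε n x.val, hmaps x⟩,
    Continuous.subtype_mk ((GG_cont f ε n).comp continuous_subtype_val) _⟩ with hgdef
  have hgit : ∀ (k : ℕ) (x : unitI), ((⇑g)^[k] x).val = (GG f ε n)^[k] x.val := by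
    intro k
    induction k with
    | zero => intro x; simp
    | succ k ih =>
      intro x
      rw [Function.iterate_succ_apply', Function.iterate_succ_apply']
      show (g ((⇑g)^[k] x)).val = GG f ε n ((GG f ε n)^[k] x.val)
      rw [← ih x]
      rfl
  have hgsur : Function.Surjective ⇑g := by
    intro w
    obtain ⟨i1, hi1, hb1⟩ := bb_attains_one f hsur hε hn Hmod
    obtain ⟨i0, hi0, hb0⟩ := bb_attains_zero f hsur hε hn Hmod
    have hG1 : GG f ε n ((i1:ℝ)/n) = 1 := by rw [GG_grid f ε hn hi1, hb1]
    have hG0 : GG f ε n ((i0:ℝ)/n) = 0 := by rw [GG_grid f ε hn hi0, hb0]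
    have hIVT := intermediate_value_uIcc (a := (i0:ℝ)/n) (b := (i1:ℝ)/n)
      (f := GG f ε n) ((GG_cont f ε n).continuousOn)
    rw [hG0, hG1] at hIVT
    have hwmem : w.val ∈ Set.uIcc (0:ℝ) 1 := by
      rw [Set.uIcc_of_le (by norm_num : (0:ℝ) ≤ 1)]
      exact w.2
    obtain ⟨t, ht, hGt⟩ := hIVT hwmem
    have ht01 : t ∈ Set.Icc (0:ℝ) 1 := by
      rcases le_total ((i0:ℝ)/n) ((i1:ℝ)/n) with h | h
      · rw [Set.uIcc_of_le h] at ht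
        exact ⟨le_trans (grid_mem hn hi0).1 ht.1, le_trans ht.2 (grid_mem hn hi1).2⟩
      · rw [Set.uIcc_of_ge h] at ht
        exact ⟨le_trans (grid_mem hn hi1).1 ht.1, le_trans ht.2 (grid_mem hn hi0).2⟩
    exact ⟨⟨t, ht01⟩, Subtype.ext hGt⟩
  have hdense : Dense (Function.periodicPts ⇑g) := by
    rw [Metric.dense_iff]
    intro x r hr
    obtain ⟨l, hl, hx1, hx2⟩ := piece_of_mem hn x.2
    set r' : ℝ := min (r/2) (1/(2*n)) with hr'def
    have hr'0 : 0 < r' := lt_min (by linarith) (by positivity)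
    set u := max ((l:ℝ)/n) (x.val - r') with hudef
    set v := min (((l:ℝ)+1)/n) (x.val + r') with hvdef
    have hlstep : (l:ℝ)/n < ((l:ℝ)+1)/n := by
      rw [div_lt_div_iff₀ hnR hnR]
      nlinarith
    have huv : u < v := by
      apply max_lt
      · apply lt_min
        · exact hlstep
        · linarith [hx1]
      · apply lt_min
        · linarith [hx2]
        · linarith
    have husub : Set.Icc u v ⊆ Set.Icc ((l:ℝ)/n) (((l:ℝ)+1)/n) := fun z hz =>
      ⟨le_trans (le_max_left _ _) hz.1, le_trans hz.2 (min_le_left _ _)⟩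
    have hu0 : 0 ≤ u := le_trans (grid_mem hn (le_of_lt hl)).1 (le_max_left _ _)
    have hv1 : v ≤ 1 := by
      have := (piece_sub_unit hn hl ⟨le_of_lt (lt_of_le_of_lt (le_max_left _ _) huv), min_le_left _ _⟩).2
      exact this
    obtain ⟨k, hk⟩ := exists_pow_lt_of_lt_one
      (show (0:ℝ) < (v-u)*n from mul_pos (by linarith) hnR)
      (show (1:ℝ)/2 < 1 by norm_num)
    have hklen : 1/((n:ℝ)*2^k) ≤ v - u := by
      have h2k : (0:ℝ) < (2:ℝ)^k := by positivity
      rw [div_pow, one_pow, div_lt_iff₀ h2k] at hk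
      rw [div_le_iff₀ (by positivity)]
      nlinarith
    obtain ⟨N, l1, hl1, hsub1⟩ := phase1 f hε hε1 hn Hδ Hmod k u v hu0 hv1 hklen
    obtain ⟨M, hM, hsub2⟩ := connect f hcr hε hn Hδ Hmod hl1 hl
    have htotal : Set.Icc u v ⊆ (GG f ε n)^[M+N] '' Set.Icc u v := by
      have hcomp : (GG f ε n)^[M+N] '' Set.Icc u v
          = (GG f ε n)^[M] '' ((GG f ε n)^[N] '' Set.Icc u v) := by
        rw [Function.iterate_add (GG f ε n) M N, Set.image_comp]
      rw [hcomp]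
      exact subset_trans husub (subset_trans hsub2 (Set.image_mono hsub1))
    obtain ⟨z, hzmem, hzfix⟩ := cover_fix f ε n (le_of_lt huv) htotal
    have hz01 : z ∈ Set.Icc (0:ℝ) 1 := piece_sub_unit hn hl (husub hzmem)
    refine ⟨⟨z, hz01⟩, ?_, ?_⟩
    · rw [Metric.mem_ball, Subtype.dist_eq, Real.dist_eq]
      have hzu : x.val - r' ≤ z := le_trans (le_max_right _ _) hzmem.1
      have hzv : z ≤ x.val + r' := le_trans hzmem.2 (min_le_right _ _)
      have habs : |z - x.val| ≤ r' := abs_le.mpr ⟨by linarith, by linarith⟩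
      have hr'r : r' < r := lt_of_le_of_lt (min_le_left _ _) (by linarith)
      linarith
    · rw [Function.mem_periodicPts]
      refine ⟨M+N, by omega, ?_⟩
      have hval : ((⇑g)^[M+N] ⟨z, hz01⟩).val = z := by
        rw [hgit]
        exact hzfix
      exact Subtype.ext hval
  refine ⟨g, ⟨hgsur, hdense⟩, ?_⟩
  have hdist : dist g f ≤ 3*ε/4 := by
    rw [ContinuousMap.dist_le (by positivity)]
    intro x
    rw [Subtype.dist_eq, Real.dist_eq]
    show |GG f ε n x.val - (f x).val| ≤ 3*ε/4
    rw [← Fr_val f x]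
    exact GG_close f hε hn Hδ Hmod x.2
  calc dist f g = dist g f := dist_comm _ _
    _ ≤ 3*ε/4 := hdist
    _ < ε := by linarith
    _ ≤ ε₀ := min_le_left _ _

end ChainProofAux

/-- A map `f ∈ C(I)` is chain-recurrent (every point of `I` is chain-recurrent for `f`)
if and only if `f` belongs to the closure of `CP` in the uniform metric. -/
theorem chainRecurrent_iff_mem_closure_CP (f : C(unitI, unitI))
    (hf : Function.Surjective ⇑f) :
    (∀ x : unitI, ChainRecurrentPt ⇑f x) ↔ f ∈ closure CP :=
  ⟨fun h => ChainProofAux.cr_to_closure f hf h, fun h => ChainProofAux.closure_to_cr f h⟩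
end

section
/- Suppose f ∈ C(I), g ∈ CP, and ψ : I → I is a continuous monotone (not necessarily strictly) surjection satisfying ψ ∘ f = g ∘ ψ, such that for every periodic point p of g the preimage ψ⁻¹({p}) is a singleton. Then f is chain-recurrent; in particular f ∈ cl(CP). -/
open Set Function Metric

noncomputable section AUX

namespace CRAux

instance : Inhabited unitI := ⟨⟨0, by norm_num⟩⟩

lemma unitI_dist (x y : unitI) : dist x y = |x.1 - y.1| := by
  rw [Subtype.dist_eq, Real.dist_eq]

lemma unitI_coe_le_coe {x y : unitI} : x ≤ y ↔ x.1 ≤ y.1 := Iff.rfl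
lemma unitI_coe_lt_coe {x y : unitI} : x < y ↔ x.1 < y.1 := Iff.rfl

lemma unitI_ext {x y : unitI} (h : x.1 = y.1) : x = y := Subtype.ext h

/-- An `ε`-chain from `u` to `v` (of positive length). -/
def Reach (f : unitI → unitI) (ε : ℝ) (u v : unitI) : Prop :=
  ∃ (n : ℕ) (c : ℕ → unitI), 0 < n ∧ c 0 = u ∧ c n = v ∧
    ∀ i < n, dist (f (c i)) (c (i + 1)) < ε

lemma reach_single {f : unitI → unitI} {ε : ℝ} {u w : unitI}
    (h : dist (f u) w < ε) : Reach f ε u w := by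
  refine ⟨1, fun i => if i = 0 then u else w, Nat.one_pos, by simp, by simp, ?_⟩
  intro i hi
  interval_cases i
  simpa using h

lemma reach_append {f : unitI → unitI} {ε : ℝ} {u v w : unitI}
    (h : Reach f ε u v) (hw : dist (f v) w < ε) : Reach f ε u w := by
  obtain ⟨n, c, hn, h0, hv, hc⟩ := h
  refine ⟨n + 1, fun i => if i ≤ n then c i else w, Nat.succ_pos n, by simp [h0], by simp, ?_⟩
  intro i hi
  rcases Nat.lt_succ_iff_lt_or_eq.mp hi with hi' | rfl
  · have h1 : i ≤ n := hi'.le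
    have h2 : i + 1 ≤ n := hi'
    simpa [h1, h2] using hc i hi'
  · have h1 : ¬ (i + 1 ≤ i) := by omega
    simpa [h1, hv] using hw

lemma reach_image {f : unitI → unitI} {ε : ℝ} (hε : 0 < ε) {u v : unitI}
    (h : Reach f ε u v) : Reach f ε u (f v) :=
  reach_append h (by simpa using hε)

lemma reach_iterate {f : unitI → unitI} {ε : ℝ} (hε : 0 < ε) {u v : unitI}
    (h : Reach f ε u v) (k : ℕ) : Reach f ε u (f^[k] v) := by
  induction k with
  | zero => simpa using h
  | succ k ih => rw [Function.iterate_succ_apply']; exact reach_image hε ih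

lemma reach_trans {f : unitI → unitI} {ε : ℝ} {u v w : unitI}
    (h1 : Reach f ε u v) (h2 : Reach f ε v w) : Reach f ε u w := by
  obtain ⟨n, c, hn, hc0, hcn, hc⟩ := h1
  obtain ⟨m, d, hm, hd0, hdm, hd⟩ := h2
  refine ⟨n + m, fun i => if i ≤ n then c i else d (i - n), by omega, by simp [hc0], ?_, ?_⟩
  · have : ¬ (n + m ≤ n) ∨ m = 0 := by omega
    rcases Nat.eq_zero_or_pos m with hm0 | hm0
    · omega
    · have hnm : ¬ (n + m ≤ n) := by omega
      simp [hnm, hdm]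
  · intro i hi
    by_cases h1i : i + 1 ≤ n
    · have : i ≤ n := by omega
      have : i < n := by omega
      simp only [h1i, if_pos, this.le]
      exact hc i this
    · by_cases h0i : i ≤ n
      · have hin : i = n := by omega
        subst hin
        have h1 : ¬ (i + 1 ≤ i) := by omega
        have e2 : i + 1 - i = 1 := by omega
        simp only [le_refl, if_pos, h1, if_neg, e2]
        rw [hcn, ← hd0]
        exact hd 0 (by omega)
      · have e1 : i - n + 1 = i + 1 - n := by omega
        simp only [h0i, if_neg, h1i]
        rw [← e1]
        exact hd (i - n) (by omega)

/-- Splice: start from `v`, jump onto the orbit of a periodic point `y` nearby,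
and go around that orbit to land exactly on `y`. -/
lemma reach_splice {f : unitI → unitI} {ε : ℝ} (hε : 0 < ε) {v y : unitI}
    (hjump : dist (f v) (f y) < ε) (hy : y ∈ Function.periodicPts f) :
    Reach f ε v y := by
  obtain ⟨m, hm, hmy⟩ := hy
  have h1 : Reach f ε v (f y) := reach_single hjump
  have h2 : Reach f ε v (f^[m-1] (f y)) := reach_iterate hε h1 (m - 1)
  have : f^[m-1] (f y) = y := by
    have : f^[m - 1] (f y) = f^[m] y := by
      rw [← Function.iterate_succ_apply]
      congr 1
      omega
    rw [this]; exact hmy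
  rwa [this] at h2

/-- The flip `x ↦ 1 - x` of the unit interval. -/
def flip (x : unitI) : unitI := ⟨1 - x.1, by constructor <;> [linarith [x.2.2]; linarith [x.2.1]]⟩

@[simp] lemma flip_flip (x : unitI) : flip (flip x) = x := by
  apply unitI_ext; simp [flip]

lemma flip_dist (x y : unitI) : dist (flip x) (flip y) = dist x y := by
  rw [unitI_dist, unitI_dist, flip, flip]
  simp only
  rw [show (1 - x.1) - (1 - y.1) = -(x.1 - y.1) by ring, abs_neg]

lemma flip_lt {x y : unitI} (h : x < y) : flip y < flip x := by
  rw [unitI_coe_lt_coe] at h ⊢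
  simp only [flip]
  linarith

lemma flip_le {x y : unitI} (h : x ≤ y) : flip y ≤ flip x := by
  rw [unitI_coe_le_coe] at h ⊢
  simp only [flip]
  linarith

lemma flip_antitone : Antitone flip := fun _ _ h => flip_le h

lemma flip_continuous : Continuous flip := by
  apply Continuous.subtype_mk
  exact (continuous_const.sub continuous_subtype_val)

lemma flip_surjective : Function.Surjective flip := by
  intro y
  exact ⟨flip y, flip_flip y⟩

lemma flip_conj_iterate (h : unitI → unitI) (k : ℕ) (x : unitI) :
    (flip ∘ h ∘ flip)^[k] x = flip (h^[k] (flip x)) := by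
  induction k generalizing x with
  | zero => simp
  | succ k ih =>
    rw [Function.iterate_succ_apply, Function.iterate_succ_apply]
    simp only [Function.comp_apply]
    rw [ih, flip_flip]

lemma flip_periodicPts {h : unitI → unitI} {q : unitI} (hq : q ∈ Function.periodicPts h) :
    flip q ∈ Function.periodicPts (flip ∘ h ∘ flip) := by
  obtain ⟨m, hm, hmq⟩ := hq
  exact ⟨m, hm, by rw [Function.IsPeriodicPt, Function.IsFixedPt, flip_conj_iterate, flip_flip, hmq]⟩

lemma flip_dense {s : Set unitI} (hs : Dense s) : Dense (flip '' s) := by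
  intro x
  rw [Metric.mem_closure_iff]
  intro ε hε
  obtain ⟨y, hy, hxy⟩ := Metric.mem_closure_iff.mp (hs (flip x)) ε hε
  refine ⟨flip y, ⟨y, hy, rfl⟩, ?_⟩
  have : dist x (flip y) = dist (flip x) y := by
    rw [← flip_dist (flip x) y, flip_flip]
  rwa [this]

lemma flip_reach {f : unitI → unitI} {ε : ℝ} {u v : unitI}
    (h : Reach (flip ∘ f ∘ flip) ε (flip u) (flip v)) : Reach f ε u v := by
  obtain ⟨n, c, hn, h0, hv, hc⟩ := h
  refine ⟨n, fun i => flip (c i), hn, by simp only []; rw [h0, flip_flip],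
    by simp only []; rw [hv, flip_flip], ?_⟩
  intro i hi
  have h2 := hc i hi
  simp only []
  have e1 : f (flip (c i)) = flip ((flip ∘ f ∘ flip) (c i)) := by
    simp only [Function.comp_apply, flip_flip]
  rw [e1, flip_dist]
  exact h2

end CRAux

end AUX

noncomputable section AUX2

namespace CRAux

/-- The data of the mono-semiconjugacy setup. -/
structure Ctx where
  f : unitI → unitI
  g : unitI → unitI
  ψ : unitI → unitI
  hfc : Continuous f
  hfsurj : Function.Surjective f
  hψc : Continuous ψ
  hmono : Monotone ψ
  hgdense : Dense (Function.periodicPts g)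
  hsemi : ∀ x, ψ (f x) = g (ψ x)
  hfib : ∀ p ∈ Function.periodicPts g, ∃! x : unitI, ψ x = p

namespace Ctx

variable (C : Ctx)

/-- the unique point in the fiber of a periodic point -/
def sig (q : unitI) : unitI :=
  @dite _ (q ∈ Function.periodicPts C.g) (Classical.dec _)
    (fun h => (C.hfib q h).exists.choose) (fun _ => default)

lemma sig_spec {q : unitI} (hq : q ∈ Function.periodicPts C.g) : C.ψ (C.sig q) = q := by
  rw [sig, dif_pos hq]
  exact (C.hfib q hq).exists.choose_spec

lemma sig_unique {q : unitI} (hq : q ∈ Function.periodicPts C.g) {x : unitI}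
    (hx : C.ψ x = q) : x = C.sig q := by
  obtain ⟨y, _, huniq⟩ := C.hfib q hq
  rw [huniq x hx, ← huniq _ (C.sig_spec hq)]

lemma semi_iter (k : ℕ) (x : unitI) : C.ψ (C.f^[k] x) = C.g^[k] (C.ψ x) := by
  induction k generalizing x with
  | zero => simp
  | succ k ih =>
    rw [Function.iterate_succ_apply, Function.iterate_succ_apply, ih, C.hsemi]

lemma periodic_apply {q : unitI} (hq : q ∈ Function.periodicPts C.g) :
    C.g q ∈ Function.periodicPts C.g := by
  obtain ⟨m, hm, hmq⟩ := hq
  exact ⟨m, hm, hmq.apply⟩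

lemma sig_apply_f {q : unitI} (hq : q ∈ Function.periodicPts C.g) :
    C.f (C.sig q) = C.sig (C.g q) := by
  apply C.sig_unique (C.periodic_apply hq)
  rw [C.hsemi, C.sig_spec hq]

lemma sig_periodic {q : unitI} (hq : q ∈ Function.periodicPts C.g) :
    C.sig q ∈ Function.periodicPts C.f := by
  obtain ⟨m, hm, hmq⟩ := id hq
  refine ⟨m, hm, ?_⟩
  have h2 : C.ψ (C.f^[m] (C.sig q)) = q := by
    rw [C.semi_iter, C.sig_spec hq, hmq]
  exact C.sig_unique hq h2

/-- fiber squeeze -/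
lemma fiber_between {a b z : unitI} (hab : C.ψ a = C.ψ b) (h1 : a ≤ z) (h2 : z ≤ b) :
    C.ψ z = C.ψ a := by
  have l1 : C.ψ a ≤ C.ψ z := C.hmono h1
  have l2 : C.ψ z ≤ C.ψ b := C.hmono h2
  rw [← hab] at l2
  exact le_antisymm l2 l1

/-- there is a `sig`-point strictly between any two points with distinct `ψ`-values -/
lemma exists_sig_between {a b : unitI} (h : C.ψ a < C.ψ b) :
    ∃ q ∈ Function.periodicPts C.g, a < C.sig q ∧ C.sig q < b := by
  obtain ⟨q, hq, hq1, hq2⟩ := C.hgdense.exists_between h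
  refine ⟨q, hq, ?_, ?_⟩
  · by_contra hc
    push_neg at hc
    have h2 := C.hmono hc
    rw [C.sig_spec hq] at h2
    exact absurd (lt_of_lt_of_le hq1 h2) (lt_irrefl _)
  · by_contra hc
    push_neg at hc
    have h2 := C.hmono hc
    rw [C.sig_spec hq] at h2
    exact absurd (lt_of_lt_of_le hq2 h2) (lt_irrefl _)

def fibTop (x : unitI) : unitI := sSup (C.ψ ⁻¹' {C.ψ x})
def fibBot (x : unitI) : unitI := sInf (C.ψ ⁻¹' {C.ψ x})

lemma fiber_closed (x : unitI) : IsClosed (C.ψ ⁻¹' {C.ψ x}) :=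
  isClosed_singleton.preimage C.hψc

lemma fiber_bddAbove (x : unitI) : BddAbove (C.ψ ⁻¹' {C.ψ x}) :=
  ⟨⟨1, by norm_num⟩, fun y _ => y.2.2⟩

lemma fiber_bddBelow (x : unitI) : BddBelow (C.ψ ⁻¹' {C.ψ x}) :=
  ⟨⟨0, by norm_num⟩, fun y _ => y.2.1⟩

lemma fibTop_mem (x : unitI) : C.ψ (C.fibTop x) = C.ψ x :=
  @IsCompact.sSup_mem unitI (CompleteLinearOrder.toConditionallyCompleteLinearOrderBot (α := unitI)).toConditionallyCompleteLinearOrder _ _ _ (C.fiber_closed x).isCompact ⟨x, rfl⟩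

lemma fibBot_mem (x : unitI) : C.ψ (C.fibBot x) = C.ψ x :=
  (C.fiber_closed x).isCompact.sInf_mem ⟨x, rfl⟩

lemma le_fibTop (x : unitI) : x ≤ C.fibTop x :=
  le_sSup rfl

lemma fibBot_le (x : unitI) : C.fibBot x ≤ x :=
  csInf_le (C.fiber_bddBelow x) rfl

lemma mem_le_fibTop {x z : unitI} (hz : C.ψ z = C.ψ x) : z ≤ C.fibTop x :=
  le_sSup hz

lemma fibBot_le_mem {x z : unitI} (hz : C.ψ z = C.ψ x) : C.fibBot x ≤ z :=
  csInf_le (C.fiber_bddBelow x) hz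

lemma fibTop_lt {x w : unitI} (h : C.fibTop x < w) : C.ψ x < C.ψ w := by
  have hle : C.ψ x ≤ C.ψ w := by
    rw [← C.fibTop_mem x]
    exact C.hmono h.le
  rcases lt_or_eq_of_le hle with h1 | h1
  · exact h1
  · exact absurd (C.mem_le_fibTop h1.symm) (not_le.mpr h)

lemma lt_fibBot {x w : unitI} (h : w < C.fibBot x) : C.ψ w < C.ψ x := by
  have hle : C.ψ w ≤ C.ψ x := by
    rw [← C.fibBot_mem x]
    exact C.hmono h.le
  rcases lt_or_eq_of_le hle with h1 | h1
  · exact h1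
  · exact absurd (C.fibBot_le_mem h1) (not_le.mpr h)

/-- width of the fiber through `x` -/
def wid (x : unitI) : ℝ := (C.fibTop x).1 - (C.fibBot x).1

lemma wid_nonneg (x : unitI) : 0 ≤ C.wid x :=
  sub_nonneg.mpr ((C.fibBot_le x).trans (C.le_fibTop x))

lemma dist_le_wid {x z : unitI} (hz : C.ψ z = C.ψ x) : dist z x ≤ C.wid x := by
  have h1 := C.mem_le_fibTop hz
  have h2 := C.fibBot_le_mem hz
  have h3 := C.le_fibTop x
  have h4 := C.fibBot_le x
  rw [unitI_coe_le_coe] at h1 h2 h3 h4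
  rw [unitI_dist, wid, abs_le]
  constructor <;> linarith

/-- from a point on a thin fiber, there is a nearby `sig`-point -/
lemma near_periodic (z : unitI) (δ : ℝ) (hδ : 0 < δ) (hwid : C.wid z < δ/2) :
    ∃ q ∈ Function.periodicPts C.g, dist z (C.sig q) < δ := by
  rcases le_or_gt δ 1 with hδ1 | hδ1
  · have hzT : z ≤ C.fibTop z := C.le_fibTop z
    have hBz : C.fibBot z ≤ z := C.fibBot_le z
    rcases le_or_gt ((C.fibTop z).1 + δ/2) 1 with hc | hc
    · set P : unitI := ⟨(C.fibTop z).1 + δ/2, ⟨by have := (C.fibTop z).2.1; linarith, hc⟩⟩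
        with hP
      have hTP : C.fibTop z < P := by
        rw [unitI_coe_lt_coe, hP]
        simp only
        linarith
      have hψTP : C.ψ z < C.ψ P := C.fibTop_lt hTP
      have hψTP' : C.ψ (C.fibTop z) < C.ψ P := by rwa [C.fibTop_mem z]
      obtain ⟨q, hq, hq1, hq2⟩ := C.exists_sig_between hψTP'
      refine ⟨q, hq, ?_⟩
      rw [unitI_dist]
      rw [unitI_coe_lt_coe] at hq1 hq2
      have h5 : (C.sig q).1 < (C.fibTop z).1 + δ/2 := hq2
      rw [unitI_coe_le_coe] at hzT hBz
      rw [wid] at hwid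
      rw [abs_lt]
      constructor <;> linarith
    · have hBpos : (1:ℝ) - δ < (C.fibBot z).1 := by
        rw [wid] at hwid
        have := (C.fibTop z).2.2
        linarith
      set η : ℝ := min (δ/2) (C.fibBot z).1 with hη
      have hηpos : 0 < η := lt_min (by linarith) (by linarith)
      have hηB : η ≤ (C.fibBot z).1 := min_le_right _ _
      set P : unitI := ⟨(C.fibBot z).1 - η, ⟨by linarith,
        by have := (C.fibBot z).2.2; linarith⟩⟩ with hP
      have hPB : P < C.fibBot z := by
        rw [unitI_coe_lt_coe, hP]
        simp only
        linarith
      have hψPB : C.ψ P < C.ψ z := C.lt_fibBot hPB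
      have hψPB' : C.ψ P < C.ψ (C.fibBot z) := by rwa [← C.fibBot_mem z] at hψPB
      obtain ⟨q, hq, hq1, hq2⟩ := C.exists_sig_between hψPB'
      refine ⟨q, hq, ?_⟩
      rw [unitI_dist]
      rw [unitI_coe_lt_coe] at hq1 hq2
      have h5 : (C.fibBot z).1 - η < (C.sig q).1 := hq1
      have h6 : η ≤ δ/2 := min_le_left _ _
      rw [unitI_coe_le_coe] at hzT hBz
      rw [wid] at hwid
      rw [abs_lt]
      constructor <;> linarith
  · obtain ⟨q, hq⟩ := C.hgdense.nonempty
    refine ⟨q, hq, ?_⟩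
    rw [unitI_dist]
    have h1 := z.2.1; have h2 := z.2.2
    have h3 := (C.sig q).2.1; have h4 := (C.sig q).2.2
    rw [abs_lt]
    constructor <;> linarith

end Ctx

end CRAux

end AUX2
noncomputable section AUX3

namespace CRAux

lemma unitI_volume_aux : MeasureTheory.volume (Set.Icc (0:ℝ) 1) = 1 := by
  rw [Real.volume_Icc]; norm_num

/-- uniform continuity on the compact interval -/
lemma unif {f : unitI → unitI} (hfc : Continuous f) {ε : ℝ} (hε : 0 < ε) :
    ∃ δ > 0, ∀ x y : unitI, dist x y < δ → dist (f x) (f y) < ε := by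
  have := CompactSpace.uniformContinuous_of_continuous hfc
  rw [Metric.uniformContinuous_iff] at this
  exact this ε hε

namespace Ctx

variable (C : Ctx)

/-- the real trace of a fiber -/
def realFib (z : unitI) : Set ℝ := Subtype.val '' (C.ψ ⁻¹' {C.ψ z})

lemma realFib_meas (z : unitI) : MeasurableSet (C.realFib z) :=
  (((C.fiber_closed z).isCompact.image continuous_subtype_val).isClosed).measurableSet

lemma realFib_Icc (z : unitI) : Set.Icc (C.fibBot z).1 (C.fibTop z).1 ⊆ C.realFib z := by
  intro t ht
  have h0 : (0:ℝ) ≤ t := le_trans (C.fibBot z).2.1 ht.1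
  have h1 : t ≤ 1 := le_trans ht.2 (C.fibTop z).2.2
  refine ⟨⟨t, h0, h1⟩, ?_, rfl⟩
  have hab : C.ψ (C.fibBot z) = C.ψ (C.fibTop z) := by
    rw [C.fibBot_mem, C.fibTop_mem]
  have h2 : C.ψ (⟨t, h0, h1⟩ : unitI) = C.ψ (C.fibBot z) :=
    C.fiber_between hab (by rw [unitI_coe_le_coe]; exact ht.1)
      (by rw [unitI_coe_le_coe]; exact ht.2)
  refine Set.mem_preimage.mpr ?_
  rw [Set.mem_singleton_iff, h2, C.fibBot_mem]

lemma realFib_vol (z : unitI) : ENNReal.ofReal (C.wid z) ≤ MeasureTheory.volume (C.realFib z) := by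
  calc ENNReal.ofReal (C.wid z)
      = MeasureTheory.volume (Set.Icc (C.fibBot z).1 (C.fibTop z).1) := by
        rw [Real.volume_Icc, wid]
    _ ≤ _ := MeasureTheory.measure_mono (C.realFib_Icc z)

lemma realFib_subset (z : unitI) : C.realFib z ⊆ Set.Icc (0:ℝ) 1 := by
  rintro t ⟨y, _, rfl⟩
  exact y.2

lemma realFib_disjoint {z w : unitI} (h : C.ψ z ≠ C.ψ w) :
    Disjoint (C.realFib z) (C.realFib w) := by
  rw [Set.disjoint_left]
  rintro t ⟨y, hy, rfl⟩ ⟨y', hy', hval⟩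
  apply h
  have : y' = y := Subtype.ext hval
  rw [← hy, ← hy', this]

/-- among infinitely many distinct fibers, some (with index ≥ 1) is thin -/
lemma thinout (x : ℕ → unitI) (hinj : ∀ i j, C.ψ (x i) = C.ψ (x j) → i = j)
    {δ : ℝ} (hδ : 0 < δ) : ∃ k, 1 ≤ k ∧ C.wid (x k) < δ := by
  by_contra hcon
  push_neg at hcon
  set N := Nat.ceil (1/δ) + 1 with hN
  set t := Finset.Icc 1 N with ht
  have hcard : t.card = N := by rw [ht, Nat.card_Icc]; omega
  have hdisj : ∀ i ∈ t, ∀ j ∈ t, i ≠ j →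
      Disjoint (C.realFib (x i)) (C.realFib (x j)) := by
    intro i _ j _ hij
    apply C.realFib_disjoint
    intro h
    exact hij (hinj i j h)
  have hsum : ∑ k ∈ t, MeasureTheory.volume (C.realFib (x k)) ≤ 1 := by
    rw [← MeasureTheory.measure_biUnion_finset (fun i hi j hj hij => hdisj i hi j hj hij)
      (fun k _ => C.realFib_meas (x k))]
    calc MeasureTheory.volume (⋃ k ∈ t, C.realFib (x k))
        ≤ MeasureTheory.volume (Set.Icc (0:ℝ) 1) := by
          apply MeasureTheory.measure_mono
          intro z hz
          simp only [Set.mem_iUnion] at hz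
          obtain ⟨k, _, hk⟩ := hz
          exact C.realFib_subset (x k) hk
      _ = 1 := unitI_volume_aux
  have hlow : ∀ k ∈ t, ENNReal.ofReal δ ≤ MeasureTheory.volume (C.realFib (x k)) := by
    intro k hk
    rw [ht, Finset.mem_Icc] at hk
    calc ENNReal.ofReal δ ≤ ENNReal.ofReal (C.wid (x k)) :=
          ENNReal.ofReal_le_ofReal (hcon k hk.1)
      _ ≤ _ := C.realFib_vol (x k)
  have hbig : (N : ENNReal) * ENNReal.ofReal δ ≤ 1 := by
    calc (N : ENNReal) * ENNReal.ofReal δ = t.card • ENNReal.ofReal δ := by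
          rw [hcard, nsmul_eq_mul]
      _ ≤ ∑ k ∈ t, MeasureTheory.volume (C.realFib (x k)) :=
          Finset.card_nsmul_le_sum t _ _ hlow
      _ ≤ 1 := hsum
  have hreal : (N : ℝ) * δ ≤ 1 := by
    have h1 : ENNReal.ofReal ((N : ℝ) * δ) ≤ ENNReal.ofReal 1 := by
      rw [ENNReal.ofReal_mul (by positivity), ENNReal.ofReal_natCast, ENNReal.ofReal_one]
      exact hbig
    have h2 : (0:ℝ) ≤ (N : ℝ) * δ := by positivity
    exact (ENNReal.ofReal_le_ofReal_iff (by norm_num)).mp h1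
  have hNge : (1/δ) ≤ (Nat.ceil (1/δ) : ℝ) := Nat.le_ceil _
  have : (N : ℝ) = (Nat.ceil (1/δ) : ℝ) + 1 := by rw [hN]; push_cast; ring
  rw [this] at hreal
  have : ((1/δ) + 1) * δ ≤ 1 := by nlinarith
  rw [one_div] at this
  have hinv : δ⁻¹ * δ = 1 := inv_mul_cancel₀ (ne_of_gt hδ)
  nlinarith

/-- Stage 1: from any point one can reach (the fiber point of) some periodic point. -/
lemma stage1 {ε : ℝ} (hε : 0 < ε) (u : unitI) :
    ∃ q ∈ Function.periodicPts C.g, Reach C.f ε u (C.sig q) := by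
  obtain ⟨δ, hδ, hδf⟩ := unif C.hfc hε
  have reach_orbit : ∀ k, 1 ≤ k → Reach C.f ε u (C.f^[k] u) := by
    intro k hk
    have r1 : Reach C.f ε u (C.f u) := reach_single (by simpa using hε)
    have r2 := reach_iterate hε r1 (k - 1)
    rwa [← Function.iterate_succ_apply, Nat.succ_eq_add_one, Nat.sub_add_cancel hk] at r2
  by_cases hinj : ∀ i j, C.ψ (C.f^[i] u) = C.ψ (C.f^[j] u) → i = j
  · obtain ⟨k, hk1, hkw⟩ := C.thinout (fun i => C.f^[i] u) hinj (half_pos hδ)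
    obtain ⟨q, hq, hqd⟩ := C.near_periodic (C.f^[k] u) δ hδ (by linarith)
    refine ⟨q, hq, reach_trans (reach_orbit k hk1) ?_⟩
    exact reach_splice hε (hδf _ _ hqd) (C.sig_periodic hq)
  · push_neg at hinj
    obtain ⟨i, j, hψij, hij⟩ := hinj
    -- wlog i < j
    have key : ∀ i' j' : ℕ, i' < j' → C.ψ (C.f^[i'] u) = C.ψ (C.f^[j'] u) →
        ∃ q ∈ Function.periodicPts C.g, Reach C.f ε u (C.sig q) := by
      clear hψij hij
      intro i j hlt hψ
      have hper : C.ψ (C.f^[i] u) ∈ Function.periodicPts C.g := by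
        refine ⟨j - i, by omega, ?_⟩
        show C.g^[j-i] (C.ψ (C.f^[i] u)) = C.ψ (C.f^[i] u)
        conv_lhs => rw [C.semi_iter, ← Function.iterate_add_apply,
          show j - i + i = j from by omega, ← C.semi_iter]
        exact hψ.symm
      have hsig : C.f^[i] u = C.sig (C.ψ (C.f^[i] u)) := C.sig_unique hper rfl
      refine ⟨C.ψ (C.f^[i] u), hper, ?_⟩
      rcases Nat.eq_zero_or_pos i with hi0 | hi0
      · -- u itself is the sig point; go around its periodic orbit
        have hu : u = C.sig (C.ψ (C.f^[i] u)) := by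
          rw [← hsig, hi0]; simp
        obtain ⟨m, hm, hmp⟩ := C.sig_periodic hper
        rw [← hu] at hmp ⊢
        have r1 : Reach C.f ε u (C.f u) := reach_single (by simpa using hε)
        have r2 := reach_iterate hε r1 (m - 1)
        rwa [← Function.iterate_succ_apply, Nat.succ_eq_add_one, Nat.sub_add_cancel hm, hmp] at r2
      · rw [← hsig]
        exact reach_orbit i hi0
    rcases Nat.lt_or_ge i j with hlt | hge
    · exact key i j hlt hψij
    · have hlt : j < i := by omega
      exact key j i hlt hψij.symm

end Ctx

end CRAux

end AUX3
noncomputable section AUX4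

namespace CRAux

namespace Ctx

variable (C : Ctx)

lemma wid_eq_zero_of_periodic {z : unitI} (hz : C.ψ z ∈ Function.periodicPts C.g) :
    C.wid z = 0 := by
  have h1 : C.fibTop z = C.sig (C.ψ z) := C.sig_unique hz (C.fibTop_mem z)
  have h2 : C.fibBot z = C.sig (C.ψ z) := C.sig_unique hz (C.fibBot_mem z)
  rw [wid, h1, h2, sub_self]

lemma fat_not_periodic {a b : unitI} (hab : a < b) (hfab : C.ψ a = C.ψ b) :
    C.ψ a ∉ Function.periodicPts C.g := by
  intro hper
  have h1 : a = C.sig (C.ψ a) := C.sig_unique hper rfl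
  have h2 : b = C.sig (C.ψ a) := C.sig_unique hper hfab.symm
  rw [← h2] at h1
  exact absurd h1 (ne_of_lt hab)

/-- the forward orbit of a point eventually lies on a fiber of width `< δ`. -/
lemma forward_thin {a b : unitI} (hab : a < b) (hfab : C.ψ a = C.ψ b)
    {δ : ℝ} (hδ : 0 < δ) : ∃ K, 1 ≤ K ∧ C.wid (C.f^[K] a) < δ := by
  by_cases hinj : ∀ i j, C.ψ (C.f^[i] a) = C.ψ (C.f^[j] a) → i = j
  · exact C.thinout (fun i => C.f^[i] a) hinj hδ
  · push_neg at hinj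
    obtain ⟨i, j, hψij, hij⟩ := hinj
    have key : ∀ i' j' : ℕ, i' < j' → C.ψ (C.f^[i'] a) = C.ψ (C.f^[j'] a) →
        ∃ K, 1 ≤ K ∧ C.wid (C.f^[K] a) < δ := by
      clear hψij hij
      intro i j hlt hψ
      have hper : C.ψ (C.f^[i] a) ∈ Function.periodicPts C.g := by
        refine ⟨j - i, by omega, ?_⟩
        show C.g^[j-i] (C.ψ (C.f^[i] a)) = C.ψ (C.f^[i] a)
        conv_lhs => rw [C.semi_iter, ← Function.iterate_add_apply,
          show j - i + i = j from by omega, ← C.semi_iter]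
        exact hψ.symm
      rcases Nat.eq_zero_or_pos i with hi0 | hi0
      · rw [hi0] at hper
        simp only [Function.iterate_zero_apply] at hper
        exact absurd hper (C.fat_not_periodic hab hfab)
      · refine ⟨i, hi0, ?_⟩
        rw [C.wid_eq_zero_of_periodic hper]
        exact hδ
    rcases Nat.lt_or_ge i j with hlt | hge
    · exact key i j hlt hψij
    · exact key j i (by omega) hψij.symm

/-- Crossing lemma: if reachable `sig`-points accumulate from below on the bottom
endpoint `a` of a nondegenerate fiber `[a, b]`, then there are reachable `sig`-points
just above `b`. -/
lemma cross {ε δ : ℝ} (hε : 0 < ε) (hδ : 0 < δ)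
    (hδf : ∀ x y : unitI, dist x y < δ → dist (C.f x) (C.f y) < ε/4)
    {u a b w : unitI} (hab : a < b) (hfab : C.ψ a = C.ψ b)
    (hbmax : ∀ z, b < z → C.ψ b < C.ψ z)
    (hbw : b < w)
    (hin : ∀ γ, 0 < γ → ∃ q ∈ Function.periodicPts C.g,
      Reach C.f ε u (C.sig q) ∧ a.1 - γ < (C.sig q).1 ∧ C.sig q < a) :
    ∃ q ∈ Function.periodicPts C.g,
      Reach C.f ε u (C.sig q) ∧ b < C.sig q ∧ C.sig q < w := by
  have hε4 : (0:ℝ) < ε/4 := by linarith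
  -- a thin fiber along the forward orbit of the fat fiber
  obtain ⟨K, hK1, hKw⟩ := C.forward_thin hab hfab hδ
  -- the iterates of a and b are close
  have hAB : dist (C.f^[K] b) (C.f^[K] a) < δ := by
    have hsame : C.ψ (C.f^[K] b) = C.ψ (C.f^[K] a) := by
      rw [C.semi_iter, C.semi_iter, hfab]
    calc dist (C.f^[K] b) (C.f^[K] a) ≤ C.wid (C.f^[K] a) := C.dist_le_wid hsame
      _ < δ := hKw
  -- continuity of the (K+1)-st iterate at b
  have hcont : ContinuousAt (C.f^[K+1]) b := (C.hfc.iterate (K+1)).continuousAt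
  obtain ⟨ν, hν, hνf⟩ := Metric.continuousAt_iff.mp hcont (ε/4) hε4
  -- a periodic point just above b
  have hwb : (0:ℝ) < w.1 - b.1 := by
    rw [unitI_coe_lt_coe] at hbw; linarith
  set η : ℝ := min (ν/2) ((w.1 - b.1)/2) with hη
  have hηpos : 0 < η := lt_min (by linarith) (by linarith)
  have hP1 : b.1 + η ≤ 1 := by
    have h2 : η ≤ (w.1 - b.1)/2 := min_le_right _ _
    have := w.2.2
    linarith
  set P : unitI := ⟨b.1 + η, ⟨by have := b.2.1; linarith, hP1⟩⟩ with hPdef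
  have hbP : b < P := by rw [unitI_coe_lt_coe]; simp [hPdef]; linarith
  have hψbP : C.ψ b < C.ψ P := hbmax P hbP
  obtain ⟨q'', hq'', hq1, hq2⟩ := C.exists_sig_between hψbP
  have hq''b : dist (C.sig q'') b < ν := by
    rw [unitI_dist]
    rw [unitI_coe_lt_coe] at hq1 hq2
    have h2 : η ≤ ν/2 := min_le_left _ _
    have h3 : (C.sig q'').1 < b.1 + η := hq2
    rw [abs_lt]
    constructor <;> linarith
  have hq''w : C.sig q'' < w := by
    rw [unitI_coe_lt_coe] at hq2 ⊢
    have h2 : η ≤ (w.1 - b.1)/2 := min_le_right _ _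
    have h3 : (C.sig q'').1 < b.1 + η := hq2
    linarith
  -- entry point
  obtain ⟨q, hq, hqr, hqa1, hqa2⟩ := hin δ hδ
  have hqa : dist (C.sig q) a < δ := by
    rw [unitI_dist, abs_lt]
    rw [unitI_coe_lt_coe] at hqa2
    constructor <;> linarith
  -- build the chain
  have r2 : Reach C.f ε u (C.f a) := reach_append hqr (by
    have := hδf _ _ hqa
    linarith)
  have r3 : Reach C.f ε u (C.f^[K] a) := by
    have := reach_iterate hε r2 (K - 1)
    rwa [← Function.iterate_succ_apply, Nat.succ_eq_add_one, Nat.sub_add_cancel hK1] at this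
  have hjump : dist (C.f (C.f^[K] a)) (C.f^[K+1] (C.sig q'')) < ε := by
    have t1 : dist (C.f (C.f^[K] a)) (C.f (C.f^[K] b)) < ε/4 := hδf _ _ (by
      rw [dist_comm] at hAB; exact hAB)
    have t2 : dist (C.f^[K+1] (C.sig q'')) (C.f^[K+1] b) < ε/4 := hνf hq''b
    have t3 : C.f (C.f^[K] b) = C.f^[K+1] b := (Function.iterate_succ_apply' C.f K b).symm
    have t2' : dist (C.f (C.f^[K] b)) (C.f^[K+1] (C.sig q'')) < ε/4 := by
      rw [t3, dist_comm]
      exact t2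
    calc dist (C.f (C.f^[K] a)) (C.f^[K+1] (C.sig q''))
        ≤ dist (C.f (C.f^[K] a)) (C.f (C.f^[K] b)) + dist (C.f (C.f^[K] b)) (C.f^[K+1] (C.sig q'')) :=
          dist_triangle _ _ _
      _ < ε/4 + ε/4 := add_lt_add t1 t2'
      _ < ε := by linarith
  have r4 : Reach C.f ε u (C.f^[K+1] (C.sig q'')) := reach_append r3 hjump
  -- go around the periodic orbit of sig q'' to land exactly on it
  obtain ⟨m, hm, hmq⟩ := C.sig_periodic hq''
  have hiter : C.f^[m * (K+2) - (K+1)] (C.f^[K+1] (C.sig q'')) = C.sig q'' := by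
    rw [← Function.iterate_add_apply, show m * (K+2) - (K+1) + (K+1) = m * (K+2) from by
      have : K + 2 ≤ m * (K + 2) := Nat.le_mul_of_pos_left _ hm
      omega]
    exact (hmq.mul_const (K+2))
  have r5 := reach_iterate hε r4 (m * (K+2) - (K+1))
  rw [hiter] at r5
  exact ⟨q'', hq'', r5, hq1, hq''w⟩

end Ctx

end CRAux

end AUX4
noncomputable section AUX5

namespace CRAux

namespace Ctx

variable (C : Ctx)

/-- Stage 2, rightward: if some periodic fiber point is reachable, then every
periodic fiber point to its right is reachable. -/
lemma stage2R {ε : ℝ} (hε : 0 < ε) (u : unitI)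
    {q0 : unitI} (hq0 : q0 ∈ Function.periodicPts C.g) (hr0 : Reach C.f ε u (C.sig q0))
    {qs : unitI} (hqs : qs ∈ Function.periodicPts C.g) (hle : C.sig q0 ≤ C.sig qs) :
    Reach C.f ε u (C.sig qs) := by
  have hε4 : (0:ℝ) < ε/4 := by linarith
  obtain ⟨δ, hδ, hδf⟩ := unif C.hfc hε4
  -- the splice move
  have hM2 : ∀ q1 q2 : unitI, q1 ∈ Function.periodicPts C.g → q2 ∈ Function.periodicPts C.g →
      Reach C.f ε u (C.sig q1) → dist (C.sig q1) (C.sig q2) < δ → Reach C.f ε u (C.sig q2) := by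
    intro q1 q2 h1 h2 hr hd
    refine reach_trans hr (reach_splice hε ?_ (C.sig_periodic h2))
    have := hδf _ _ hd
    linarith
  set S : Set unitI :=
    {t | ∃ q ∈ Function.periodicPts C.g, C.sig q = t ∧ Reach C.f ε u (C.sig q)} with hS
  set A : Set unitI := closure S ∩ Set.Iic (C.sig qs) with hA
  have hAclosed : IsClosed A := isClosed_closure.inter isClosed_Iic
  have hAne : A.Nonempty := ⟨C.sig q0, subset_closure ⟨q0, hq0, rfl, hr0⟩, hle⟩
  set c : unitI := sSup A with hc
  have hcA : c ∈ A := @IsCompact.sSup_mem unitI (CompleteLinearOrder.toConditionallyCompleteLinearOrderBot (α := unitI)).toConditionallyCompleteLinearOrder _ _ _ hAclosed.isCompact hAne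
  have hc1 : c ∈ closure S := hcA.1
  have hc2 : c ≤ C.sig qs := hcA.2
  have hAbdd : BddAbove A := ⟨⟨1, by norm_num⟩, fun y _ => y.2.2⟩
  have hub : ∀ t ∈ A, t ≤ c := fun t ht => le_sSup ht
  have hSnear : ∀ γ : ℝ, 0 < γ → ∃ q ∈ Function.periodicPts C.g,
      Reach C.f ε u (C.sig q) ∧ dist c (C.sig q) < γ := by
    intro γ hγ
    obtain ⟨t, ht, htd⟩ := Metric.mem_closure_iff.mp hc1 γ hγ
    obtain ⟨q, hq, hqt, hqr⟩ := ht
    exact ⟨q, hq, hqr, by rwa [hqt]⟩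
  by_cases hceq : c = C.sig qs
  · obtain ⟨q1, hq1, hq1r, hq1d⟩ := hSnear δ hδ
    apply hM2 q1 qs hq1 hqs hq1r
    rw [dist_comm, ← hceq]
    exact hq1d
  have hclt : c < C.sig qs := lt_of_le_of_ne hc2 hceq
  have hcltR : c.1 < (C.sig qs).1 := hclt
  set mR : ℝ := min (c.1 + δ/2) (C.sig qs).1 with hmR
  have hmR0 : 0 ≤ mR := le_min (by have := c.2.1; linarith) (C.sig qs).2.1
  have hmR1 : mR ≤ 1 := le_trans (min_le_right _ _) (C.sig qs).2.2
  have hcmR : c.1 < mR := lt_min (by linarith) hcltR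
  have hmqsR : mR ≤ (C.sig qs).1 := min_le_right _ _
  have hmRδ : mR - c.1 ≤ δ/2 := by
    have := min_le_left (c.1 + δ/2) (C.sig qs).1
    rw [← hmR] at this
    linarith
  -- Claim A: no periodic fiber point in (c, m]
  have claimA : ∀ q ∈ Function.periodicPts C.g,
      ¬ (c.1 < (C.sig q).1 ∧ (C.sig q).1 ≤ mR) := by
    rintro q hq ⟨h1, h2⟩
    obtain ⟨q1, hq1, hq1r, hq1d⟩ := hSnear (δ/2) (by linarith)
    have hd : dist (C.sig q1) (C.sig q) < δ := by
      have e1 : dist (C.sig q1) (C.sig q) ≤ dist (C.sig q1) c + dist c (C.sig q) :=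
        dist_triangle _ _ _
      have e2 : dist c (C.sig q) ≤ δ/2 := by
        rw [unitI_dist, abs_le]
        constructor <;> linarith
      rw [dist_comm] at hq1d
      linarith
    have hreach := hM2 q1 q hq1 hq hq1r hd
    have hmem : C.sig q ∈ A := by
      refine ⟨subset_closure ⟨q, hq, rfl, hreach⟩, ?_⟩
      rw [Set.mem_Iic, unitI_coe_le_coe]
      linarith
    have := hub _ hmem
    rw [unitI_coe_le_coe] at this
    linarith
  -- the two test points
  have ht1mem : (0:ℝ) ≤ (3*c.1 + mR)/4 ∧ (3*c.1 + mR)/4 ≤ 1 := by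
    constructor
    · have := c.2.1; linarith
    · have := c.2.2; linarith
  have ht2mem : (0:ℝ) ≤ (c.1 + 3*mR)/4 ∧ (c.1 + 3*mR)/4 ≤ 1 := by
    constructor
    · have := c.2.1; linarith
    · have := c.2.2; linarith
  set t1 : unitI := ⟨(3*c.1 + mR)/4, ht1mem⟩ with ht1
  set t2 : unitI := ⟨(c.1 + 3*mR)/4, ht2mem⟩ with ht2
  have ht1R : t1.1 = (3*c.1 + mR)/4 := rfl
  have ht2R : t2.1 = (c.1 + 3*mR)/4 := rfl
  have hct1 : c.1 < t1.1 := by rw [ht1R]; linarith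
  have ht1t2 : t1.1 < t2.1 := by rw [ht1R, ht2R]; linarith
  have ht2m : t2.1 < mR := by rw [ht2R]; linarith
  -- the two test points lie on the same fiber
  have hψt : C.ψ t1 = C.ψ t2 := by
    by_contra hne
    have hlt : C.ψ t1 < C.ψ t2 :=
      lt_of_le_of_ne (C.hmono (by rw [unitI_coe_le_coe]; exact ht1t2.le)) hne
    obtain ⟨q, hq, hg1, hg2⟩ := C.exists_sig_between hlt
    rw [unitI_coe_lt_coe] at hg1 hg2
    exact claimA q hq ⟨by linarith, by linarith⟩
  set a : unitI := C.fibBot t1 with ha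
  set b : unitI := C.fibTop t1 with hb
  have hat1 : a.1 ≤ t1.1 := C.fibBot_le t1
  have ht2b : t2.1 ≤ b.1 := C.mem_le_fibTop hψt.symm
  have hab : a < b := by rw [unitI_coe_lt_coe]; linarith
  have hfab : C.ψ a = C.ψ b := by rw [ha, hb, C.fibBot_mem, C.fibTop_mem]
  -- no sig point inside the fiber [a,b]
  have hIntFree : ∀ q ∈ Function.periodicPts C.g, a ≤ C.sig q → C.sig q ≤ b → False := by
    intro q hq h1 h2
    have hsq : C.ψ (C.sig q) = C.ψ a := C.fiber_between hfab h1 h2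
    have hq' : q = C.ψ t1 := by
      rw [← C.sig_spec hq, hsq, ha, C.fibBot_mem]
    have e1 : t1 = C.sig q := C.sig_unique hq hq'.symm
    have e2 : t2 = C.sig q := C.sig_unique hq (by rw [hψt] at hq'; exact hq'.symm)
    rw [← e2] at e1
    have : t1.1 = t2.1 := by rw [e1]
    rw [ht1R, ht2R] at this
    have : c.1 = mR := by linarith
    linarith
  -- a ≤ c
  have hac : a.1 ≤ c.1 := by
    by_contra hca
    push_neg at hca
    have hca' : c < C.fibBot t1 := by rw [unitI_coe_lt_coe, ← ha]; exact hca
    have hψca : C.ψ c < C.ψ a := by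
      have h2 := C.lt_fibBot hca'
      rwa [ha, C.fibBot_mem]
    obtain ⟨q, hq, hg1, hg2⟩ := C.exists_sig_between hψca
    rw [unitI_coe_lt_coe] at hg1 hg2
    refine claimA q hq ⟨hg1, ?_⟩
    have : (C.sig q).1 < a.1 := hg2
    linarith
  -- c = a
  have hca : c.1 ≤ a.1 := by
    by_contra h
    push_neg at h
    have hcb : c.1 < b.1 := by linarith
    have hγ : 0 < min (c.1 - a.1) (b.1 - c.1) := lt_min (by linarith) (by linarith)
    obtain ⟨q1, hq1, hq1r, hq1d⟩ := hSnear _ hγ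
    rw [unitI_dist] at hq1d
    have habs := abs_lt.mp hq1d
    have l1 := min_le_left (c.1 - a.1) (b.1 - c.1)
    have l2 := min_le_right (c.1 - a.1) (b.1 - c.1)
    apply hIntFree q1 hq1
    · rw [unitI_coe_le_coe]; linarith
    · rw [unitI_coe_le_coe]; linarith
  have hceqa : c.1 = a.1 := le_antisymm hca hac
  -- sig qs lies strictly above b
  have hqsb : b < C.sig qs := by
    rw [unitI_coe_lt_coe]
    by_contra h
    push_neg at h
    apply hIntFree qs hqs
    · rw [unitI_coe_le_coe]; linarith
    · rw [unitI_coe_le_coe]; linarith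
  -- the entry hypothesis for the crossing lemma
  have hin : ∀ γ, 0 < γ → ∃ q ∈ Function.periodicPts C.g,
      Reach C.f ε u (C.sig q) ∧ a.1 - γ < (C.sig q).1 ∧ C.sig q < a := by
    intro γ hγ
    have hγ' : 0 < min γ (mR - c.1) := lt_min hγ (by linarith)
    obtain ⟨q1, hq1, hq1r, hq1d⟩ := hSnear _ hγ'
    rw [unitI_dist] at hq1d
    have habs := abs_lt.mp hq1d
    have l1 := min_le_left γ (mR - c.1)
    have l2 := min_le_right γ (mR - c.1)
    refine ⟨q1, hq1, hq1r, by linarith, ?_⟩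
    rw [unitI_coe_lt_coe]
    -- sig q1 < a : it cannot be ≥ a
    by_contra hge
    push_neg at hge
    rcases eq_or_lt_of_le hge with heq | hlt'
    · -- a = sig q1 : then ψ a is periodic, contradicting the fat fiber
      have : a = C.sig q1 := unitI_ext heq
      apply C.fat_not_periodic hab hfab
      rw [this, C.sig_spec hq1]
      exact hq1
    · exact claimA q1 hq1 ⟨by linarith, by linarith⟩
  -- crossing gives a contradiction with c being an upper bound
  have hbmax : ∀ z, b < z → C.ψ b < C.ψ z := by
    intro z hz
    have hz' : C.fibTop t1 < z := by rw [← hb]; exact hz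
    have h2 := C.fibTop_lt hz'
    rwa [hb, C.fibTop_mem]
  obtain ⟨q'', hq'', hr'', hb1, hb2⟩ := C.cross hε hδ hδf hab hfab hbmax hqsb hin
  exfalso
  have hmem : C.sig q'' ∈ A := ⟨subset_closure ⟨q'', hq'', rfl, hr''⟩, le_of_lt hb2⟩
  have h2 := hub _ hmem
  rw [unitI_coe_le_coe] at h2
  rw [unitI_coe_lt_coe] at hb1
  linarith

end Ctx

end CRAux

end AUX5
noncomputable section AUX6

namespace CRAux

lemma flip_comp_eq (f : unitI → unitI) : flip ∘ (flip ∘ f ∘ flip) ∘ flip = f := by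
  funext x
  simp only [Function.comp_apply, flip_flip]

lemma flip_reach' {f : unitI → unitI} {ε : ℝ} {u v : unitI}
    (h : Reach f ε u v) : Reach (flip ∘ f ∘ flip) ε (flip u) (flip v) := by
  apply flip_reach
  rwa [flip_comp_eq, flip_flip, flip_flip]

lemma unflip_periodicPts {g : unitI → unitI} {q : unitI}
    (hq : q ∈ Function.periodicPts (flip ∘ g ∘ flip)) :
    flip q ∈ Function.periodicPts g := by
  have := flip_periodicPts (h := flip ∘ g ∘ flip) hq
  rwa [flip_comp_eq] at this

namespace Ctx

/-- The flipped context. -/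
def flipCtx (C : Ctx) : Ctx where
  f := flip ∘ C.f ∘ flip
  g := flip ∘ C.g ∘ flip
  ψ := flip ∘ C.ψ ∘ flip
  hfc := flip_continuous.comp (C.hfc.comp flip_continuous)
  hfsurj := flip_surjective.comp (C.hfsurj.comp flip_surjective)
  hψc := flip_continuous.comp (C.hψc.comp flip_continuous)
  hmono := by
    intro x y hxy
    simp only [Function.comp_apply]
    exact flip_le (C.hmono (flip_le hxy))
  hgdense := Dense.mono (fun t ht => by
    obtain ⟨q, hq, rfl⟩ := ht
    exact flip_periodicPts hq) (flip_dense C.hgdense)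
  hsemi := by
    intro x
    simp only [Function.comp_apply, flip_flip]
    rw [C.hsemi]
  hfib := by
    intro p hp
    have hp' : flip p ∈ Function.periodicPts C.g := unflip_periodicPts hp
    refine ⟨flip (C.sig (flip p)), ?_, ?_⟩
    · simp only [Function.comp_apply, flip_flip]
      rw [C.sig_spec hp', flip_flip]
    · intro y hy
      simp only [Function.comp_apply] at hy
      have h2 : C.ψ (flip y) = flip p := by
        have := congrArg flip hy
        rwa [flip_flip] at this
      have h3 : flip y = C.sig (flip p) := C.sig_unique hp' h2
      have := congrArg flip h3
      rwa [flip_flip] at this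

variable (C : Ctx)

lemma flipCtx_sig {q : unitI} (hq : q ∈ Function.periodicPts C.flipCtx.g) :
    C.flipCtx.sig q = flip (C.sig (flip q)) := by
  have hq' : flip q ∈ Function.periodicPts C.g := unflip_periodicPts hq
  refine (C.flipCtx.sig_unique hq ?_).symm
  show C.flipCtx.ψ _ = q
  show (flip ∘ C.ψ ∘ flip) _ = q
  simp only [Function.comp_apply, flip_flip]
  rw [C.sig_spec hq', flip_flip]

/-- Stage 2, leftward (by flipping). -/
lemma stage2L {ε : ℝ} (hε : 0 < ε) (u : unitI)
    {q0 : unitI} (hq0 : q0 ∈ Function.periodicPts C.g) (hr0 : Reach C.f ε u (C.sig q0))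
    {qs : unitI} (hqs : qs ∈ Function.periodicPts C.g) (hle : C.sig qs ≤ C.sig q0) :
    Reach C.f ε u (C.sig qs) := by
  have hq0' : flip q0 ∈ Function.periodicPts C.flipCtx.g := by
    show flip q0 ∈ Function.periodicPts (flip ∘ C.g ∘ flip)
    exact flip_periodicPts hq0
  have hqs' : flip qs ∈ Function.periodicPts C.flipCtx.g := by
    show flip qs ∈ Function.periodicPts (flip ∘ C.g ∘ flip)
    exact flip_periodicPts hqs
  have e0 : C.flipCtx.sig (flip q0) = flip (C.sig q0) := by
    rw [C.flipCtx_sig hq0', flip_flip]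
  have es : C.flipCtx.sig (flip qs) = flip (C.sig qs) := by
    rw [C.flipCtx_sig hqs', flip_flip]
  have hr0' : Reach C.flipCtx.f ε (flip u) (C.flipCtx.sig (flip q0)) := by
    rw [e0]
    exact flip_reach' hr0
  have hle' : C.flipCtx.sig (flip q0) ≤ C.flipCtx.sig (flip qs) := by
    rw [e0, es]
    exact flip_le hle
  have h := C.flipCtx.stage2R hε (flip u) hq0' hr0' hqs' hle'
  rw [es] at h
  apply flip_reach
  show Reach (flip ∘ C.f ∘ flip) ε (flip u) (flip (C.sig qs))
  exact h

/-- Stage 2: every periodic fiber point is reachable from everywhere. -/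
lemma stage2 {ε : ℝ} (hε : 0 < ε) (u : unitI)
    {qs : unitI} (hqs : qs ∈ Function.periodicPts C.g) :
    Reach C.f ε u (C.sig qs) := by
  obtain ⟨q0, hq0, hr0⟩ := C.stage1 hε u
  rcases le_total (C.sig q0) (C.sig qs) with h | h
  · exact C.stage2R hε u hq0 hr0 hqs h
  · exact C.stage2L hε u hq0 hr0 hqs h

/-- Chain transitivity: any point can be reached from any point by `ε`-chains. -/
lemma reach_all {ε : ℝ} (hε : 0 < ε) (u v : unitI) : Reach C.f ε u v := by
  have hε2 : (0:ℝ) < ε/2 := by linarith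
  obtain ⟨δ, hδ, hδf⟩ := unif C.hfc hε2
  -- backward orbit of v
  let w : ℕ → unitI := fun k => Nat.rec v (fun _ prev => Classical.choose (C.hfsurj prev)) k
  have hw0 : w 0 = v := rfl
  have hwsucc : ∀ k, C.f (w (k+1)) = w k := fun k => Classical.choose_spec (C.hfsurj (w k))
  have hforward : ∀ k, C.f^[k] (w k) = v := by
    intro k
    induction k with
    | zero => rfl
    | succ k ih =>
      rw [Function.iterate_succ_apply, hwsucc k, ih]
  by_cases hinj : ∀ i j, C.ψ (w i) = C.ψ (w j) → i = j
  · obtain ⟨k, hk1, hkw⟩ := C.thinout w hinj (half_pos hδ)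
    obtain ⟨qy, hqy, hqyd⟩ := C.near_periodic (w k) δ hδ (by linarith)
    have h1 : Reach C.f ε u (C.sig qy) := C.stage2 hε u hqy
    have hwk : C.f (w k) = w (k-1) := by
      have := hwsucc (k-1)
      rwa [Nat.sub_add_cancel hk1] at this
    have hjump : dist (C.f (C.sig qy)) (w (k-1)) < ε := by
      rw [← hwk]
      have hd : dist (C.sig qy) (w k) < δ := by rwa [dist_comm] at hqyd
      have := hδf _ _ hd
      linarith
    have h2 : Reach C.f ε u (w (k-1)) := reach_append h1 hjump
    have h3 := reach_iterate hε h2 (k-1)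
    rwa [hforward (k-1), ← hw0] at h3
  · push_neg at hinj
    obtain ⟨i, j, hψij, hij⟩ := hinj
    have hgw : ∀ d k, d ≤ k → C.g^[d] (C.ψ (w k)) = C.ψ (w (k - d)) := by
      intro d
      induction d with
      | zero => intro k _; simp
      | succ d ih =>
        intro k hdk
        have hk1 : 1 ≤ k := by omega
        have e0 : C.f (w k) = w (k-1) := by
          have := hwsucc (k-1)
          rwa [Nat.sub_add_cancel hk1] at this
        have e1 : C.g (C.ψ (w k)) = C.ψ (w (k-1)) := by
          rw [← C.hsemi, e0]
        rw [Function.iterate_succ_apply, e1, ih (k-1) (by omega),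
          show k - 1 - d = k - (d+1) from by omega]
    have key : ∀ i' j' : ℕ, i' < j' → C.ψ (w i') = C.ψ (w j') → Reach C.f ε u v := by
      clear hψij hij
      intro i j hlt hψ
      have hper : C.ψ (w j) ∈ Function.periodicPts C.g := by
        refine ⟨j - i, by omega, ?_⟩
        show C.g^[j-i] (C.ψ (w j)) = C.ψ (w j)
        rw [hgw (j-i) j (by omega), show j - (j - i) = i from by omega]
        exact hψ
      have hsig : w j = C.sig (C.ψ (w j)) := C.sig_unique hper rfl
      have h1 : Reach C.f ε u (C.sig (C.ψ (w j))) := C.stage2 hε u hper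
      rw [← hsig] at h1
      have h2 := reach_iterate hε h1 j
      rwa [hforward j] at h2
    rcases Nat.lt_or_ge i j with hlt | hge
    · exact key i j hlt hψij
    · exact key j i (by omega) hψij.symm

end Ctx

end CRAux

end AUX6
noncomputable section AUX7

namespace CRAux

lemma abs_min_sub_min_le_abs' (a b c : ℝ) : |min a c - min b c| ≤ |a - b| := by
  have e : ∀ x y : ℝ, min x y = -max (-x) (-y) := by
    intro x y
    rcases le_total x y with h | h
    · rw [min_eq_left h, max_eq_left (by linarith)]; ring
    · rw [min_eq_right h, max_eq_right (by linarith)]; ring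
  rw [e a c, e b c, show -max (-a) (-c) - -max (-b) (-c) = -(max (-a) (-c) - max (-b) (-c)) from by
    ring, abs_neg]
  calc |max (-a) (-c) - max (-b) (-c)| ≤ |(-a) - (-b)| := abs_max_sub_max_le_abs _ _ _
    _ = |a - b| := by rw [show (-a) - (-b) = -(a - b) from by ring, abs_neg]

/-- Data for the piecewise-linear approximation. -/
structure PLData where
  f : C(unitI, unitI)
  lam : ℝ
  n : ℕ
  hlam0 : 0 < lam
  hlam8 : lam ≤ 1/8
  hn0 : 0 < n
  hsmall : (1:ℝ)/n ≤ lam/20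
  hmod : ∀ x y : unitI, dist x y ≤ (1:ℝ)/n → dist (f x) (f y) ≤ lam/10

namespace PLData

variable (P : PLData)

lemma hnR : (0:ℝ) < P.n := by exact_mod_cast P.hn0

lemma hn_inv_pos : (0:ℝ) < 1/P.n := div_pos one_pos P.hnR

def ptR (i : ℕ) : ℝ := min ((i:ℝ)/P.n) 1

lemma ptR_mem (i : ℕ) : 0 ≤ P.ptR i ∧ P.ptR i ≤ 1 := by
  constructor
  · apply le_min
    · positivity
    · norm_num
  · exact min_le_right _ _

def pt (i : ℕ) : unitI := ⟨P.ptR i, P.ptR_mem i⟩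

lemma ptR_eq {i : ℕ} (hi : i ≤ P.n) : P.ptR i = (i:ℝ)/P.n := by
  rw [ptR, min_eq_left]
  rw [div_le_one P.hnR]
  exact_mod_cast hi

def base (i : ℕ) : ℝ := max P.lam (min (1 - P.lam) ((P.f (P.pt i)).1))

lemma base_mem (i : ℕ) : P.lam ≤ P.base i ∧ P.base i ≤ 1 - P.lam := by
  constructor
  · exact le_max_left _ _
  · rw [base, max_le_iff]
    have := P.hlam8
    constructor
    · linarith
    · exact min_le_left _ _

lemma base_close (i : ℕ) : |P.base i - (P.f (P.pt i)).1| ≤ P.lam := by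
  have h0 := (P.f (P.pt i)).2.1
  have h1 := (P.f (P.pt i)).2.2
  have hl := P.hlam0
  have hl8 := P.hlam8
  rw [base, abs_le]
  rcases le_total ((P.f (P.pt i)).1) (1 - P.lam) with h | h
  · rw [min_eq_right h]
    rcases le_total P.lam ((P.f (P.pt i)).1) with h2 | h2
    · rw [max_eq_right h2]; constructor <;> linarith
    · rw [max_eq_left h2]; constructor <;> linarith
  · rw [min_eq_left h, max_eq_right (by linarith)]
    constructor <;> linarith

lemma base_lip (i j : ℕ) : |P.base i - P.base j| ≤ |(P.f (P.pt i)).1 - (P.f (P.pt j)).1| := by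
  rw [base, base]
  calc |max P.lam (min (1 - P.lam) ((P.f (P.pt i)).1)) -
        max P.lam (min (1 - P.lam) ((P.f (P.pt j)).1))|
      = |max (min (1 - P.lam) ((P.f (P.pt i)).1)) P.lam -
        max (min (1 - P.lam) ((P.f (P.pt j)).1)) P.lam| := by rw [max_comm, max_comm P.lam]
    _ ≤ |min (1 - P.lam) ((P.f (P.pt i)).1) - min (1 - P.lam) ((P.f (P.pt j)).1)| :=
        abs_max_sub_max_le_abs _ _ _
    _ = |min ((P.f (P.pt i)).1) (1 - P.lam) - min ((P.f (P.pt j)).1) (1 - P.lam)| := by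
        rw [min_comm, min_comm (1 - P.lam)]
    _ ≤ _ := abs_min_sub_min_le_abs' _ _ _

lemma pt_adj (i : ℕ) : dist (P.pt (i+1)) (P.pt i) ≤ 1/P.n := by
  rw [unitI_dist]
  show |P.ptR (i+1) - P.ptR i| ≤ 1/P.n
  rw [ptR, ptR]
  calc |min (((i+1:ℕ):ℝ)/P.n) 1 - min (((i:ℕ):ℝ)/P.n) 1|
      ≤ |((i+1:ℕ):ℝ)/P.n - ((i:ℕ):ℝ)/P.n| := abs_min_sub_min_le_abs' _ _ _
    _ = 1/P.n := by
        push_cast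
        rw [show ((i:ℝ)+1)/P.n - (i:ℝ)/P.n = 1/P.n from by ring]
        rw [abs_of_pos P.hn_inv_pos]

lemma fvar (i : ℕ) : |(P.f (P.pt (i+1))).1 - (P.f (P.pt i)).1| ≤ P.lam/10 := by
  have h := P.hmod _ _ (P.pt_adj i)
  rwa [unitI_dist] at h

def v (i : ℕ) : ℝ := P.base i + (if Even i then P.lam else -P.lam)

lemma v_mem (i : ℕ) : 0 ≤ P.v i ∧ P.v i ≤ 1 := by
  have h1 := P.base_mem i
  have hl := P.hlam0
  rw [v]
  split_ifs <;> constructor <;> linarith [h1.1, h1.2]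

lemma v_close (i : ℕ) : |P.v i - (P.f (P.pt i)).1| ≤ 2 * P.lam := by
  have h1 := P.base_close i
  have hl := P.hlam0
  rw [abs_le] at h1
  rw [v, abs_le]
  split_ifs <;> constructor <;> linarith [h1.1, h1.2]

lemma v_slope (i : ℕ) : P.lam ≤ |P.v (i+1) - P.v i| := by
  have h1 := P.base_lip (i+1) i
  have h2 := P.fvar i
  have hl := P.hlam0
  have habs : |P.base (i+1) - P.base i| ≤ P.lam/10 := le_trans h1 h2
  rw [abs_le] at habs
  rw [v, v]
  rcases Nat.even_or_odd i with he | ho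
  · have he1 : ¬ Even (i+1) := by simp [Nat.even_add_one, he]
    rw [if_pos he, if_neg he1]
    have e1 : P.base (i+1) + -P.lam - (P.base i + P.lam)
        = (P.base (i+1) - P.base i) - 2*P.lam := by ring
    have hx : (P.base (i+1) - P.base i) - 2*P.lam ≤ 0 := by linarith [habs.2]
    rw [e1, abs_of_nonpos hx]
    linarith [habs.1]
  · have he : ¬ Even i := Nat.not_even_iff_odd.mpr ho
    have he1 : Even (i+1) := Nat.even_add_one.mpr he
    rw [if_neg he, if_pos he1]
    have e1 : P.base (i+1) + P.lam - (P.base i + -P.lam)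
        = (P.base (i+1) - P.base i) + 2*P.lam := by ring
    have hx : 0 ≤ (P.base (i+1) - P.base i) + 2*P.lam := by linarith [habs.1]
    rw [e1, abs_of_nonneg hx]
    linarith [habs.2]

/-- the piecewise linear interpolation -/
def Mr (x : ℝ) : ℝ :=
  P.v 0 + ∑ i ∈ Finset.range P.n, (P.v (i+1) - P.v i) * (P.n * max 0 (min (x - i/P.n) (1/P.n)))

lemma Mr_cont : Continuous P.Mr := by
  apply continuous_const.add
  apply continuous_finset_sum
  intro i _
  apply Continuous.mul continuous_const
  apply Continuous.mul continuous_const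
  apply Continuous.max continuous_const
  apply Continuous.min (by fun_prop) continuous_const

lemma Mr_node {j : ℕ} (hj : j ≤ P.n) : P.Mr ((j:ℝ)/P.n) = P.v j := by
  have hterm : ∀ i ∈ Finset.range P.n,
      (P.v (i+1) - P.v i) * (P.n * max 0 (min ((j:ℝ)/P.n - i/P.n) (1/P.n)))
      = if i < j then P.v (i+1) - P.v i else 0 := by
    intro i _
    by_cases hij : i < j
    · rw [if_pos hij]
      have h1 : (1:ℝ)/P.n ≤ (j:ℝ)/P.n - (i:ℝ)/P.n := by
        rw [div_sub_div_same, div_le_div_iff_of_pos_right P.hnR]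
        have : (i:ℝ) + 1 ≤ (j:ℝ) := by exact_mod_cast hij
        linarith
      rw [min_eq_right h1, max_eq_right (le_of_lt P.hn_inv_pos),
        mul_one_div, div_self (ne_of_gt P.hnR), mul_one]
    · rw [if_neg hij]
      push_neg at hij
      have hji : (j:ℝ) ≤ (i:ℝ) := by exact_mod_cast hij
      have h1 : (j:ℝ)/P.n - (i:ℝ)/P.n ≤ 0 := by
        rw [div_sub_div_same, div_nonpos_iff]
        right
        constructor <;> linarith [P.hnR]
      have h2 : min ((j:ℝ)/P.n - (i:ℝ)/P.n) (1/P.n) ≤ 0 := le_trans (min_le_left _ _) h1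
      rw [max_eq_left h2, mul_zero, mul_zero]
  have h2 : ∑ i ∈ Finset.range P.n, (if i < j then P.v (i+1) - P.v i else 0)
      = ∑ i ∈ Finset.range j, (P.v (i+1) - P.v i) := by
    rw [← Finset.sum_subset (Finset.range_subset_range.mpr hj)
      (fun x _ hx => by rw [if_neg (by simpa using hx)])]
    apply Finset.sum_congr rfl
    intro i hi
    rw [if_pos (Finset.mem_range.mp hi)]
  rw [Mr, Finset.sum_congr rfl hterm, h2, Finset.sum_range_sub]
  ring

lemma Mr_cell {j : ℕ} (hj : j < P.n) {x : ℝ} (hx1 : (j:ℝ)/P.n ≤ x) (hx2 : x ≤ ((j:ℝ)+1)/P.n) :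
    P.Mr x = P.v j + (P.v (j+1) - P.v j) * (P.n * (x - (j:ℝ)/P.n)) := by
  have hterm : ∀ i ∈ Finset.range P.n,
      (P.v (i+1) - P.v i) * (P.n * max 0 (min (x - i/P.n) (1/P.n)))
      = if i < j then P.v (i+1) - P.v i
        else if i = j then (P.v (j+1) - P.v j) * (P.n * (x - (j:ℝ)/P.n)) else 0 := by
    intro i _
    by_cases hij : i < j
    · rw [if_pos hij]
      have h1 : (1:ℝ)/P.n ≤ x - (i:ℝ)/P.n := by
        have h3 : (1:ℝ)/P.n ≤ (j:ℝ)/P.n - (i:ℝ)/P.n := by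
          rw [div_sub_div_same, div_le_div_iff_of_pos_right P.hnR]
          have : (i:ℝ) + 1 ≤ (j:ℝ) := by exact_mod_cast hij
          linarith
        linarith
      rw [min_eq_right h1, max_eq_right (le_of_lt P.hn_inv_pos),
        mul_one_div, div_self (ne_of_gt P.hnR), mul_one]
    · rw [if_neg hij]
      by_cases hij2 : i = j
      · subst hij2
        rw [if_pos rfl]
        have h1 : x - (i:ℝ)/P.n ≤ 1/P.n := by
          have : ((i:ℝ)+1)/P.n - (i:ℝ)/P.n = 1/P.n := by ring
          linarith
        have h0 : 0 ≤ x - (i:ℝ)/P.n := by linarith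
        rw [min_eq_left h1, max_eq_right h0]
      · rw [if_neg hij2]
        have hji : j + 1 ≤ i := by omega
        have hji' : (j:ℝ) + 1 ≤ (i:ℝ) := by exact_mod_cast hji
        have h1 : x - (i:ℝ)/P.n ≤ 0 := by
          have : ((j:ℝ)+1)/P.n ≤ (i:ℝ)/P.n := by
            rw [div_le_div_iff_of_pos_right P.hnR]
            exact hji'
          linarith
        have h2 : min (x - (i:ℝ)/P.n) (1/P.n) ≤ 0 := le_trans (min_le_left _ _) h1
        rw [max_eq_left h2, mul_zero, mul_zero]
  have hsum : ∑ i ∈ Finset.range P.n, (if i < j then P.v (i+1) - P.v i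
      else if i = j then (P.v (j+1) - P.v j) * (P.n * (x - (j:ℝ)/P.n)) else 0)
      = ∑ i ∈ Finset.range (j+1), (if i < j then P.v (i+1) - P.v i
      else if i = j then (P.v (j+1) - P.v j) * (P.n * (x - (j:ℝ)/P.n)) else 0) := by
    rw [Finset.sum_subset (Finset.range_subset_range.mpr (by omega : j + 1 ≤ P.n))]
    intro k _ hk
    rw [Finset.mem_range] at hk
    rw [if_neg (by omega), if_neg (by omega)]
  rw [Mr, Finset.sum_congr rfl hterm, hsum, Finset.sum_range_succ,
    if_neg (lt_irrefl j), if_pos rfl]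
  have h3 : ∑ i ∈ Finset.range j, (if i < j then P.v (i+1) - P.v i
      else if i = j then (P.v (j+1) - P.v j) * (P.n * (x - (j:ℝ)/P.n)) else 0)
      = ∑ i ∈ Finset.range j, (P.v (i+1) - P.v i) := by
    apply Finset.sum_congr rfl
    intro i hi
    rw [if_pos (Finset.mem_range.mp hi)]
  rw [h3, Finset.sum_range_sub]
  ring

lemma Mr_between {j : ℕ} (hj : j < P.n) {x : ℝ} (hx1 : (j:ℝ)/P.n ≤ x)
    (hx2 : x ≤ ((j:ℝ)+1)/P.n) :
    min (P.v j) (P.v (j+1)) ≤ P.Mr x ∧ P.Mr x ≤ max (P.v j) (P.v (j+1)) := by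
  rw [P.Mr_cell hj hx1 hx2]
  set s : ℝ := P.n * (x - (j:ℝ)/P.n) with hs
  have hs0 : 0 ≤ s := by
    apply mul_nonneg (le_of_lt P.hnR)
    linarith
  have hs1 : s ≤ 1 := by
    rw [hs]
    have h1 : x - (j:ℝ)/P.n ≤ 1/P.n := by
      have : ((j:ℝ)+1)/P.n - (j:ℝ)/P.n = 1/P.n := by ring
      linarith
    calc P.n * (x - (j:ℝ)/P.n) ≤ P.n * (1/P.n) := by
          apply mul_le_mul_of_nonneg_left h1 (le_of_lt P.hnR)
      _ = 1 := mul_one_div_cancel (ne_of_gt P.hnR)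
  constructor
  · rcases le_total (P.v j) (P.v (j+1)) with h | h
    · rw [min_eq_left h]; nlinarith
    · rw [min_eq_right h]; nlinarith
  · rcases le_total (P.v j) (P.v (j+1)) with h | h
    · rw [max_eq_right h]; nlinarith
    · rw [max_eq_left h]; nlinarith

lemma exists_cell {x : ℝ} (h0 : 0 ≤ x) (h1 : x ≤ 1) :
    ∃ j : ℕ, j < P.n ∧ (j:ℝ)/P.n ≤ x ∧ x ≤ ((j:ℝ)+1)/P.n := by
  by_cases hx1 : x = 1
  · refine ⟨P.n - 1, Nat.sub_lt P.hn0 one_pos, ?_, ?_⟩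
    · subst hx1
      rw [div_le_one P.hnR]
      have : ((P.n - 1 : ℕ):ℝ) ≤ (P.n : ℝ) := by
        exact_mod_cast Nat.sub_le P.n 1
      linarith
    · subst hx1
      rw [le_div_iff₀ P.hnR]
      have : ((P.n - 1 : ℕ):ℝ) + 1 = (P.n : ℝ) := by
        have h2 : P.n - 1 + 1 = P.n := Nat.succ_pred_eq_of_pos P.hn0
        exact_mod_cast congrArg (Nat.cast : ℕ → ℝ) h2
      linarith
  · have hxlt : x < 1 := lt_of_le_of_ne h1 hx1
    set j := Nat.floor (x * P.n) with hjdef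
    have hj0 : 0 ≤ x * P.n := by positivity
    have hfl : (j:ℝ) ≤ x * P.n := Nat.floor_le hj0
    have hfu : x * P.n < (j:ℝ) + 1 := Nat.lt_floor_add_one _
    refine ⟨j, ?_, ?_, ?_⟩
    · have : (j:ℝ) < P.n := lt_of_le_of_lt hfl (by nlinarith [P.hnR])
      exact_mod_cast this
    · rw [div_le_iff₀ P.hnR]
      linarith
    · rw [le_div_iff₀ P.hnR]
      linarith

lemma Mr_mem {x : ℝ} (h0 : 0 ≤ x) (h1 : x ≤ 1) : 0 ≤ P.Mr x ∧ P.Mr x ≤ 1 := by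
  obtain ⟨j, hj, hx1, hx2⟩ := P.exists_cell h0 h1
  obtain ⟨hb1, hb2⟩ := P.Mr_between hj hx1 hx2
  have v1 := P.v_mem j
  have v2 := P.v_mem (j+1)
  constructor
  · calc (0:ℝ) ≤ min (P.v j) (P.v (j+1)) := le_min v1.1 v2.1
      _ ≤ _ := hb1
  · calc P.Mr x ≤ max (P.v j) (P.v (j+1)) := hb2
      _ ≤ 1 := max_le v1.2 v2.2

/-- the PL map as a continuous self-map of the interval -/
def M : C(unitI, unitI) where
  toFun := fun x => ⟨P.Mr x.1, P.Mr_mem x.2.1 x.2.2⟩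
  continuous_toFun := by
    apply Continuous.subtype_mk
    exact P.Mr_cont.comp continuous_subtype_val

end PLData

end CRAux

end AUX7
noncomputable section AUX8

namespace CRAux

namespace PLData

variable (P : PLData)

def cellS (j : ℕ) : Set unitI := {z : unitI | (j:ℝ)/P.n ≤ z.1 ∧ z.1 ≤ ((j:ℝ)+1)/P.n}

lemma exists_cellS (z : unitI) : ∃ j, j < P.n ∧ z ∈ P.cellS j := by
  obtain ⟨j, hj, h1, h2⟩ := P.exists_cell z.2.1 z.2.2
  exact ⟨j, hj, h1, h2⟩

lemma cell_diam {j : ℕ} {z z' : unitI} (hz : z ∈ P.cellS j) (hz' : z' ∈ P.cellS j) :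
    |z.1 - z'.1| ≤ 1/P.n := by
  obtain ⟨a1, a2⟩ := hz
  obtain ⟨b1, b2⟩ := hz'
  have he : ((j:ℝ)+1)/P.n - (j:ℝ)/P.n = 1/P.n := by ring
  rw [abs_le]
  constructor <;> linarith

lemma fclose {j : ℕ} (hj : j < P.n) {x : unitI} (hx : x ∈ P.cellS j) :
    |(P.f (P.pt j)).1 - (P.f x).1| ≤ P.lam/10 ∧
    |(P.f (P.pt (j+1))).1 - (P.f x).1| ≤ P.lam/10 := by
  obtain ⟨a1, a2⟩ := hx
  have he : ((j:ℝ)+1)/P.n - (j:ℝ)/P.n = 1/P.n := by ring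
  have hp1 : P.ptR j = (j:ℝ)/P.n := P.ptR_eq hj.le
  have hp2 : P.ptR (j+1) = ((j:ℝ)+1)/P.n := by
    rw [P.ptR_eq (by omega : j + 1 ≤ P.n)]
    push_cast
    ring
  constructor
  · have hd : dist (P.pt j) x ≤ 1/P.n := by
      rw [unitI_dist]
      show |P.ptR j - x.1| ≤ 1/P.n
      rw [hp1, abs_le]
      constructor <;> linarith
    have := P.hmod _ _ hd
    rwa [unitI_dist] at this
  · have hd : dist (P.pt (j+1)) x ≤ 1/P.n := by
      rw [unitI_dist]
      show |P.ptR (j+1) - x.1| ≤ 1/P.n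
      rw [hp2, abs_le]
      constructor <;> linarith
    have := P.hmod _ _ hd
    rwa [unitI_dist] at this

/-- the key covering property: the image of a cell under `M` covers everything
`lam/2`-close to the `f`-image of any of its points -/
lemma cover {j : ℕ} (hj : j < P.n) {x : unitI} (hx : x ∈ P.cellS j) {y : unitI}
    (hy : |y.1 - (P.f x).1| ≤ P.lam/2) : y ∈ ⇑P.M '' P.cellS j := by
  have hl := P.hlam0
  have hl8 := P.hlam8
  obtain ⟨hc1, hc2⟩ := P.fclose hj hx
  -- upper and lower bounds for y between v-values
  have hub : ∀ i, (i = j ∨ i = j + 1) → Even i → y.1 ≤ P.v i := by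
    intro i hi hev
    have hci : |(P.f (P.pt i)).1 - (P.f x).1| ≤ P.lam/10 := by
      rcases hi with rfl | rfl
      · exact hc1
      · exact hc2
    rw [abs_le] at hci hy
    rw [v, if_pos hev, base]
    rcases le_total ((P.f (P.pt i)).1) (1 - P.lam) with h | h
    · rw [min_eq_right h]
      have h2 : (P.f (P.pt i)).1 ≤ max P.lam ((P.f (P.pt i)).1) := le_max_right _ _
      linarith [hci.1, hci.2, hy.1, hy.2]
    · rw [min_eq_left h, max_eq_right (by linarith)]
      have := y.2.2
      linarith
  have hlb : ∀ i, (i = j ∨ i = j + 1) → ¬ Even i → P.v i ≤ y.1 := by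
    intro i hi hev
    have hci : |(P.f (P.pt i)).1 - (P.f x).1| ≤ P.lam/10 := by
      rcases hi with rfl | rfl
      · exact hc1
      · exact hc2
    rw [abs_le] at hci hy
    rw [v, if_neg hev, base]
    rcases le_total P.lam (min (1 - P.lam) ((P.f (P.pt i)).1)) with h | h
    · rw [max_eq_right h]
      have h2 : min (1 - P.lam) ((P.f (P.pt i)).1) ≤ (P.f (P.pt i)).1 := min_le_right _ _
      linarith [hci.1, hci.2, hy.1, hy.2]
    · rw [max_eq_left h]
      have := y.2.1
      linarith
  -- y lies between the endpoint values
  have hbetween : min (P.v j) (P.v (j+1)) ≤ y.1 ∧ y.1 ≤ max (P.v j) (P.v (j+1)) := by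
    rcases Nat.even_or_odd j with he | ho
    · have ho1 : ¬ Even (j+1) := by simp [Nat.even_add_one, he]
      have u1 := hub j (Or.inl rfl) he
      have l1 := hlb (j+1) (Or.inr rfl) ho1
      constructor
      · exact le_trans (min_le_right _ _) l1
      · exact le_trans u1 (le_max_left _ _)
    · have he1 : Even (j+1) := Nat.even_add_one.mpr (Nat.not_even_iff_odd.mpr ho)
      have u1 := hub (j+1) (Or.inr rfl) he1
      have l1 := hlb j (Or.inl rfl) (Nat.not_even_iff_odd.mpr ho)
      constructor
      · exact le_trans (min_le_left _ _) l1
      · exact le_trans u1 (le_max_right _ _)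
  -- intermediate value theorem
  set A : ℝ := (j:ℝ)/P.n with hA
  set B : ℝ := ((j:ℝ)+1)/P.n with hB
  have hMrA : P.Mr A = P.v j := P.Mr_node hj.le
  have hMrB : P.Mr B = P.v (j+1) := by
    have : (((j+1:ℕ)):ℝ)/P.n = B := by push_cast; rw [hB]
    rw [← this, P.Mr_node (by omega : j + 1 ≤ P.n)]
  have hyuIcc : y.1 ∈ Set.uIcc (P.Mr A) (P.Mr B) := by
    rw [Set.mem_uIcc, hMrA, hMrB]
    rcases le_total (P.v j) (P.v (j+1)) with h | h
    · left
      rw [min_eq_left h] at hbetween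
      rw [max_eq_right h] at hbetween
      exact ⟨hbetween.1, hbetween.2⟩
    · right
      rw [min_eq_right h] at hbetween
      rw [max_eq_left h] at hbetween
      exact ⟨hbetween.1, hbetween.2⟩
  have hIVT := intermediate_value_uIcc (f := P.Mr) (a := A) (b := B) P.Mr_cont.continuousOn
  obtain ⟨ξ, hξ, hMξ⟩ := hIVT hyuIcc
  have hAB : A ≤ B := by
    rw [hA, hB, div_le_div_iff_of_pos_right P.hnR]
    linarith
  rw [Set.uIcc_of_le hAB] at hξ
  have hA0 : (0:ℝ) ≤ A := by
    rw [hA]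
    positivity
  have hB1 : B ≤ 1 := by
    rw [hB, div_le_one P.hnR]
    have : (j:ℝ) + 1 ≤ (P.n:ℝ) := by exact_mod_cast hj
    linarith
  have hξ0 : (0:ℝ) ≤ ξ := le_trans hA0 hξ.1
  have hξ1 : ξ ≤ 1 := le_trans hξ.2 hB1
  refine ⟨⟨ξ, hξ0, hξ1⟩, ⟨hξ.1, hξ.2⟩, ?_⟩
  apply unitI_ext
  exact hMξ

/-- the edge move: a single `lam/8`-chain step gives cell covering -/
lemma edge {j j' : ℕ} (hj : j < P.n) (hj' : j' < P.n) {z z' : unitI}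
    (hz : z ∈ P.cellS j) (hz' : z' ∈ P.cellS j') (hd : dist (P.f z) z' < P.lam/8) :
    P.cellS j' ⊆ ⇑P.M '' P.cellS j := by
  intro y hy
  apply P.cover hj hz
  have h1 : |y.1 - z'.1| ≤ 1/P.n := P.cell_diam hy hz'
  have h2 : |z'.1 - (P.f z).1| < P.lam/8 := by
    rw [← unitI_dist, dist_comm]
    exact hd
  have h3 : |y.1 - (P.f z).1| ≤ |y.1 - z'.1| + |z'.1 - (P.f z).1| := abs_sub_le _ _ _
  have h4 := P.hsmall
  have h5 := P.hlam0
  linarith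

/-- base of the growth argument: an interval of length `≥ 2/n` contains a cell -/
lemma cell_in {A B : unitI} (h : 2/P.n ≤ B.1 - A.1) :
    ∃ j, j < P.n ∧ P.cellS j ⊆ Set.Icc A B := by
  set j := Nat.ceil (A.1 * P.n) with hj
  have hA0 : 0 ≤ A.1 * P.n := mul_nonneg A.2.1 (le_of_lt P.hnR)
  have hc1 : A.1 * P.n ≤ (j:ℝ) := Nat.le_ceil _
  have hc2 : (j:ℝ) < A.1 * P.n + 1 := Nat.ceil_lt_add_one hA0
  have hB1 : B.1 ≤ 1 := B.2.2
  have hBn : (j:ℝ) + 1 ≤ B.1 * P.n := by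
    have h2 : (2:ℝ)/(P.n:ℝ) * (P.n:ℝ) = 2 := div_mul_cancel₀ 2 (ne_of_gt P.hnR)
    have h3 := mul_le_mul_of_nonneg_right h (le_of_lt P.hnR)
    rw [sub_mul] at h3
    linarith
  have hjn : j < P.n := by
    have : (j:ℝ) + 1 ≤ (P.n:ℝ) := le_trans hBn (by nlinarith [P.hnR, B.2.2])
    have : (j:ℝ) < (P.n:ℝ) := by linarith
    exact_mod_cast this
  refine ⟨j, hjn, ?_⟩
  intro z hz
  obtain ⟨h1, h2⟩ := hz
  constructor
  · show A ≤ z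
    rw [unitI_coe_le_coe]
    have : A.1 ≤ (j:ℝ)/P.n := by
      rw [le_div_iff₀ P.hnR]
      exact hc1
    linarith
  · show z ≤ B
    rw [unitI_coe_le_coe]
    have : ((j:ℝ)+1)/P.n ≤ B.1 := by
      rw [div_le_iff₀ P.hnR]
      exact hBn
    linarith

end PLData

end CRAux

end AUX8
noncomputable section AUX9

namespace CRAux

namespace PLData

variable (P : PLData)

/-- growth: any nondegenerate interval eventually covers a full cell -/
lemma grow (m : ℕ) : ∀ (A B : unitI), (2/P.n) * (2/3)^m ≤ B.1 - A.1 →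
    ∃ k j, j < P.n ∧ P.cellS j ⊆ (⇑P.M)^[k] '' (Set.Icc A B) := by
  induction m with
  | zero =>
    intro A B h
    rw [pow_zero, mul_one] at h
    obtain ⟨j, hj, hsub⟩ := P.cell_in h
    exact ⟨0, j, hj, by simpa using hsub⟩
  | succ m ih =>
    intro A B h
    rcases le_or_gt ((2:ℝ)/(P.n:ℝ)) (B.1 - A.1) with hbig | hsmallgap
    · obtain ⟨j, hj, hsub⟩ := P.cell_in hbig
      exact ⟨0, j, hj, by simpa using hsub⟩
    · have hgap0 : 0 < B.1 - A.1 :=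
        lt_of_lt_of_le (mul_pos (div_pos two_pos P.hnR) (pow_pos (by norm_num) _)) h
      have hABle : A.1 ≤ B.1 := by linarith
      obtain ⟨j₀, hj₀, hA1, hA2⟩ := P.exists_cell A.2.1 A.2.2
      set e1 : ℝ := min B.1 (((j₀:ℝ)+1)/P.n) with he1
      set e2 : ℝ := min B.1 (((j₀:ℝ)+2)/P.n) with he2
      have hj12 : ((j₀:ℝ)+1)/P.n ≤ ((j₀:ℝ)+2)/P.n := by
        rw [div_le_div_iff_of_pos_right P.hnR]
        linarith
      have he12 : e1 ≤ e2 := min_le_min (le_refl _) hj12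
      have hAe1 : A.1 ≤ e1 := le_min hABle hA2
      have he2B : e2 ≤ B.1 := min_le_left _ _
      have he1B : e1 ≤ B.1 := min_le_left _ _
      have hsel : ∃ (α β : ℝ) (j' : ℕ), j' < P.n ∧ ((j':ℕ):ℝ)/P.n ≤ α ∧
          β ≤ (((j':ℕ):ℝ)+1)/P.n ∧ A.1 ≤ α ∧ β ≤ B.1 ∧ (B.1 - A.1)/3 ≤ β - α := by
        by_cases h1 : (B.1 - A.1)/3 ≤ e1 - A.1
        · exact ⟨A.1, e1, j₀, hj₀, hA1, min_le_right _ _, le_refl _, he1B, h1⟩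
        · by_cases h2 : (B.1 - A.1)/3 ≤ e2 - e1
          · have he1lt : e1 < e2 := by linarith
            have hB1' : ((j₀:ℝ)+1)/P.n ≤ B.1 := by
              by_contra hc
              push_neg at hc
              have hx1 : e1 = B.1 := min_eq_left (le_of_lt hc)
              have hx2 : e2 ≤ B.1 := he2B
              linarith
            have he1eq : e1 = ((j₀:ℝ)+1)/P.n := min_eq_right hB1'
            have hj₀1 : j₀ + 1 < P.n := by
              have hlt : ((j₀:ℝ)+1)/P.n < 1 := by
                rw [← he1eq]
                calc e1 < e2 := he1lt
                  _ ≤ B.1 := he2B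
                  _ ≤ 1 := B.2.2
              rw [div_lt_one P.hnR] at hlt
              have : (j₀:ℝ) + 1 < (P.n:ℝ) := hlt
              exact_mod_cast this
            refine ⟨e1, e2, j₀+1, hj₀1, ?_, ?_, by linarith, he2B, h2⟩
            · rw [he1eq]
              push_cast
              linarith
            · have hx : e2 ≤ ((j₀:ℝ)+2)/P.n := min_le_right _ _
              have hbr : ((j₀:ℝ)+1+1)/(P.n:ℝ) = ((j₀:ℝ)+2)/(P.n:ℝ) := by ring
              push_cast
              linarith
          · push_neg at h1 h2
            have h3 : (B.1 - A.1)/3 ≤ B.1 - e2 := by linarith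
            have hB2' : ((j₀:ℝ)+2)/P.n ≤ B.1 := by
              by_contra hc
              push_neg at hc
              have hx1 : e2 = B.1 := min_eq_left (le_of_lt hc)
              rw [hx1] at h3
              linarith
            have he2eq : e2 = ((j₀:ℝ)+2)/P.n := min_eq_right hB2'
            have hj₀2 : j₀ + 2 < P.n := by
              have hlt : ((j₀:ℝ)+2)/P.n < 1 := by
                rw [← he2eq]
                have : e2 < B.1 := by linarith
                linarith [B.2.2]
              rw [div_lt_one P.hnR] at hlt
              have : (j₀:ℝ) + 2 < (P.n:ℝ) := hlt
              exact_mod_cast this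
            refine ⟨e2, B.1, j₀+2, hj₀2, ?_, ?_, by linarith, le_refl _, h3⟩
            · rw [he2eq]
              push_cast
              linarith
            · have hx : B.1 < ((j₀:ℝ)+1)/(P.n:ℝ) + (2:ℝ)/(P.n:ℝ) := by linarith
              have hy : ((j₀:ℝ)+1)/(P.n:ℝ) + (2:ℝ)/(P.n:ℝ) = ((j₀:ℝ)+3)/(P.n:ℝ) := by ring
              have hbr : ((j₀:ℝ)+2+1)/(P.n:ℝ) = ((j₀:ℝ)+3)/(P.n:ℝ) := by ring
              push_cast
              linarith
      obtain ⟨α, β, j', hj', hc1, hc2, hAα, hβB, hlen⟩ := hsel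
      have hαβ : α ≤ β := by linarith
      have hα0 : 0 ≤ α := le_trans A.2.1 hAα
      have hβ1 : β ≤ 1 := le_trans hβB B.2.2
      have h20 : 20 ≤ P.lam * P.n := by
        have hs := P.hsmall
        rw [div_le_div_iff₀ P.hnR (by norm_num : (0:ℝ) < 20)] at hs
        linarith
      have hMrd : P.Mr β - P.Mr α = (P.v (j'+1) - P.v j') * (P.n*(β - α)) := by
        rw [P.Mr_cell hj' (le_trans hc1 hαβ) hc2, P.Mr_cell hj' hc1 (le_trans hαβ hc2)]
        ring
      have habs : (2/P.n) * (2/3)^m ≤ |P.Mr β - P.Mr α| := by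
        rw [hMrd, abs_mul]
        have hnn : (0:ℝ) ≤ P.n*(β - α) := mul_nonneg (le_of_lt P.hnR) (by linarith)
        rw [abs_of_nonneg hnn]
        have hsl := P.v_slope j'
        have hge : P.lam * (P.n * (β - α)) ≤ |P.v (j'+1) - P.v j'| * (P.n * (β - α)) :=
          mul_le_mul_of_nonneg_right hsl hnn
        have e3 : P.lam * (P.n * (β - α)) = (P.lam * P.n) * (β - α) := by ring
        have p1 : 20*(β - α) ≤ (P.lam*P.n)*(β - α) :=
          mul_le_mul_of_nonneg_right h20 (by linarith)
        have e2' : (2/P.n) * (2/3)^(m+1) ≤ B.1 - A.1 := h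
        have e4 : ((2:ℝ)/(P.n:ℝ)) * ((2:ℝ)/3)^m = (((2:ℝ)/(P.n:ℝ)) * ((2:ℝ)/3)^(m+1)) * (3/2) := by
          rw [pow_succ]
          ring
        linarith
      have hMα := P.Mr_mem hα0 (le_trans hαβ hβ1)
      have hMβ := P.Mr_mem (le_trans hα0 hαβ) hβ1
      set A' : unitI := ⟨min (P.Mr α) (P.Mr β),
        ⟨le_min hMα.1 hMβ.1, le_trans (min_le_left _ _) hMα.2⟩⟩ with hA'
      set B' : unitI := ⟨max (P.Mr α) (P.Mr β),
        ⟨le_trans hMα.1 (le_max_left _ _), max_le hMα.2 hMβ.2⟩⟩ with hB'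
      have hgap' : (2/P.n) * (2/3)^m ≤ B'.1 - A'.1 := by
        have hx : B'.1 - A'.1 = |P.Mr β - P.Mr α| := by
          show max (P.Mr α) (P.Mr β) - min (P.Mr α) (P.Mr β) = _
          rw [max_sub_min_eq_abs, abs_sub_comm]
        rw [hx]
        exact habs
      have hsub : Set.Icc A' B' ⊆ ⇑P.M '' Set.Icc A B := by
        intro y hy
        rw [Set.mem_Icc] at hy
        have hy1 : min (P.Mr α) (P.Mr β) ≤ y.1 := hy.1
        have hy2 : y.1 ≤ max (P.Mr α) (P.Mr β) := hy.2
        have hyu : y.1 ∈ Set.uIcc (P.Mr α) (P.Mr β) := by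
          rw [Set.mem_uIcc]
          rcases le_total (P.Mr α) (P.Mr β) with hle | hle
          · left
            rw [min_eq_left hle] at hy1
            rw [max_eq_right hle] at hy2
            exact ⟨hy1, hy2⟩
          · right
            rw [min_eq_right hle] at hy1
            rw [max_eq_left hle] at hy2
            exact ⟨hy1, hy2⟩
        obtain ⟨ξ, hξ, hMξ⟩ :=
          intermediate_value_uIcc (f := P.Mr) (a := α) (b := β) P.Mr_cont.continuousOn hyu
        rw [Set.uIcc_of_le hαβ] at hξ
        have hx0 : (0:ℝ) ≤ ξ := le_trans hα0 hξ.1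
        have hx1 : ξ ≤ 1 := le_trans hξ.2 hβ1
        refine ⟨⟨ξ, hx0, hx1⟩, ?_, unitI_ext hMξ⟩
        rw [Set.mem_Icc]
        constructor
        · rw [unitI_coe_le_coe]
          exact le_trans hAα hξ.1
        · rw [unitI_coe_le_coe]
          exact le_trans hξ.2 hβB
      obtain ⟨k, jj, hjj, hjsub⟩ := ih A' B' hgap'
      refine ⟨k+1, jj, hjj, ?_⟩
      calc P.cellS jj ⊆ (⇑P.M)^[k] '' Set.Icc A' B' := hjsub
        _ ⊆ (⇑P.M)^[k] '' (⇑P.M '' Set.Icc A B) := Set.image_mono hsub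
        _ = (⇑P.M)^[k+1] '' Set.Icc A B := by
            rw [Function.iterate_succ, Set.image_comp]

end PLData

end CRAux

end AUX9
noncomputable section AUX10

namespace CRAux

lemma exists_fixedPt (h : C(unitI, unitI)) : ∃ z : unitI, h z = z := by
  set φ : unitI → ℝ := fun x => (h x).1 - x.1 with hφ
  have hcont : Continuous φ := (continuous_subtype_val.comp h.continuous).sub continuous_subtype_val
  set z0 : unitI := ⟨0, by norm_num⟩ with hz0
  set z1 : unitI := ⟨1, by norm_num⟩ with hz1
  have h01 : z0 ≤ z1 := by rw [unitI_coe_le_coe]; norm_num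
  have hφ0 : 0 ≤ φ z0 := by
    show 0 ≤ (h z0).1 - z0.1
    have := (h z0).2.1
    simp only [hz0]
    linarith
  have hφ1 : φ z1 ≤ 0 := by
    show (h z1).1 - z1.1 ≤ 0
    have := (h z1).2.2
    simp only [hz1]
    linarith
  have hmem : (0:ℝ) ∈ Set.Icc (φ z1) (φ z0) := ⟨hφ1, hφ0⟩
  have := intermediate_value_Icc' h01 hcont.continuousOn hmem
  obtain ⟨z, _, hz⟩ := this
  refine ⟨z, unitI_ext ?_⟩
  have : (h z).1 - z.1 = 0 := hz
  linarith

namespace PLData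

variable (P : PLData)

lemma close (x : unitI) : dist (P.M x) (P.f x) ≤ 3 * P.lam := by
  obtain ⟨j, hj, hx⟩ := P.exists_cellS x
  obtain ⟨hb1, hb2⟩ := P.Mr_between hj hx.1 hx.2
  obtain ⟨hc1, hc2⟩ := P.fclose hj hx
  have hv1 := P.v_close j
  have hv2 := P.v_close (j+1)
  have hl := P.hlam0
  rw [unitI_dist]
  show |P.Mr x.1 - (P.f x).1| ≤ 3 * P.lam
  rw [abs_le] at hv1 hv2 hc1 hc2 ⊢
  rcases le_total (P.v j) (P.v (j+1)) with h | h
  · rw [min_eq_left h] at hb1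
    rw [max_eq_right h] at hb2
    constructor <;> linarith
  · rw [min_eq_right h] at hb1
    rw [max_eq_left h] at hb2
    constructor <;> linarith

lemma star : ∃ js, js < P.n ∧ P.cellS js ⊆ ⇑P.M '' P.cellS js := by
  obtain ⟨z, hz⟩ := exists_fixedPt P.f
  obtain ⟨js, hjs, hzc⟩ := P.exists_cellS z
  refine ⟨js, hjs, ?_⟩
  intro y hy
  apply P.cover hjs hzc
  rw [hz]
  have hd := P.cell_diam hy hzc
  have h4 := P.hsmall
  have h5 := P.hlam0
  have h6 : |y.1 - z.1| ≤ 1/P.n := hd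
  rw [abs_le] at h6 ⊢
  constructor <;> linarith

lemma star_mono {js : ℕ} (hst : P.cellS js ⊆ ⇑P.M '' P.cellS js) :
    ∀ d k, (⇑P.M)^[k] '' P.cellS js ⊆ (⇑P.M)^[k+d] '' P.cellS js := by
  have hstep : ∀ k, (⇑P.M)^[k] '' P.cellS js ⊆ (⇑P.M)^[k+1] '' P.cellS js := by
    intro k
    calc (⇑P.M)^[k] '' P.cellS js ⊆ (⇑P.M)^[k] '' (⇑P.M '' P.cellS js) := Set.image_mono hst
      _ = (⇑P.M)^[k+1] '' P.cellS js := by rw [Function.iterate_succ, Set.image_comp]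
  intro d
  induction d with
  | zero => intro k; exact subset_refl _
  | succ d ih =>
    intro k
    calc (⇑P.M)^[k] '' P.cellS js ⊆ (⇑P.M)^[k+d] '' P.cellS js := ih k
      _ ⊆ (⇑P.M)^[k+d+1] '' P.cellS js := hstep _

lemma path (hreach : ∀ δ : ℝ, 0 < δ → ∀ u v : unitI, Reach (⇑P.f) δ u v)
    {i j : ℕ} (hi : i < P.n) (hj : j < P.n) :
    ∃ k, 1 ≤ k ∧ P.cellS j ⊆ (⇑P.M)^[k] '' P.cellS i := by
  have hu : P.pt i ∈ P.cellS i := by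
    constructor
    · show (i:ℝ)/P.n ≤ P.ptR i
      rw [P.ptR_eq hi.le]
    · show P.ptR i ≤ ((i:ℝ)+1)/P.n
      rw [P.ptR_eq hi.le, div_le_div_iff_of_pos_right P.hnR]
      linarith
  have hv : P.pt j ∈ P.cellS j := by
    constructor
    · show (j:ℝ)/P.n ≤ P.ptR j
      rw [P.ptR_eq hj.le]
    · show P.ptR j ≤ ((j:ℝ)+1)/P.n
      rw [P.ptR_eq hj.le, div_le_div_iff_of_pos_right P.hnR]
      linarith
  have hlam8pos : 0 < P.lam/8 := by linarith [P.hlam0]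
  obtain ⟨nc, c, hn0, hc0, hcn, hcd⟩ := hreach (P.lam/8) hlam8pos (P.pt i) (P.pt j)
  have main : ∀ t, t ≤ nc → 1 ≤ t → ∀ jt, jt < P.n → c t ∈ P.cellS jt →
      ∃ k, 1 ≤ k ∧ P.cellS jt ⊆ (⇑P.M)^[k] '' P.cellS i := by
    intro t
    induction t with
    | zero => intro _ h10 _ _ _; omega
    | succ t ih =>
      intro htn _ jt hjt hmem
      rcases Nat.eq_zero_or_pos t with rfl | ht1
      · refine ⟨1, le_refl 1, ?_⟩
        have hz : c 0 ∈ P.cellS i := by rw [hc0]; exact hu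
        have hedge := P.edge hi hjt hz hmem (hcd 0 (by omega))
        simpa using hedge
      · obtain ⟨jt', hjt', hmem'⟩ := P.exists_cellS (c t)
        obtain ⟨k, hk1, hks⟩ := ih (by omega) ht1 jt' hjt' hmem'
        refine ⟨k+1, by omega, ?_⟩
        have hedge := P.edge hjt' hjt hmem' hmem (hcd t (by omega))
        calc P.cellS jt ⊆ ⇑P.M '' P.cellS jt' := hedge
          _ ⊆ ⇑P.M '' ((⇑P.M)^[k] '' P.cellS i) := Set.image_mono hks
          _ = (⇑P.M)^[k+1] '' P.cellS i := by rw [Function.iterate_succ', Set.image_comp]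
  have hcv : c nc ∈ P.cellS j := by rw [hcn]; exact hv
  exact main nc (le_refl _) hn0 j hj hcv

lemma univ_cover (hreach : ∀ δ : ℝ, 0 < δ → ∀ u v : unitI, Reach (⇑P.f) δ u v) :
    ∃ js K, js < P.n ∧ 1 ≤ K ∧ P.cellS js ⊆ ⇑P.M '' P.cellS js ∧
      ∀ z : unitI, z ∈ (⇑P.M)^[K] '' P.cellS js := by
  obtain ⟨js, hjs, hst⟩ := P.star
  have hch : ∀ j : ℕ, ∃ k, 1 ≤ k ∧ (j < P.n → P.cellS j ⊆ (⇑P.M)^[k] '' P.cellS js) := by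
    intro j
    by_cases hj : j < P.n
    · obtain ⟨k, h1, h2⟩ := P.path hreach hjs hj
      exact ⟨k, h1, fun _ => h2⟩
    · exact ⟨1, le_refl _, fun h => absurd h hj⟩
  choose kf hk1 hk2 using hch
  set K := (Finset.range P.n).sup kf + 1 with hKdef
  refine ⟨js, K, hjs, by omega, hst, ?_⟩
  intro z
  obtain ⟨j, hj, hzj⟩ := P.exists_cellS z
  have hle : kf j ≤ K := by
    have := Finset.le_sup (f := kf) (Finset.mem_range.mpr hj)
    omega
  obtain ⟨d, hd⟩ := Nat.exists_eq_add_of_le hle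
  have hsub := hk2 j hj
  have := P.star_mono hst d (kf j)
  rw [← hd] at this
  exact this (hsub hzj)

lemma M_in_CP (hreach : ∀ δ : ℝ, 0 < δ → ∀ u v : unitI, Reach (⇑P.f) δ u v) :
    P.M ∈ CP := by
  obtain ⟨js, K, hjs, hK1, hst, hKall⟩ := P.univ_cover hreach
  constructor
  · -- surjective
    intro y
    obtain ⟨w, _, hwy⟩ := hKall y
    refine ⟨(⇑P.M)^[K-1] w, ?_⟩
    have : ⇑P.M ((⇑P.M)^[K-1] w) = (⇑P.M)^[K] w := by
      rw [← Function.iterate_succ_apply' (⇑P.M) (K-1) w, Nat.succ_eq_add_one, Nat.sub_add_cancel hK1]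
    rw [this, hwy]
  · -- dense periodic points
    rw [Metric.dense_iff]
    intro z r hr
    set Ar : ℝ := max 0 (z.1 - r/3) with hAr
    set Br : ℝ := min 1 (z.1 + r/3) with hBr
    have hz0 := z.2.1
    have hz1 := z.2.2
    have hA01 : 0 ≤ Ar ∧ Ar ≤ 1 := by
      constructor
      · exact le_max_left _ _
      · rw [hAr, max_le_iff]
        constructor <;> linarith
    have hB01 : 0 ≤ Br ∧ Br ≤ 1 := by
      constructor
      · rw [hBr, le_min_iff]
        constructor <;> linarith
      · exact min_le_left _ _
    set A : unitI := ⟨Ar, hA01⟩ with hA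
    set B : unitI := ⟨Br, hB01⟩ with hB
    have hgap0 : 0 < Br - Ar := by
      rw [hAr, hBr]
      rcases max_cases 0 (z.1 - r/3) with ⟨he, hle⟩ | ⟨he, hle⟩ <;>
        rcases min_cases 1 (z.1 + r/3) with ⟨he2, hle2⟩ | ⟨he2, hle2⟩ <;>
        rw [he, he2] <;> linarith
    obtain ⟨m, hm⟩ := exists_pow_lt_of_lt_one
      (show (0:ℝ) < (Br - Ar) * P.n / 2 from div_pos (mul_pos hgap0 P.hnR) two_pos)
      (show (2:ℝ)/3 < 1 by norm_num)
    have hgap : (2/P.n) * ((2:ℝ)/3)^m ≤ B.1 - A.1 := by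
      show (2/P.n) * ((2:ℝ)/3)^m ≤ Br - Ar
      rw [show (2:ℝ)/(P.n:ℝ) * ((2:ℝ)/3)^m = ((2:ℝ)/3)^m * 2 / P.n from by ring,
        div_le_iff₀ P.hnR]
      calc ((2:ℝ)/3)^m * 2 ≤ ((Br - Ar) * P.n / 2) * 2 := by nlinarith [hm]
        _ = (Br - Ar) * P.n := by ring
    obtain ⟨k1, j, hj, hgrow⟩ := P.grow m A B hgap
    obtain ⟨k2, hk21, hpathsub⟩ := P.path hreach hj hjs
    set N := K + k2 + k1 with hN
    have hbig : Set.Icc A B ⊆ (⇑P.M)^[N] '' Set.Icc A B := by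
      intro y _
      obtain ⟨w, hw, hwy⟩ := hKall y
      have h2 : P.cellS js ⊆ (⇑P.M)^[k2 + k1] '' Set.Icc A B := by
        calc P.cellS js ⊆ (⇑P.M)^[k2] '' P.cellS j := hpathsub
          _ ⊆ (⇑P.M)^[k2] '' ((⇑P.M)^[k1] '' Set.Icc A B) := Set.image_mono hgrow
          _ = (⇑P.M)^[k2+k1] '' Set.Icc A B := by
              rw [Function.iterate_add, Set.image_comp]
      obtain ⟨ξ, hξ, hξw⟩ := h2 hw
      refine ⟨ξ, hξ, ?_⟩
      rw [← hwy, ← hξw, ← Function.iterate_add_apply]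
      congr 1
      omega
    have hABle : A ≤ B := by rw [unitI_coe_le_coe]; show Ar ≤ Br; linarith
    obtain ⟨s, hs, hsA⟩ := hbig ⟨le_refl A, hABle⟩
    obtain ⟨t, ht, htB⟩ := hbig ⟨hABle, le_refl B⟩
    set Φ : unitI → ℝ := fun x => (((⇑P.M)^[N]) x).1 - x.1 with hΦ
    have hΦcont : Continuous Φ :=
      (continuous_subtype_val.comp ((map_continuous P.M).iterate N)).sub continuous_subtype_val
    have hΦs : Φ s ≤ 0 := by
      show (((⇑P.M)^[N]) s).1 - s.1 ≤ 0
      rw [hsA]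
      have : A ≤ s := hs.1
      rw [unitI_coe_le_coe] at this
      linarith
    have hΦt : 0 ≤ Φ t := by
      show 0 ≤ (((⇑P.M)^[N]) t).1 - t.1
      rw [htB]
      have : t ≤ B := ht.2
      rw [unitI_coe_le_coe] at this
      linarith
    have h0mem : (0:ℝ) ∈ Set.uIcc (Φ s) (Φ t) := by
      rw [Set.mem_uIcc]
      left
      exact ⟨hΦs, hΦt⟩
    obtain ⟨y, hyu, hy0⟩ :=
      intermediate_value_uIcc (f := Φ) (a := s) (b := t) hΦcont.continuousOn h0mem
    have hyI : y ∈ Set.Icc A B := by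
      have hsub2 : Set.uIcc s t ⊆ Set.Icc A B := by
        rw [Set.uIcc]
        exact Set.Icc_subset_Icc (le_inf hs.1 ht.1) (sup_le hs.2 ht.2)
      exact hsub2 hyu
    have hyfix : (⇑P.M)^[N] y = y := by
      apply unitI_ext
      have : (((⇑P.M)^[N]) y).1 - y.1 = 0 := hy0
      linarith
    refine ⟨y, ?_, ⟨N, by omega, hyfix⟩⟩
    rw [Metric.mem_ball, unitI_dist]
    have hy1 := hyI.1
    have hy2 := hyI.2
    rw [unitI_coe_le_coe] at hy1 hy2
    have hb1 : z.1 - r/3 ≤ Ar := le_max_right _ _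
    have hb2 : Br ≤ z.1 + r/3 := min_le_right _ _
    rw [abs_lt]
    constructor <;> [skip; skip] <;> [linarith; linarith]

end PLData

end CRAux

end AUX10
noncomputable section FINAL

namespace CRAux

lemma mk_ctx_mono (f g : C(unitI, unitI)) (ψ : unitI → unitI)
    (hfsurj : Function.Surjective ⇑f)
    (hgdense : Dense (Function.periodicPts ⇑g))
    (hψc : Continuous ψ) (hm : Monotone ψ)
    (hsemi : ψ ∘ ⇑f = ⇑g ∘ ψ)
    (hfib : ∀ p ∈ Function.periodicPts ⇑g, ∃! x : unitI, ψ x = p) :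
    ∃ C : Ctx, C.f = ⇑f :=
  ⟨⟨⇑f, ⇑g, ψ, f.continuous, hfsurj, hψc, hm, hgdense,
    fun x => congrFun hsemi x, hfib⟩, rfl⟩

lemma mk_ctx_anti (f g : C(unitI, unitI)) (ψ : unitI → unitI)
    (hfsurj : Function.Surjective ⇑f)
    (hgdense : Dense (Function.periodicPts ⇑g))
    (hψc : Continuous ψ) (ha : Antitone ψ)
    (hsemi : ψ ∘ ⇑f = ⇑g ∘ ψ)
    (hfib : ∀ p ∈ Function.periodicPts ⇑g, ∃! x : unitI, ψ x = p) :
    ∃ C : Ctx, C.f = ⇑f := by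
  refine ⟨⟨⇑f, flip ∘ ⇑g ∘ flip, flip ∘ ψ, f.continuous, hfsurj,
    flip_continuous.comp hψc,
    fun x y hxy => flip_le (ha hxy),
    Dense.mono (fun t ht => ?_) (flip_dense hgdense),
    fun x => ?_, fun p hp => ?_⟩, rfl⟩
  · obtain ⟨q, hq, rfl⟩ := ht
    exact flip_periodicPts hq
  · show flip (ψ (f x)) = (flip ∘ ⇑g ∘ flip) ((flip ∘ ψ) x)
    simp only [Function.comp_apply, flip_flip]
    rw [show ψ (f x) = g (ψ x) from congrFun hsemi x]
  · have hp' : flip p ∈ Function.periodicPts ⇑g := unflip_periodicPts hp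
    obtain ⟨x₀, hx₀, huniq⟩ := hfib (flip p) hp'
    refine ⟨x₀, ?_, ?_⟩
    · show flip (ψ x₀) = p
      rw [hx₀, flip_flip]
    · intro y hy
      apply huniq
      have h2 := congrArg flip hy
      show ψ y = flip p
      rw [← h2]
      show ψ y = flip (flip (ψ y))
      rw [flip_flip]

end CRAux

open CRAux CRAux.Ctx CRAux.PLData in
/-- If `f ∈ C(I)`, `g ∈ CP`, and `ψ : I → I` is a continuous monotone (not necessarily
strictly) surjection with `ψ ∘ f = g ∘ ψ` such that the `ψ`-preimage of every periodic
point of `g` is a singleton, then `f` is chain-recurrent; in particular `f ∈ cl(CP)`. -/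
theorem chainRecurrent_of_semiconj (f g : C(unitI, unitI)) (ψ : unitI → unitI)
    (hfsurj : Function.Surjective ⇑f)
    (hg : g ∈ CP)
    (hψc : Continuous ψ)
    (hψmono : Monotone ψ ∨ Antitone ψ)
    (hψsurj : Function.Surjective ψ)
    (hsemi : ψ ∘ ⇑f = ⇑g ∘ ψ)
    (hfib : ∀ p ∈ Function.periodicPts ⇑g, ∃! x : unitI, ψ x = p) :
    (∀ x : unitI, ChainRecurrentPt ⇑f x) ∧ f ∈ closure CP := by
  have hC : ∃ C : CRAux.Ctx, C.f = ⇑f := by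
    rcases hψmono with hm | ha
    · exact CRAux.mk_ctx_mono f g ψ hfsurj hg.2 hψc hm hsemi hfib
    · exact CRAux.mk_ctx_anti f g ψ hfsurj hg.2 hψc ha hsemi hfib
  obtain ⟨C, hCf⟩ := hC
  constructor
  · intro x ε hε
    have h2 := C.reach_all hε x x
    rw [hCf] at h2
    exact h2
  · rw [Metric.mem_closure_iff]
    intro ε hε
    set lam : ℝ := min (ε/8) (1/8) with hlamdef
    have hlam0 : 0 < lam := lt_min (by linarith) (by norm_num)
    have hlam8 : lam ≤ 1/8 := min_le_right _ _
    have hlamε : lam ≤ ε/8 := min_le_left _ _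
    obtain ⟨δ₀, hδ₀, hδf⟩ := CRAux.unif f.continuous (show (0:ℝ) < lam/10 by linarith)
    obtain ⟨n, hn⟩ := exists_nat_gt (max (1/δ₀) (20/lam))
    have hn1 : (1:ℝ)/δ₀ < n := lt_of_le_of_lt (le_max_left _ _) hn
    have hn2 : (20:ℝ)/lam < n := lt_of_le_of_lt (le_max_right _ _) hn
    have hn0R : (0:ℝ) < n := lt_trans (by positivity) hn1
    have hn0 : 0 < n := by exact_mod_cast hn0R
    have hs1 : (1:ℝ)/n < δ₀ := by
      rw [div_lt_iff₀ hn0R]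
      rw [div_lt_iff₀ hδ₀] at hn1
      nlinarith
    have hs2 : (1:ℝ)/n ≤ lam/20 := by
      rw [div_le_div_iff₀ hn0R (by norm_num : (0:ℝ) < 20)]
      rw [div_lt_iff₀ hlam0] at hn2
      nlinarith
    have hmod : ∀ x y : unitI, dist x y ≤ (1:ℝ)/n → dist (f x) (f y) ≤ lam/10 := by
      intro x y hxy
      have := hδf x y (lt_of_le_of_lt hxy hs1)
      linarith
    set P : CRAux.PLData := ⟨f, lam, n, hlam0, hlam8, hn0, hs2, hmod⟩ with hPdef
    have hreach : ∀ δ : ℝ, 0 < δ → ∀ u v : unitI, CRAux.Reach (⇑P.f) δ u v := by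
      intro δ hδ u v
      have h2 := C.reach_all hδ u v
      rwa [hCf] at h2
    refine ⟨P.M, P.M_in_CP hreach, ?_⟩
    have hclose : dist f P.M ≤ 3 * lam := by
      rw [ContinuousMap.dist_le (by positivity)]
      intro x
      rw [dist_comm]
      exact P.close x
    calc dist f P.M ≤ 3 * lam := hclose
      _ < ε := by linarith

end FINAL
end
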